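/- arXiv:1902.02226 — 4 statements merged into one kernel-verified Lean document; each statement's English description precedes it below -/
import Mathlib

section
/- Let X=(X_1,…,X_d) be a random vector in S=[0,∞)^d, I⊆{1,…,d} nonempty, and assume the tail-balance condition: there is a function b, regularly varying at infinity with index α>0, with lim_{t→∞} b(t)·P(X_i>t)=c_i∈(0,∞) for every i∈I. If for every i∈I the conditional law of X/t given {X_i>t} converges weakly as t→∞ to the law of a random vector Y_i=(Y_{i,1},…,Y_{i,d}) on S, then Y_{i,i}≥1 almost surely and, for every i∈I, the conditional law of X/X_i given {X_i>t} converges weakly as t→∞ to the law of Θ_i := Y_i/Y_{i,i}. -/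
open MeasureTheory ProbabilityTheory Filter Topology

/-- `b` is regularly varying at infinity with index `ρ`. -/
def RegularlyVarying (b : ℝ → ℝ) (ρ : ℝ) : Prop :=
  (∀ᶠ t in atTop, 0 < b t) ∧
    ∀ l : ℝ, 0 < l → Tendsto (fun t => b (l * t) / b t) atTop (𝓝 (l ^ ρ))

/-- Integrals with respect to a conditional measure only depend on values on the set. -/
lemma integral_cond_congr {Ω : Type*} [MeasurableSpace Ω] (μ : Measure Ω)
    {s : Set Ω} (hs : MeasurableSet s) {g₁ g₂ : Ω → ℝ} (h : ∀ ω ∈ s, g₁ ω = g₂ ω) :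
    ∫ ω, g₁ ω ∂(μ[|s]) = ∫ ω, g₂ ω ∂(μ[|s]) := by
  simp only [ProbabilityTheory.cond, integral_smul_measure]
  congr 1
  exact setIntegral_congr_fun hs h

/-- Theorem `thm:one2multi`, (c) ⟹ (a): under tail balance, if `X/t` given
`X_i > t` converges weakly to `Y_i`, then `Y_{i,i} ≥ 1` a.s. and `X/X_i` given `X_i > t`
converges weakly to `Θ_i := Y_i / Y_{i,i}`. -/
theorem Yi_to_one_component
    {d : ℕ} {Ω : Type*} [MeasurableSpace Ω] (μ : Measure Ω) [IsProbabilityMeasure μ]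
    (X : Ω → Fin d → ℝ) (hXmeas : Measurable X) (hXnn : ∀ ω i, 0 ≤ X ω i)
    (I : Finset (Fin d)) (hI : I.Nonempty)
    (b : ℝ → ℝ) (α : ℝ) (hα : 0 < α) (hb : RegularlyVarying b α)
    (c : Fin d → ℝ) (hc : ∀ i ∈ I, 0 < c i)
    (htail : ∀ i ∈ I,
      Tendsto (fun t => b t * (μ {ω | t < X ω i}).toReal) atTop (𝓝 (c i)))
    {Ω' : Type*} [MeasurableSpace Ω'] (μ' : Measure Ω') [IsProbabilityMeasure μ']
    (Y : Fin d → Ω' → Fin d → ℝ) (hYmeas : ∀ i, Measurable (Y i))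
    (hYnn : ∀ i ω' j, 0 ≤ Y i ω' j)
    (hconvY : ∀ i ∈ I, ∀ f : BoundedContinuousFunction (Fin d → ℝ) ℝ,
      Tendsto (fun t => ∫ ω, f (fun j => X ω j / t) ∂(μ[|{ω | t < X ω i}])) atTop
        (𝓝 (∫ ω', f (Y i ω') ∂μ'))) :
    ∀ i ∈ I,
      (∀ᵐ ω' ∂μ', 1 ≤ Y i ω' i) ∧
      (∀ f : BoundedContinuousFunction (Fin d → ℝ) ℝ,
        Tendsto (fun t => ∫ ω, f (fun j => X ω j / X ω i) ∂(μ[|{ω | t < X ω i}])) atTop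
          (𝓝 (∫ ω', f (fun j => Y i ω' j / Y i ω' i) ∂μ'))) := by
  intro i hi
  have hsmeas : ∀ t : ℝ, MeasurableSet {ω | t < X ω i} :=
    fun t => measurableSet_lt measurable_const ((measurable_pi_apply i).comp hXmeas)
  -- the test function g(y) = max 0 (min (1 - y i) 1), vanishing iff y i ≥ 1
  set gc : C(Fin d → ℝ, ℝ) :=
    ⟨fun y => max 0 (min (1 - y i) 1), by fun_prop⟩ with hgc
  have hg01 : ∀ y : Fin d → ℝ, gc y ∈ Set.Icc (0 : ℝ) 1 := by
    intro y
    constructor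
    · exact le_max_left _ _
    · exact max_le zero_le_one (min_le_right _ _)
  set g : BoundedContinuousFunction (Fin d → ℝ) ℝ :=
    BoundedContinuousFunction.mkOfBound gc 1 (by
      intro x y
      rw [Real.dist_eq]
      have hx := hg01 x
      have hy := hg01 y
      rw [abs_le]
      constructor <;> linarith [hx.1, hx.2, hy.1, hy.2])
    with hgdef
  -- step 1 : 1 ≤ Y i ω' i almost surely
  have hzero : ∀ᶠ t : ℝ in atTop,
      (∫ ω, g (fun j => X ω j / t) ∂(μ[|{ω | t < X ω i}])) = 0 := by
    filter_upwards [eventually_gt_atTop (0 : ℝ)] with t ht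
    rw [integral_cond_congr μ (hsmeas t) (g₂ := fun _ => 0), integral_zero]
    intro ω hω
    have h1 : (1 : ℝ) < X ω i / t := (one_lt_div ht).2 hω
    have hcoe : g (fun j => X ω j / t) = max 0 (min (1 - X ω i / t) 1) := rfl
    rw [hcoe]
    have : min (1 - X ω i / t) 1 ≤ 0 := le_trans (min_le_left _ _) (by linarith)
    exact max_eq_left this
  have hlim0 : (∫ ω', g (Y i ω') ∂μ') = 0 := by
    have h1 := hconvY i hi g
    have h2 : Tendsto (fun t => ∫ ω, g (fun j => X ω j / t) ∂(μ[|{ω | t < X ω i}]))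
        atTop (𝓝 0) := Tendsto.congr' (hzero.mono fun t ht => ht.symm) tendsto_const_nhds
    exact tendsto_nhds_unique h1 h2
  have hgY_meas : AEStronglyMeasurable (fun ω' => g (Y i ω')) μ' :=
    (g.continuous.measurable.comp (hYmeas i)).aestronglyMeasurable
  have hgY_int : Integrable (fun ω' => g (Y i ω')) μ' := by
    refine (integrable_const (1 : ℝ)).mono' hgY_meas ?_
    refine Filter.Eventually.of_forall fun ω' => ?_
    have hmem : g (Y i ω') ∈ Set.Icc (0:ℝ) 1 := hg01 (Y i ω')
    rw [Real.norm_eq_abs, abs_of_nonneg hmem.1]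
    exact hmem.2
  have hgY_nonneg : 0 ≤ᵐ[μ'] fun ω' => g (Y i ω') :=
    Filter.Eventually.of_forall fun ω' => (hg01 (Y i ω')).1
  have hae0 : (fun ω' => g (Y i ω')) =ᵐ[μ'] 0 :=
    (integral_eq_zero_iff_of_nonneg_ae hgY_nonneg hgY_int).1 hlim0
  have haeY : ∀ᵐ ω' ∂μ', 1 ≤ Y i ω' i := by
    filter_upwards [hae0] with ω' hω'
    by_contra hlt
    push_neg at hlt
    have hpos : 0 < min (1 - Y i ω' i) 1 := lt_min (by linarith) one_pos
    have : g (Y i ω') = max 0 (min (1 - Y i ω' i) 1) := rfl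
    rw [this, max_eq_right hpos.le] at hω'
    simp only [Pi.zero_apply] at hω'
    linarith
  refine ⟨haeY, fun f => ?_⟩
  -- step 2 : weak convergence of X / X_i
  -- the continuous normalization map h̃ y = y / max (y i) 1
  have hmaxpos : ∀ y : Fin d → ℝ, (0 : ℝ) < max (y i) 1 :=
    fun y => lt_of_lt_of_le one_pos (le_max_right _ _)
  set hc2 : C(Fin d → ℝ, Fin d → ℝ) :=
    ⟨fun y => fun j => y j / max (y i) 1, by
      refine continuous_pi fun j => (continuous_apply j).div ?_ fun y => (hmaxpos y).ne'
      exact (continuous_apply i).max continuous_const⟩ with hhc2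
  have key := hconvY i hi (f.compContinuous hc2)
  have hFY : (∫ ω', (f.compContinuous hc2) (Y i ω') ∂μ')
      = ∫ ω', f (fun j => Y i ω' j / Y i ω' i) ∂μ' := by
    refine integral_congr_ae ?_
    filter_upwards [haeY] with ω' hω'
    have : max (Y i ω' i) 1 = Y i ω' i := max_eq_left hω'
    simp only [BoundedContinuousFunction.compContinuous_apply, hhc2, ContinuousMap.coe_mk, this]
  rw [hFY] at key
  refine Tendsto.congr' ?_ key
  filter_upwards [eventually_gt_atTop (0 : ℝ)] with t ht
  refine integral_cond_congr μ (hsmeas t) fun ω hω => ?_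
  have hXit : t < X ω i := hω
  have hXipos : 0 < X ω i := lt_trans ht hXit
  have h1 : (1 : ℝ) < X ω i / t := (one_lt_div ht).2 hXit
  have hmax : max (X ω i / t) 1 = X ω i / t := max_eq_left h1.le
  simp only [BoundedContinuousFunction.compContinuous_apply, hhc2, ContinuousMap.coe_mk, hmax]
  congr 1
  funext j
  rw [div_div_div_cancel_right₀]
  exact ht.ne'
end

section
/- Let X=(X_1,…,X_d) be a random vector in S=[0,∞)^d, I⊆{1,…,d} nonempty, and assume the tail-balance condition: there is a function b, regularly varying at infinity with index α>0, with lim_{t→∞} b(t)·P(X_i>t)=c_i∈(0,∞) for every i∈I. Assume that for every i∈I the conditional law of X/X_i given {X_i>t} converges weakly as t→∞ to the law of a random vector Θ_i on S (with Θ_{i,i}=1 a.s.), and let ν be a tail measure of X. Then for every i∈I: ν({x∈S_{0,I} : x_i=0}) = 0 if E[Θ_{i,j}^α]=c_j/c_i for all j∈I, and ν({x∈S_{0,I} : x_i=0}) = ∞ otherwise. -/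
open MeasureTheory ProbabilityTheory Filter Topology Set
open scoped ENNReal

/-- `ν` is a tail measure of `X` (relative to the component set `I` and the scaling
function `b`): a Borel measure concentrated on `S_{0,I} = {x : max_{i∈I} x_i > 0}`, finite
on `{x : max_{i∈I} x_i ≥ ε}` for every `ε > 0`, such that `b(t)·E[f(X/t)] → ∫ f dν` for
every bounded continuous `f` vanishing on `{x : max_{i∈I} x_i ≤ ε}` for some `ε > 0`. -/
def IsTailMeasure {d : ℕ} {Ω : Type*} [MeasurableSpace Ω] (μ : Measure Ω)
    (X : Ω → Fin d → ℝ) (I : Finset (Fin d)) (b : ℝ → ℝ)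
    (ν : Measure (Fin d → ℝ)) : Prop :=
  (∀ ε > (0:ℝ), ν {x | ∃ i ∈ I, ε ≤ x i} < ⊤) ∧
  ν {x | ¬ ∃ i ∈ I, 0 < x i} = 0 ∧
  ∀ f : BoundedContinuousFunction (Fin d → ℝ) ℝ,
    (∃ ε > (0:ℝ), ∀ x : Fin d → ℝ, (∀ i ∈ I, x i ≤ ε) → f x = 0) →
    Tendsto (fun t => b t * ∫ ω, f (fun j => X ω j / t) ∂μ) atTop (𝓝 (∫ x, f x ∂ν))


noncomputable def tmClamp (a b u : ℝ) : ℝ := max 0 (min 1 ((u - a)/(b - a)))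

lemma tmClamp_nonneg (a b u : ℝ) : 0 ≤ tmClamp a b u := le_max_left _ _

lemma tmClamp_le_one (a b u : ℝ) : tmClamp a b u ≤ 1 :=
  max_le zero_le_one (min_le_left _ _)

lemma tmClamp_continuous (a b : ℝ) : Continuous (tmClamp a b) :=
  continuous_const.max (continuous_const.min ((continuous_id.sub continuous_const).div_const _))

lemma tmClamp_eq_zero {a b u : ℝ} (hab : a < b) (h : u ≤ a) : tmClamp a b u = 0 := by
  have : (u - a)/(b - a) ≤ 0 := div_nonpos_of_nonpos_of_nonneg (by linarith) (by linarith)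
  simp only [tmClamp, max_eq_left_iff]
  exact le_trans (min_le_right _ _) this

lemma tmClamp_eq_one {a b u : ℝ} (hab : a < b) (h : b ≤ u) : tmClamp a b u = 1 := by
  have hba : 0 < b - a := by linarith
  have : (1:ℝ) ≤ (u - a)/(b - a) := (le_div_iff₀ hba).2 (by linarith)
  simp only [tmClamp]
  rw [min_eq_left this, max_eq_right zero_le_one]

lemma tmClamp_pos_imp {a b u : ℝ} (hab : a < b) (h : tmClamp a b u ≠ 0) : a < u := by
  by_contra hua
  exact h (tmClamp_eq_zero hab (not_lt.1 hua))

/-- Build a bounded continuous function from a continuous one with range in `[0,1]`. -/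
noncomputable def tmBCF {α : Type*} [TopologicalSpace α] (f : α → ℝ) (hf : Continuous f)
    (h0 : ∀ x, 0 ≤ f x) (h1 : ∀ x, f x ≤ 1) : BoundedContinuousFunction α ℝ :=
  BoundedContinuousFunction.mkOfBound ⟨f, hf⟩ 1 (fun x y => by
    rw [Real.dist_eq, abs_sub_le_iff]
    constructor <;> [have := h0 y; have := h0 x] <;> [have := h1 x; have := h1 y] <;>
      simp only [ContinuousMap.coe_mk] <;> linarith)

@[simp] lemma tmBCF_apply {α : Type*} [TopologicalSpace α] (f : α → ℝ) (hf h0 h1) (x : α) :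
    tmBCF f hf h0 h1 x = f x := rfl

/-- A bounded (continuous) function composed with a measurable map is integrable wrt a
finite measure. -/
lemma tmIntegrable_comp {α β : Type*} [MeasurableSpace α] [TopologicalSpace β]
    [MeasurableSpace β] [BorelSpace β] (μ : Measure α) [IsFiniteMeasure μ]
    (f : BoundedContinuousFunction β ℝ) {Y : α → β} (hY : Measurable Y) :
    Integrable (fun ω => f (Y ω)) μ := by
  refine Integrable.mono' (integrable_const ‖f‖) ?_ ?_
  · exact (f.continuous.measurable.comp hY).aestronglyMeasurable
  · exact Eventually.of_forall fun ω => f.norm_coe_le_norm (Y ω)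


section L
variable {d : ℕ} {Ω : Type*} [MeasurableSpace Ω] {μ : Measure Ω} [IsProbabilityMeasure μ]
  {X : Ω → Fin d → ℝ} {I : Finset (Fin d)} {b : ℝ → ℝ} {α : ℝ}
  {ν : Measure (Fin d → ℝ)}
  {Ω' : Type*} [MeasurableSpace Ω'] {μ' : Measure Ω'} [IsProbabilityMeasure μ']
  {Θ : Fin d → Ω' → Fin d → ℝ}


lemma tm_tendsto_scaled (hb : RegularlyVarying b α) {g : Ω → ℝ} {cg : ℝ}
    (hg : Tendsto (fun t => b t * (μ {ω | t < g ω}).toReal) atTop (𝓝 cg))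
    {v : ℝ} (hv : 0 < v) :
    Tendsto (fun t => b t * (μ {ω | v * t < g ω}).toReal) atTop (𝓝 (cg * v ^ (-α))) := by
  have hvt : Tendsto (fun t : ℝ => v * t) atTop atTop :=
    Tendsto.const_mul_atTop hv tendsto_id
  have h1 : Tendsto (fun t => b (v * t) * (μ {ω | v * t < g ω}).toReal) atTop (𝓝 cg) :=
    hg.comp hvt
  have h2 : Tendsto (fun t => b t / b (v * t)) atTop (𝓝 (v ^ (-α))) := by
    have := (hb.2 v hv).inv₀ (ne_of_gt (Real.rpow_pos_of_pos hv α))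
    rw [← Real.rpow_neg hv.le] at this
    refine this.congr (fun t => ?_)
    rw [inv_div]
  have h3 := h2.mul h1
  rw [show v ^ (-α) * cg = cg * v ^ (-α) by ring] at h3
  have hev : ∀ᶠ t in atTop, 0 < b (v * t) := hvt.eventually hb.1
  refine Tendsto.congr' ?_ h3
  filter_upwards [hev] with t hbt
  field_simp

/-- Eventually the conditioning event has positive probability. -/
lemma tm_eventually_pos (hb : RegularlyVarying b α) {g : Ω → ℝ} {cg : ℝ} (hcg : 0 < cg)
    (hg : Tendsto (fun t => b t * (μ {ω | t < g ω}).toReal) atTop (𝓝 cg))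
    {v : ℝ} (hv : 0 < v) :
    ∀ᶠ t in atTop, μ {ω | v * t < g ω} ≠ 0 := by
  have h := tm_tendsto_scaled hb hg hv
  have hpos : 0 < cg * v ^ (-α) := mul_pos hcg (Real.rpow_pos_of_pos hv _)
  filter_upwards [h.eventually (eventually_gt_nhds (by linarith : cg * v ^ (-α) / 2 < cg * v ^ (-α)))]
    with t ht
  intro h0
  rw [h0] at ht
  simp only [ENNReal.toReal_zero, mul_zero] at ht
  linarith


lemma tm_setIntegral_cond {A : Set Ω} (hA : μ A ≠ 0) (F : Ω → ℝ) :
    ∫ ω in A, F ω ∂μ = (μ A).toReal * ∫ ω, F ω ∂(μ[|A]) := by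
  rw [ProbabilityTheory.cond, integral_smul_measure, ENNReal.toReal_inv, smul_eq_mul, ← mul_assoc,
    mul_inv_cancel₀ (ENNReal.toReal_ne_zero.2 ⟨hA, measure_ne_top μ A⟩), one_mul]

/-- Limit of `b t · ∫_{X_i > vt} ψ(X/X_i)`. -/

lemma tm_cond_limit (hb : RegularlyVarying b α) (i : Fin d) {ci : ℝ} (hci : 0 < ci)
    (htaili : Tendsto (fun t => b t * (μ {ω | t < X ω i}).toReal) atTop (𝓝 ci))
    (ψ : Ω → ℝ) {Lψ : ℝ}
    (hψ : Tendsto (fun t => ∫ ω, ψ ω ∂(μ[|{ω | t < X ω i}])) atTop (𝓝 Lψ))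
    {v : ℝ} (hv : 0 < v) :
    Tendsto (fun t => b t * ∫ ω in {ω | v * t < X ω i}, ψ ω ∂μ) atTop
      (𝓝 (ci * v ^ (-α) * Lψ)) := by
  have hvt : Tendsto (fun t : ℝ => v * t) atTop atTop :=
    Tendsto.const_mul_atTop hv tendsto_id
  have h1 : Tendsto (fun t => ∫ ω, ψ ω ∂(μ[|{ω | v * t < X ω i}])) atTop (𝓝 Lψ) :=
    hψ.comp hvt
  have h2 := tm_tendsto_scaled hb htaili hv
  have h3 := h2.mul h1
  refine Tendsto.congr' ?_ h3
  filter_upwards [tm_eventually_pos hb hci htaili hv] with t ht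
  rw [tm_setIntegral_cond ht]
  ring


lemma tm_adm_integrable (hν : IsTailMeasure μ X I b ν)
    (f : BoundedContinuousFunction (Fin d → ℝ) ℝ) {ε : ℝ} (hε : 0 < ε)
    (hvan : ∀ x : Fin d → ℝ, (∀ i ∈ I, x i ≤ ε) → f x = 0) : Integrable f ν := by
  set V : Set (Fin d → ℝ) := {x | ∃ j ∈ I, ε ≤ x j} with hV
  have hVmeas : MeasurableSet V := by
    have : V = ⋃ j ∈ I, {x : Fin d → ℝ | ε ≤ x j} := by
      ext x; simp [hV]
    rw [this]
    exact MeasurableSet.biUnion I.countable_toSet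
      (fun j _ => measurableSet_le measurable_const (measurable_pi_apply j))
  have hfV : ⇑f = V.indicator ⇑f := by
    funext x
    by_cases hx : x ∈ V
    · rw [indicator_of_mem hx]
    · rw [indicator_of_notMem hx, hvan x]
      intro i hi
      by_contra hle
      exact hx ⟨i, hi, (not_le.1 hle).le⟩
  haveI : IsFiniteMeasure (ν.restrict V) :=
    ⟨by rw [Measure.restrict_apply_univ]; exact hν.1 ε hε⟩
  rw [hfV]
  exact (integrable_indicator_iff hVmeas).2 (f.integrable (ν.restrict V))

lemma tm_nu_le (hν : IsTailMeasure μ X I b ν) {S : Set (Fin d → ℝ)} (hS : MeasurableSet S)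
    (f : BoundedContinuousFunction (Fin d → ℝ) ℝ) {ε : ℝ} (hε : 0 < ε)
    (hvan : ∀ x : Fin d → ℝ, (∀ i ∈ I, x i ≤ ε) → f x = 0)
    (h0 : ∀ x, 0 ≤ f x) (hfS : ∀ x ∈ S, 1 ≤ f x)
    {gb : ℝ → ℝ} {L : ℝ} (hgb : Tendsto gb atTop (𝓝 L))
    (hcomp : ∀ᶠ t in atTop, b t * ∫ ω, f (fun j => X ω j / t) ∂μ ≤ gb t) :
    ν S ≤ ENNReal.ofReal L := by
  have hint : Integrable f ν := tm_adm_integrable hν f hε hvan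
  have hfL : ∫ x, f x ∂ν ≤ L :=
    le_of_tendsto_of_tendsto (hν.2.2 f ⟨ε, hε, hvan⟩) hgb hcomp
  calc ν S = ∫⁻ x in S, 1 ∂ν := (setLIntegral_one S).symm
    _ ≤ ∫⁻ x in S, ENNReal.ofReal (f x) ∂ν := by
        refine setLIntegral_mono (f.continuous.measurable.ennreal_ofReal) (fun x hx => ?_)
        simpa using ENNReal.one_le_ofReal.2 (hfS x hx)
    _ ≤ ∫⁻ x, ENNReal.ofReal (f x) ∂ν := setLIntegral_le_lintegral _ _
    _ = ENNReal.ofReal (∫ x, f x ∂ν) :=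
        (ofReal_integral_eq_lintegral_ofReal hint (Eventually.of_forall h0)).symm
    _ ≤ ENNReal.ofReal L := ENNReal.ofReal_le_ofReal hfL

lemma tm_le_nu (hν : IsTailMeasure μ X I b ν) {S : Set (Fin d → ℝ)} (hS : MeasurableSet S)
    (f : BoundedContinuousFunction (Fin d → ℝ) ℝ) {ε : ℝ} (hε : 0 < ε)
    (hvan : ∀ x : Fin d → ℝ, (∀ i ∈ I, x i ≤ ε) → f x = 0)
    (h0 : ∀ x, 0 ≤ f x) (h1 : ∀ x, f x ≤ 1) (hsupp : ∀ x, f x ≠ 0 → x ∈ S)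
    {gb : ℝ → ℝ} {L : ℝ} (hgb : Tendsto gb atTop (𝓝 L))
    (hcomp : ∀ᶠ t in atTop, gb t ≤ b t * ∫ ω, f (fun j => X ω j / t) ∂μ) :
    ENNReal.ofReal L ≤ ν S := by
  have hint : Integrable f ν := tm_adm_integrable hν f hε hvan
  have hfL : L ≤ ∫ x, f x ∂ν :=
    le_of_tendsto_of_tendsto hgb (hν.2.2 f ⟨ε, hε, hvan⟩) hcomp
  calc ENNReal.ofReal L ≤ ENNReal.ofReal (∫ x, f x ∂ν) := ENNReal.ofReal_le_ofReal hfL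
    _ = ∫⁻ x, ENNReal.ofReal (f x) ∂ν :=
        ofReal_integral_eq_lintegral_ofReal hint (Eventually.of_forall h0)
    _ = ∫⁻ x, S.indicator (fun x => ENNReal.ofReal (f x)) x ∂ν := by
        refine lintegral_congr (fun x => ?_)
        by_cases hx : x ∈ S
        · rw [indicator_of_mem hx]
        · rw [indicator_of_notMem hx]
          have : f x = 0 := by by_contra h; exact hx (hsupp x h)
          simp [this]
    _ = ∫⁻ x in S, ENNReal.ofReal (f x) ∂ν :=
        lintegral_indicator hS _
    _ ≤ ∫⁻ x in S, 1 ∂ν := setLIntegral_mono measurable_const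
        (fun x _ => ENNReal.ofReal_le_one.2 (h1 x))
    _ = ν S := setLIntegral_one S


/-- The one-dimensional marginal values of the tail measure. -/
lemma tm_P1 (hν : IsTailMeasure μ X I b ν) (hb : RegularlyVarying b α)
    (hXmeas : Measurable X) {j : Fin d} (hj : j ∈ I) {cj : ℝ}
    (htailj : Tendsto (fun t => b t * (μ {ω | t < X ω j}).toReal) atTop (𝓝 cj))
    {s : ℝ} (hs : 0 < s) :
    ν {x | s < x j} = ENNReal.ofReal (cj * s ^ (-α)) ∧
      ν {x | s ≤ x j} = ENNReal.ofReal (cj * s ^ (-α)) := by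
  have hXt : ∀ t : ℝ, Measurable (fun ω => fun j' => X ω j' / t) := fun t =>
    measurable_pi_lambda _ (fun j' => ((measurable_pi_apply j').comp hXmeas).div_const t)
  have hmlt : MeasurableSet {x : Fin d → ℝ | s < x j} :=
    measurableSet_lt measurable_const (measurable_pi_apply j)
  have hmle : MeasurableSet {x : Fin d → ℝ | s ≤ x j} :=
    measurableSet_le measurable_const (measurable_pi_apply j)
  -- upper bound for closed set, for every 0 < s' < s
  have hup : ∀ s' : ℝ, 0 < s' → s' < s →
      ν {x | s ≤ x j} ≤ ENNReal.ofReal (cj * s' ^ (-α)) := by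
    intro s' hs'0 hs's
    set f := tmBCF (fun x : Fin d → ℝ => tmClamp s' s (x j))
      ((tmClamp_continuous s' s).comp (continuous_apply j))
      (fun x => tmClamp_nonneg _ _ _) (fun x => tmClamp_le_one _ _ _) with hf
    refine tm_nu_le hν hmle f hs'0 (fun x hx => tmClamp_eq_zero hs's (hx j hj)) ?_ ?_
      (tm_tendsto_scaled hb htailj hs'0) ?_
    · exact fun x => tmClamp_nonneg _ _ _
    · exact fun x hx => (tmClamp_eq_one hs's hx).ge
    · filter_upwards [eventually_gt_atTop (0:ℝ), hb.1] with t ht hbt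
      have key : ∫ ω, f (fun j' => X ω j' / t) ∂μ ≤ (μ {ω | s' * t < X ω j}).toReal := by
        have hA : MeasurableSet {ω | s' * t < X ω j} :=
          measurableSet_lt measurable_const ((measurable_pi_apply j).comp hXmeas)
        calc ∫ ω, f (fun j' => X ω j' / t) ∂μ
            ≤ ∫ ω, ({ω | s' * t < X ω j}).indicator (fun _ => (1:ℝ)) ω ∂μ := by
              refine integral_mono (tmIntegrable_comp μ f (hXt t))
                ((integrable_const (1:ℝ)).indicator hA) (fun ω => ?_)
              by_cases hω : ω ∈ {ω | s' * t < X ω j}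
              · rw [indicator_of_mem hω]; exact tmClamp_le_one _ _ _
              · rw [indicator_of_notMem hω]
                by_contra hlt
                have hne : tmClamp s' s (X ω j / t) ≠ 0 := by
                  intro h; rw [hf] at hlt; simp only [tmBCF_apply, h] at hlt; exact hlt le_rfl
                have := tmClamp_pos_imp hs's hne
                exact hω (by simpa [Set.mem_setOf_eq] using (lt_div_iff₀ ht).1 this)
          _ = (μ {ω | s' * t < X ω j}).toReal := by
              rw [integral_indicator_const (1:ℝ) hA]; simp; rfl
      exact mul_le_mul_of_nonneg_left key hbt.le
  -- upper bound for the closed set at s itself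
  have hupc : ν {x | s ≤ x j} ≤ ENNReal.ofReal (cj * s ^ (-α)) := by
    obtain ⟨u, hmono, hmem, hlim⟩ := exists_seq_strictMono_tendsto' (half_lt_self hs)
    have h1 : Tendsto (fun n => ENNReal.ofReal (cj * u n ^ (-α))) atTop
        (𝓝 (ENNReal.ofReal (cj * s ^ (-α)))) := by
      refine (ENNReal.tendsto_ofReal ?_)
      refine Tendsto.const_mul cj ?_
      exact (Real.continuousAt_rpow_const s (-α) (Or.inl hs.ne')).tendsto.comp hlim
    exact ge_of_tendsto' h1 (fun n => hup (u n) (lt_trans (half_pos hs) (hmem n).1) (hmem n).2)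
  -- lower bound for the open set, for every s'' > s
  have hlo : ∀ s'' : ℝ, s < s'' →
      ENNReal.ofReal (cj * s'' ^ (-α)) ≤ ν {x | s < x j} := by
    intro s'' hss
    set f := tmBCF (fun x : Fin d → ℝ => tmClamp s s'' (x j))
      ((tmClamp_continuous s s'').comp (continuous_apply j))
      (fun x => tmClamp_nonneg _ _ _) (fun x => tmClamp_le_one _ _ _) with hf
    refine tm_le_nu hν hmlt f hs (fun x hx => tmClamp_eq_zero hss (hx j hj))
      (fun x => tmClamp_nonneg _ _ _) (fun x => tmClamp_le_one _ _ _) ?_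
      (tm_tendsto_scaled hb htailj (lt_trans hs hss)) ?_
    · intro x hx
      exact tmClamp_pos_imp hss hx
    · filter_upwards [eventually_gt_atTop (0:ℝ), hb.1] with t ht hbt
      have key : (μ {ω | s'' * t < X ω j}).toReal ≤ ∫ ω, f (fun j' => X ω j' / t) ∂μ := by
        have hA : MeasurableSet {ω | s'' * t < X ω j} :=
          measurableSet_lt measurable_const ((measurable_pi_apply j).comp hXmeas)
        calc (μ {ω | s'' * t < X ω j}).toReal
            = ∫ ω, ({ω | s'' * t < X ω j}).indicator (fun _ => (1:ℝ)) ω ∂μ := by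
              rw [integral_indicator_const (1:ℝ) hA]; simp; rfl
          _ ≤ ∫ ω, f (fun j' => X ω j' / t) ∂μ := by
              refine integral_mono ((integrable_const (1:ℝ)).indicator hA)
                (tmIntegrable_comp μ f (hXt t)) (fun ω => ?_)
              by_cases hω : ω ∈ {ω | s'' * t < X ω j}
              · rw [indicator_of_mem hω]
                rw [hf]; simp only [tmBCF_apply]
                exact (tmClamp_eq_one hss ((le_div_iff₀ ht).2 (by
                  have := hω; simp only [Set.mem_setOf_eq] at this; linarith))).ge
              · rw [indicator_of_notMem hω]
                exact tmClamp_nonneg _ _ _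
      exact mul_le_mul_of_nonneg_left key hbt.le
  -- lower bound for the open set at s itself
  have hloc : ENNReal.ofReal (cj * s ^ (-α)) ≤ ν {x | s < x j} := by
    obtain ⟨u, hmono, hmem, hlim⟩ := exists_seq_strictAnti_tendsto' (lt_add_one s)
    have h1 : Tendsto (fun n => ENNReal.ofReal (cj * u n ^ (-α))) atTop
        (𝓝 (ENNReal.ofReal (cj * s ^ (-α)))) := by
      refine (ENNReal.tendsto_ofReal ?_)
      refine Tendsto.const_mul cj ?_
      exact (Real.continuousAt_rpow_const s (-α) (Or.inl hs.ne')).tendsto.comp hlim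
    exact le_of_tendsto' h1 (fun n => hlo (u n) (hmem n).1)
  have hsub : ν {x | s < x j} ≤ ν {x | s ≤ x j} :=
    measure_mono (fun x hx => le_of_lt (Set.mem_setOf_eq ▸ hx))
  constructor
  · exact le_antisymm (le_trans hsub hupc) hloc
  · exact le_antisymm hupc (le_trans hloc hsub)

/-- No tail-measure mass where some coordinate is negative. -/
lemma tm_P2 (hν : IsTailMeasure μ X I b ν) (hXmeas : Measurable X)
    (hXnn : ∀ ω i, 0 ≤ X ω i) {k : Fin d} (hk : k ∈ I) (i : Fin d) {s : ℝ} (hs : 0 < s) :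
    ν {x | s < x k ∧ x i < 0} = 0 := by
  have hXt : ∀ t : ℝ, Measurable (fun ω => fun j' => X ω j' / t) := fun t =>
    measurable_pi_lambda _ (fun j' => ((measurable_pi_apply j').comp hXmeas).div_const t)
  have hcover : {x : Fin d → ℝ | s < x k ∧ x i < 0} ⊆
      ⋃ n : ℕ, {x : Fin d → ℝ | s < x k ∧ x i ≤ -(1/(n+1))} := by
    intro x hx
    obtain ⟨n, hn⟩ := exists_nat_one_div_lt (show (0:ℝ) < -(x i) by linarith [hx.2])
    exact Set.mem_iUnion.2 ⟨n, hx.1, by push_cast at hn ⊢; linarith⟩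
  refine measure_mono_null hcover (measure_iUnion_null (fun n => ?_))
  set e : ℝ := 1/(n+1) with he
  have he0 : 0 < e := by rw [he]; positivity
  have hmeas : MeasurableSet {x : Fin d → ℝ | s < x k ∧ x i ≤ -e} :=
    (measurableSet_lt measurable_const (measurable_pi_apply k)).inter
      (measurableSet_le (measurable_pi_apply i) measurable_const)
  set f := tmBCF (fun x : Fin d → ℝ => tmClamp (s/2) s (x k) * tmClamp 0 e (-(x i)))
    (((tmClamp_continuous _ _).comp (continuous_apply k)).mul
      ((tmClamp_continuous _ _).comp (continuous_apply i).neg))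
    (fun x => mul_nonneg (tmClamp_nonneg _ _ _) (tmClamp_nonneg _ _ _))
    (fun x => mul_le_one₀ (tmClamp_le_one _ _ _) (tmClamp_nonneg _ _ _)
      (tmClamp_le_one _ _ _)) with hfdef
  have h0 := tm_nu_le (μ := μ) hν hmeas f (half_pos hs)
    (fun x hx => by
      simp only [tmBCF_apply, hfdef]
      rw [tmClamp_eq_zero (half_lt_self hs) (hx k hk), zero_mul])
    (fun x => mul_nonneg (tmClamp_nonneg _ _ _) (tmClamp_nonneg _ _ _))
    (fun x hx => by
      simp only [tmBCF_apply, hfdef]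
      rw [tmClamp_eq_one (half_lt_self hs) hx.1.le, tmClamp_eq_one he0 (by linarith [hx.2]),
        mul_one])
    (tendsto_const_nhds (x := (0:ℝ)))
    (by
      filter_upwards [eventually_gt_atTop (0:ℝ)] with t ht
      have : ∀ ω, f (fun j => X ω j / t) = 0 := by
        intro ω
        simp only [tmBCF_apply, hfdef]
        rw [tmClamp_eq_zero he0 (by
          have := hXnn ω i
          have : 0 ≤ X ω i / t := div_nonneg this ht.le
          linarith), mul_zero]
      simp only [this, integral_zero, mul_zero, le_refl])
  simpa using h0


/-- Upper bound for sector sets via the spectral limit. -/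
lemma tm_P3_upper (hν : IsTailMeasure μ X I b ν) (hb : RegularlyVarying b α)
    (hXmeas : Measurable X) {i : Fin d} (hi : i ∈ I) {ci : ℝ} (hci : 0 < ci)
    (htaili : Tendsto (fun t => b t * (μ {ω | t < X ω i}).toReal) atTop (𝓝 ci))
    (hconvi : ∀ f : BoundedContinuousFunction (Fin d → ℝ) ℝ,
      Tendsto (fun t => ∫ ω, f (fun j => X ω j / X ω i) ∂(μ[|{ω | t < X ω i}])) atTop
        (𝓝 (∫ ω', f (Θ i ω') ∂μ')))
    (hΘmeasi : Measurable (Θ i))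
    (k : Fin d) {y' y r' r : ℝ} (hy' : 0 ≤ y') (hy'y : y' < y) (hr' : 0 < r') (hr'r : r' < r) :
    ν {x | r < x i ∧ y * x i < x k} ≤
      ENNReal.ofReal (ci * r' ^ (-α) * (μ' {ω' | y' < Θ i ω' k}).toReal) := by
  have hmeasS : MeasurableSet {x : Fin d → ℝ | r < x i ∧ y * x i < x k} :=
    (measurableSet_lt measurable_const (measurable_pi_apply i)).inter
      (measurableSet_lt (measurable_const.mul (measurable_pi_apply i)) (measurable_pi_apply k))
  have hW : Measurable (fun ω => fun j => X ω j / X ω i) :=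
    measurable_pi_lambda _ (fun j => ((measurable_pi_apply j).comp hXmeas).div
      ((measurable_pi_apply i).comp hXmeas))
  have hden : ∀ x : Fin d → ℝ, max (x i) (r'/2) ≠ 0 :=
    fun x => ne_of_gt (lt_of_lt_of_le (by linarith) (le_max_right _ _))
  set ψ' := tmBCF (fun w : Fin d → ℝ => tmClamp y' y (w k))
    ((tmClamp_continuous _ _).comp (continuous_apply k))
    (fun w => tmClamp_nonneg _ _ _) (fun w => tmClamp_le_one _ _ _) with hψ'def
  set F := tmBCF
    (fun x : Fin d → ℝ => tmClamp r' r (x i) * tmClamp y' y (x k / max (x i) (r'/2)))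
    (((tmClamp_continuous _ _).comp (continuous_apply i)).mul
      ((tmClamp_continuous _ _).comp ((continuous_apply k).div
        ((continuous_apply i).max continuous_const) hden)))
    (fun x => mul_nonneg (tmClamp_nonneg _ _ _) (tmClamp_nonneg _ _ _))
    (fun x => mul_le_one₀ (tmClamp_le_one _ _ _) (tmClamp_nonneg _ _ _)
      (tmClamp_le_one _ _ _)) with hFdef
  have hL : Tendsto (fun t => b t * ∫ ω in {ω | r' * t < X ω i},
      ψ' (fun j => X ω j / X ω i) ∂μ) atTop
      (𝓝 (ci * r' ^ (-α) * ∫ ω', ψ' (Θ i ω') ∂μ')) :=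
    tm_cond_limit hb i hci htaili _ (hconvi ψ') hr'
  have step1 : ν {x | r < x i ∧ y * x i < x k} ≤
      ENNReal.ofReal (ci * r' ^ (-α) * ∫ ω', ψ' (Θ i ω') ∂μ') := by
    refine tm_nu_le hν hmeasS F hr' ?_ ?_ ?_ hL ?_
    · intro x hx
      simp only [tmBCF_apply, hFdef]
      rw [tmClamp_eq_zero hr'r (hx i hi), zero_mul]
    · exact fun x => mul_nonneg (tmClamp_nonneg _ _ _) (tmClamp_nonneg _ _ _)
    · intro x hx
      obtain ⟨hx1, hx2⟩ := hx
      have hxi : (0:ℝ) < x i := lt_trans (lt_trans hr' hr'r) hx1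
      simp only [tmBCF_apply, hFdef]
      rw [tmClamp_eq_one hr'r hx1.le, one_mul,
        max_eq_left (by linarith : r'/2 ≤ x i),
        tmClamp_eq_one hy'y ((le_div_iff₀ hxi).2 (by linarith))]
    · filter_upwards [eventually_gt_atTop (0:ℝ), hb.1] with t ht hbt
      have hA : MeasurableSet {ω | r' * t < X ω i} :=
        measurableSet_lt measurable_const ((measurable_pi_apply i).comp hXmeas)
      have key : ∫ ω, F (fun j => X ω j / t) ∂μ ≤
          ∫ ω in {ω | r' * t < X ω i}, ψ' (fun j => X ω j / X ω i) ∂μ := by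
        rw [← integral_indicator hA]
        refine integral_mono (tmIntegrable_comp μ F (measurable_pi_lambda _
            (fun j' => ((measurable_pi_apply j').comp hXmeas).div_const t)))
          ((tmIntegrable_comp μ ψ' hW).indicator hA) (fun ω => ?_)
        by_cases hω : ω ∈ {ω | r' * t < X ω i}
        · have hXi : r' < X ω i / t := (lt_div_iff₀ ht).2 (by simpa [mul_comm] using hω)
          have hXi0 : (0:ℝ) < X ω i := lt_trans (mul_pos hr' ht) hω
          rw [indicator_of_mem hω]
          simp only [tmBCF_apply, hFdef, hψ'def]
          have hmax : max (X ω i / t) (r'/2) = X ω i / t :=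
            max_eq_left (by linarith)
          have hratio : (X ω k / t) / (X ω i / t) = X ω k / X ω i := by
            field_simp
          rw [hmax, hratio]
          exact mul_le_of_le_one_left (tmClamp_nonneg _ _ _) (tmClamp_le_one _ _ _)
        · rw [indicator_of_notMem hω]
          simp only [tmBCF_apply, hFdef]
          have : X ω i / t ≤ r' := by
            rw [div_le_iff₀ ht]
            simpa [Set.mem_setOf_eq, not_lt, mul_comm] using hω
          rw [tmClamp_eq_zero hr'r this, zero_mul]
      exact mul_le_mul_of_nonneg_left key hbt.le
  refine le_trans step1 (ENNReal.ofReal_le_ofReal ?_)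
  refine mul_le_mul_of_nonneg_left ?_
    (mul_nonneg hci.le (Real.rpow_nonneg hr'.le _))
  have hA' : MeasurableSet {ω' | y' < Θ i ω' k} :=
    measurableSet_lt measurable_const ((measurable_pi_apply k).comp hΘmeasi)
  calc ∫ ω', ψ' (Θ i ω') ∂μ'
      ≤ ∫ ω', ({ω' | y' < Θ i ω' k}).indicator (fun _ => (1:ℝ)) ω' ∂μ' := by
        refine integral_mono (tmIntegrable_comp μ' ψ' hΘmeasi)
          ((integrable_const (1:ℝ)).indicator hA') (fun ω' => ?_)
        by_cases hω' : ω' ∈ {ω' | y' < Θ i ω' k}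
        · rw [indicator_of_mem hω']; exact tmClamp_le_one _ _ _
        · rw [indicator_of_notMem hω']
          simp only [tmBCF_apply, hψ'def]
          rw [tmClamp_eq_zero hy'y (by simpa [Set.mem_setOf_eq, not_lt] using hω')]
    _ = (μ' {ω' | y' < Θ i ω' k}).toReal := by
        rw [integral_indicator_const (1:ℝ) hA']; simp; rfl


/-- Lower bound for sector sets via the spectral limit. -/
lemma tm_P3_lower (hν : IsTailMeasure μ X I b ν) (hb : RegularlyVarying b α)
    (hXmeas : Measurable X) {i : Fin d} (hi : i ∈ I) {ci : ℝ} (hci : 0 < ci)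
    (htaili : Tendsto (fun t => b t * (μ {ω | t < X ω i}).toReal) atTop (𝓝 ci))
    (hconvi : ∀ f : BoundedContinuousFunction (Fin d → ℝ) ℝ,
      Tendsto (fun t => ∫ ω, f (fun j => X ω j / X ω i) ∂(μ[|{ω | t < X ω i}])) atTop
        (𝓝 (∫ ω', f (Θ i ω') ∂μ')))
    (hΘmeasi : Measurable (Θ i))
    (k : Fin d) {y y2 r r2 : ℝ} (hy : 0 ≤ y) (hyy2 : y < y2) (hr : 0 < r) (hrr2 : r < r2) :
    ENNReal.ofReal (ci * r2 ^ (-α) * (μ' {ω' | y2 ≤ Θ i ω' k}).toReal) ≤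
      ν {x | r < x i ∧ y * x i < x k} := by
  have hmeasS : MeasurableSet {x : Fin d → ℝ | r < x i ∧ y * x i < x k} :=
    (measurableSet_lt measurable_const (measurable_pi_apply i)).inter
      (measurableSet_lt (measurable_const.mul (measurable_pi_apply i)) (measurable_pi_apply k))
  have hW : Measurable (fun ω => fun j => X ω j / X ω i) :=
    measurable_pi_lambda _ (fun j => ((measurable_pi_apply j).comp hXmeas).div
      ((measurable_pi_apply i).comp hXmeas))
  have hden : ∀ x : Fin d → ℝ, max (x i) (r/2) ≠ 0 :=
    fun x => ne_of_gt (lt_of_lt_of_le (by linarith) (le_max_right _ _))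
  set ψ' := tmBCF (fun w : Fin d → ℝ => tmClamp y y2 (w k))
    ((tmClamp_continuous _ _).comp (continuous_apply k))
    (fun w => tmClamp_nonneg _ _ _) (fun w => tmClamp_le_one _ _ _) with hψ'def
  set F := tmBCF
    (fun x : Fin d → ℝ => tmClamp r r2 (x i) * tmClamp y y2 (x k / max (x i) (r/2)))
    (((tmClamp_continuous _ _).comp (continuous_apply i)).mul
      ((tmClamp_continuous _ _).comp ((continuous_apply k).div
        ((continuous_apply i).max continuous_const) hden)))
    (fun x => mul_nonneg (tmClamp_nonneg _ _ _) (tmClamp_nonneg _ _ _))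
    (fun x => mul_le_one₀ (tmClamp_le_one _ _ _) (tmClamp_nonneg _ _ _)
      (tmClamp_le_one _ _ _)) with hFdef
  have hL : Tendsto (fun t => b t * ∫ ω in {ω | r2 * t < X ω i},
      ψ' (fun j => X ω j / X ω i) ∂μ) atTop
      (𝓝 (ci * r2 ^ (-α) * ∫ ω', ψ' (Θ i ω') ∂μ')) :=
    tm_cond_limit hb i hci htaili _ (hconvi ψ') (lt_trans hr hrr2)
  have step1 : ENNReal.ofReal (ci * r2 ^ (-α) * ∫ ω', ψ' (Θ i ω') ∂μ') ≤
      ν {x | r < x i ∧ y * x i < x k} := by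
    refine tm_le_nu hν hmeasS F hr ?_ ?_ ?_ ?_ hL ?_
    · intro x hx
      simp only [tmBCF_apply, hFdef]
      rw [tmClamp_eq_zero hrr2 (hx i hi), zero_mul]
    · exact fun x => mul_nonneg (tmClamp_nonneg _ _ _) (tmClamp_nonneg _ _ _)
    · exact fun x => mul_le_one₀ (tmClamp_le_one _ _ _) (tmClamp_nonneg _ _ _)
        (tmClamp_le_one _ _ _)
    · intro x hx
      simp only [tmBCF_apply, hFdef] at hx
      have h1 : tmClamp r r2 (x i) ≠ 0 := fun h => hx (by rw [h, zero_mul])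
      have h2 : tmClamp y y2 (x k / max (x i) (r/2)) ≠ 0 := fun h => hx (by rw [h, mul_zero])
      have hxi : r < x i := tmClamp_pos_imp hrr2 h1
      have hxi0 : (0:ℝ) < x i := lt_trans hr hxi
      have hmax : max (x i) (r/2) = x i := max_eq_left (by linarith)
      rw [hmax] at h2
      have := tmClamp_pos_imp hyy2 h2
      exact ⟨hxi, by rwa [← lt_div_iff₀ hxi0]⟩
    · filter_upwards [eventually_gt_atTop (0:ℝ), hb.1] with t ht hbt
      have hA : MeasurableSet {ω | r2 * t < X ω i} :=
        measurableSet_lt measurable_const ((measurable_pi_apply i).comp hXmeas)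
      have key : ∫ ω in {ω | r2 * t < X ω i}, ψ' (fun j => X ω j / X ω i) ∂μ ≤
          ∫ ω, F (fun j => X ω j / t) ∂μ := by
        rw [← integral_indicator hA]
        refine integral_mono ((tmIntegrable_comp μ ψ' hW).indicator hA)
          (tmIntegrable_comp μ F (measurable_pi_lambda _
            (fun j' => ((measurable_pi_apply j').comp hXmeas).div_const t))) (fun ω => ?_)
        by_cases hω : ω ∈ {ω | r2 * t < X ω i}
        · have hXi : r2 < X ω i / t := (lt_div_iff₀ ht).2 (by simpa [mul_comm] using hω)
          have hXi0 : (0:ℝ) < X ω i := lt_trans (mul_pos (lt_trans hr hrr2) ht) hω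
          rw [indicator_of_mem hω]
          simp only [tmBCF_apply, hFdef, hψ'def]
          have hmax : max (X ω i / t) (r/2) = X ω i / t :=
            max_eq_left (by linarith)
          have hratio : (X ω k / t) / (X ω i / t) = X ω k / X ω i := by
            field_simp
          rw [hmax, hratio, tmClamp_eq_one hrr2 hXi.le, one_mul]
        · rw [indicator_of_notMem hω]
          simp only [tmBCF_apply, hFdef]
          exact mul_nonneg (tmClamp_nonneg _ _ _) (tmClamp_nonneg _ _ _)
      exact mul_le_mul_of_nonneg_left key hbt.le
  refine le_trans (ENNReal.ofReal_le_ofReal ?_) step1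
  refine mul_le_mul_of_nonneg_left ?_
    (mul_nonneg hci.le (Real.rpow_nonneg (lt_trans hr hrr2).le _))
  have hA' : MeasurableSet {ω' | y2 ≤ Θ i ω' k} :=
    measurableSet_le measurable_const ((measurable_pi_apply k).comp hΘmeasi)
  calc (μ' {ω' | y2 ≤ Θ i ω' k}).toReal
      = ∫ ω', ({ω' | y2 ≤ Θ i ω' k}).indicator (fun _ => (1:ℝ)) ω' ∂μ' := by
        rw [integral_indicator_const (1:ℝ) hA']; simp; rfl
    _ ≤ ∫ ω', ψ' (Θ i ω') ∂μ' := by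
        refine integral_mono ((integrable_const (1:ℝ)).indicator hA')
          (tmIntegrable_comp μ' ψ' hΘmeasi) (fun ω' => ?_)
        by_cases hω' : ω' ∈ {ω' | y2 ≤ Θ i ω' k}
        · rw [indicator_of_mem hω']
          simp only [tmBCF_apply, hψ'def]
          exact (tmClamp_eq_one hyy2 hω').ge
        · rw [indicator_of_notMem hω']
          simp only [tmBCF_apply, hψ'def]
          exact tmClamp_nonneg _ _ _


/-- Exact sector value at non-atom levels. -/
lemma tm_N_eq (hν : IsTailMeasure μ X I b ν) (hb : RegularlyVarying b α)
    (hXmeas : Measurable X) {i : Fin d} (hi : i ∈ I) {ci : ℝ} (hci : 0 < ci)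
    (htaili : Tendsto (fun t => b t * (μ {ω | t < X ω i}).toReal) atTop (𝓝 ci))
    (hconvi : ∀ f : BoundedContinuousFunction (Fin d → ℝ) ℝ,
      Tendsto (fun t => ∫ ω, f (fun j => X ω j / X ω i) ∂(μ[|{ω | t < X ω i}])) atTop
        (𝓝 (∫ ω', f (Θ i ω') ∂μ')))
    (hΘmeasi : Measurable (Θ i))
    (k : Fin d) {y r : ℝ} (hy : 0 < y) (hr : 0 < r)
    (hatom : μ' {ω' | Θ i ω' k = y} = 0) :
    ν {x | r < x i ∧ y * x i < x k} =
      ENNReal.ofReal (ci * r ^ (-α)) * μ' {ω' | y < Θ i ω' k} := by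
  have hΘk : Measurable (fun ω' => Θ i ω' k) := (measurable_pi_apply k).comp hΘmeasi
  have hyc : μ' {ω' | y ≤ Θ i ω' k} = μ' {ω' | y < Θ i ω' k} := by
    refine le_antisymm ?_ (measure_mono (fun ω' h => show y ≤ Θ i ω' k from le_of_lt h))
    calc μ' {ω' | y ≤ Θ i ω' k} ≤ μ' ({ω' | y < Θ i ω' k} ∪ {ω' | Θ i ω' k = y}) := by
          refine measure_mono (fun ω' h => ?_)
          rcases eq_or_lt_of_le (show y ≤ Θ i ω' k from h) with h' | h'
          · exact Or.inr h'.symm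
          · exact Or.inl h'
      _ ≤ μ' {ω' | y < Θ i ω' k} + μ' {ω' | Θ i ω' k = y} := measure_union_le _ _
      _ = μ' {ω' | y < Θ i ω' k} := by rw [hatom, add_zero]
  have hrpowcont : ContinuousAt (fun z : ℝ => z ^ (-α)) r :=
    Real.continuousAt_rpow_const r (-α) (Or.inl hr.ne')
  refine le_antisymm ?_ ?_
  · -- upper bound
    obtain ⟨u, hu_mono, hu_mem, hu_lim⟩ := exists_seq_strictMono_tendsto' hy
    obtain ⟨v, hv_mono, hv_mem, hv_lim⟩ := exists_seq_strictMono_tendsto' (half_lt_self hr)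
    have hsets : Tendsto (fun n => μ' {ω' | u n < Θ i ω' k}) atTop
        (𝓝 (μ' {ω' | y < Θ i ω' k})) := by
      rw [← hyc]
      have hInter : ⋂ n, {ω' | u n < Θ i ω' k} = {ω' | y ≤ Θ i ω' k} := by
        ext ω'
        simp only [Set.mem_iInter, Set.mem_setOf_eq]
        exact ⟨fun h => le_of_tendsto' hu_lim (fun n => (h n).le),
          fun h n => lt_of_lt_of_le (hu_mem n).2 h⟩
      have := tendsto_measure_iInter_atTop (μ := μ')
        (s := fun n => {ω' | u n < Θ i ω' k})
        (fun n => (measurableSet_lt measurable_const hΘk).nullMeasurableSet)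
        (fun n m hnm ω' h => lt_of_le_of_lt (hu_mono.monotone hnm) h)
        ⟨0, measure_ne_top _ _⟩
      rwa [hInter] at this
    have hRHS : Tendsto
        (fun n => ENNReal.ofReal (ci * v n ^ (-α) * (μ' {ω' | u n < Θ i ω' k}).toReal))
        atTop (𝓝 (ENNReal.ofReal (ci * r ^ (-α) * (μ' {ω' | y < Θ i ω' k}).toReal))) := by
      refine ENNReal.tendsto_ofReal ?_
      refine Tendsto.mul (Tendsto.const_mul ci (hrpowcont.tendsto.comp hv_lim)) ?_
      exact (ENNReal.tendsto_toReal (measure_ne_top _ _)).comp hsets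
    have hgoal : ENNReal.ofReal (ci * r ^ (-α)) * μ' {ω' | y < Θ i ω' k}
        = ENNReal.ofReal (ci * r ^ (-α) * (μ' {ω' | y < Θ i ω' k}).toReal) := by
      rw [ENNReal.ofReal_mul (mul_nonneg hci.le (Real.rpow_nonneg hr.le _)),
        ENNReal.ofReal_toReal (measure_ne_top _ _)]
    rw [hgoal]
    refine ge_of_tendsto' hRHS (fun n => ?_)
    exact tm_P3_upper hν hb hXmeas hi hci htaili hconvi hΘmeasi k
      (hu_mem n).1.le (hu_mem n).2 ((half_pos hr).trans (hv_mem n).1) (hv_mem n).2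
  · -- lower bound
    obtain ⟨u, hu_anti, hu_mem, hu_lim⟩ := exists_seq_strictAnti_tendsto' (lt_add_one y)
    obtain ⟨v, hv_anti, hv_mem, hv_lim⟩ := exists_seq_strictAnti_tendsto' (lt_add_one r)
    have hsets : Tendsto (fun n => μ' {ω' | u n ≤ Θ i ω' k}) atTop
        (𝓝 (μ' {ω' | y < Θ i ω' k})) := by
      have hUnion : ⋃ n, {ω' | u n ≤ Θ i ω' k} = {ω' | y < Θ i ω' k} := by
        ext ω'
        simp only [Set.mem_iUnion, Set.mem_setOf_eq]
        constructor
        · rintro ⟨n, hn⟩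
          exact lt_of_lt_of_le (hu_mem n).1 hn
        · intro h
          obtain ⟨n, hn⟩ := (hu_lim.eventually_lt_const h).exists
          exact ⟨n, hn.le⟩
      have := tendsto_measure_iUnion_atTop (μ := μ')
        (s := fun n => {ω' | u n ≤ Θ i ω' k})
        (fun n m hnm ω' h => le_trans (hu_anti.antitone hnm) h)
      rwa [hUnion] at this
    have hRHS : Tendsto
        (fun n => ENNReal.ofReal (ci * v n ^ (-α) * (μ' {ω' | u n ≤ Θ i ω' k}).toReal))
        atTop (𝓝 (ENNReal.ofReal (ci * r ^ (-α) * (μ' {ω' | y < Θ i ω' k}).toReal))) := by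
      refine ENNReal.tendsto_ofReal ?_
      refine Tendsto.mul (Tendsto.const_mul ci (hrpowcont.tendsto.comp hv_lim)) ?_
      exact (ENNReal.tendsto_toReal (measure_ne_top _ _)).comp hsets
    have hfin := le_of_tendsto' hRHS (fun n =>
      tm_P3_lower hν hb hXmeas hi hci htaili hconvi hΘmeasi k hy.le (hu_mem n).1 hr
        (hv_mem n).1)
    calc ENNReal.ofReal (ci * r ^ (-α)) * μ' {ω' | y < Θ i ω' k}
        = ENNReal.ofReal (ci * r ^ (-α) * (μ' {ω' | y < Θ i ω' k}).toReal) := by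
          rw [ENNReal.ofReal_mul (mul_nonneg hci.le (Real.rpow_nonneg hr.le _)),
            ENNReal.ofReal_toReal (measure_ne_top _ _)]
      _ ≤ ν {x | r < x i ∧ y * x i < x k} := hfin


/-- Squeeze over `ρ → 1`. -/
lemma tm_rho_squeeze {α : ℝ} (hα : 0 < α) (V K M : ℝ≥0∞) (hK0 : K ≠ 0) (hKtop : K ≠ ⊤)
    (h : ∀ ρ : ℝ, 1 < ρ →
      K * ENNReal.ofReal (ρ ^ (-α)) * M ≤ V ∧ V ≤ K * ENNReal.ofReal (ρ ^ α) * M) :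
    V = K * M := by
  by_cases hM : M = ⊤
  · have h2 := (h 2 one_lt_two).1
    rw [hM] at h2 ⊢
    rw [ENNReal.mul_top hK0]
    have hne : K * ENNReal.ofReal (2 ^ (-α)) ≠ 0 := by
      refine mul_ne_zero hK0 ?_
      simp only [ne_eq, ENNReal.ofReal_eq_zero, not_le]
      positivity
    rw [ENNReal.mul_top hne] at h2
    exact top_le_iff.1 h2
  · have hseq : Tendsto (fun n : ℕ => (1 + 1/(n+1) : ℝ)) atTop (𝓝 1) := by
      have : Tendsto (fun n : ℕ => 1/((n:ℝ)+1)) atTop (𝓝 0) := tendsto_one_div_add_atTop_nhds_zero_nat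
      simpa using (tendsto_const_nhds.add this)
    have hgt : ∀ n : ℕ, (1:ℝ) < 1 + 1/(n+1) := fun n => by
      have : (0:ℝ) < 1/((n:ℝ)+1) := by positivity
      linarith
    have hpow : ∀ β : ℝ, Tendsto (fun n : ℕ => ENNReal.ofReal ((1 + 1/(n+1) : ℝ) ^ β)) atTop
        (𝓝 1) := by
      intro β
      have hcont : ContinuousAt (fun z : ℝ => z ^ β) 1 :=
        Real.continuousAt_rpow_const 1 β (Or.inl one_ne_zero)
      have := (ENNReal.tendsto_ofReal (hcont.tendsto.comp hseq))
      simpa [Real.one_rpow] using this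
    have hup : Tendsto (fun n : ℕ => K * ENNReal.ofReal ((1 + 1/(n+1) : ℝ) ^ α) * M) atTop
        (𝓝 (K * M)) := by
      have h1 : Tendsto (fun n : ℕ => ENNReal.ofReal ((1 + 1/(n+1) : ℝ) ^ α) * (K * M)) atTop
          (𝓝 (1 * (K * M))) :=
        ENNReal.Tendsto.mul_const (hpow α) (Or.inl one_ne_zero)
      rw [one_mul] at h1
      refine h1.congr (fun n => ?_)
      ring
    have hlo : Tendsto (fun n : ℕ => K * ENNReal.ofReal ((1 + 1/(n+1) : ℝ) ^ (-α)) * M) atTop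
        (𝓝 (K * M)) := by
      have h1 : Tendsto (fun n : ℕ => ENNReal.ofReal ((1 + 1/(n+1) : ℝ) ^ (-α)) * (K * M)) atTop
          (𝓝 (1 * (K * M))) :=
        ENNReal.Tendsto.mul_const (hpow (-α)) (Or.inl one_ne_zero)
      rw [one_mul] at h1
      refine h1.congr (fun n => ?_)
      ring
    refine le_antisymm ?_ ?_
    · exact ge_of_tendsto' hup (fun n => (h _ (hgt n)).2)
    · exact le_of_tendsto' hlo (fun n => (h _ (hgt n)).1)

/-- The key identity for the sector `{x_k > s, x_i > 0}`. -/
lemma tm_E3 (hν : IsTailMeasure μ X I b ν) (hb : RegularlyVarying b α) (hα : 0 < α)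
    (hXmeas : Measurable X) {i : Fin d} (hi : i ∈ I) {ci : ℝ} (hci : 0 < ci)
    (htaili : Tendsto (fun t => b t * (μ {ω | t < X ω i}).toReal) atTop (𝓝 ci))
    (hconvi : ∀ f : BoundedContinuousFunction (Fin d → ℝ) ℝ,
      Tendsto (fun t => ∫ ω, f (fun j => X ω j / X ω i) ∂(μ[|{ω | t < X ω i}])) atTop
        (𝓝 (∫ ω', f (Θ i ω') ∂μ')))
    (hΘmeasi : Measurable (Θ i)) (hΘnn : ∀ ω' j, 0 ≤ Θ i ω' j)
    (k : Fin d) {s : ℝ} (hs : 0 < s) :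
    ν {x | s < x k ∧ 0 < x i} =
      ENNReal.ofReal (ci * s ^ (-α)) * ∫⁻ ω', ENNReal.ofReal ((Θ i ω' k) ^ α) ∂μ' := by
  set Θ' : Ω' → ℝ := fun ω' => Θ i ω' k with hΘ'def
  have hΘ'meas : Measurable Θ' := (measurable_pi_apply k).comp hΘmeasi
  set M := ∫⁻ ω', ENNReal.ofReal ((Θ' ω') ^ α) ∂μ' with hMdef
  have hMrestr : ∫⁻ ω' in {ω' | 0 < Θ' ω'}, ENNReal.ofReal ((Θ' ω') ^ α) ∂μ' = M := by
    rw [hMdef]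
    have heq : (fun ω' => ENNReal.ofReal ((Θ' ω') ^ α)) =
        ({ω' | 0 < Θ' ω'}).indicator (fun ω' => ENNReal.ofReal ((Θ' ω') ^ α)) := by
      funext ω'
      by_cases hω' : ω' ∈ {ω' | 0 < Θ' ω'}
      · rw [indicator_of_mem hω']
      · rw [indicator_of_notMem hω']
        have h0 : Θ' ω' = 0 := le_antisymm (not_lt.1 hω') (hΘnn ω' k)
        rw [h0, Real.zero_rpow hα.ne', ENNReal.ofReal_zero]
    conv_rhs => rw [heq]
    rw [lintegral_indicator (measurableSet_lt measurable_const hΘ'meas)]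
  set K := ENNReal.ofReal (ci * s ^ (-α)) with hKdef
  have hK0 : K ≠ 0 := by
    simp only [hKdef, ne_eq, ENNReal.ofReal_eq_zero, not_le]
    positivity
  have hKtop : K ≠ ⊤ := ENNReal.ofReal_ne_top
  refine tm_rho_squeeze hα _ K M hK0 hKtop (fun ρ hρ => ?_)
  have hρ0 : (0:ℝ) < ρ := lt_trans one_pos hρ
  -- countable atoms
  have hatoms : Set.Countable {y : ℝ | μ' {ω' | Θ' ω' = y} ≠ 0} := by
    have hcnt := MeasureTheory.Measure.countable_meas_pos_of_disjoint_of_meas_iUnion_ne_top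
      (μ := μ') (As := fun y : ℝ => {ω' | Θ' ω' = y})
      (fun y => hΘ'meas (measurableSet_singleton y))
      (fun y y' hne => Set.disjoint_left.2 (fun ω' h1 h2 => hne (by
        rw [← (h1 : Θ' ω' = y), (h2 : Θ' ω' = y')])))
      (ne_of_lt (lt_of_le_of_lt (measure_mono (Set.subset_univ _)) (by
        rw [measure_univ]; exact ENNReal.one_lt_top)))
    refine hcnt.mono (fun y hy => ?_)
    exact pos_iff_ne_zero.2 hy
  -- choose the grid offset γ avoiding atoms
  obtain ⟨γ, hγIoo, hγBad⟩ : ∃ γ ∈ Set.Ioo (1:ℝ) 2,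
      γ ∉ ⋃ m : ℤ, (fun γ : ℝ => γ * ρ ^ m) ⁻¹' {y : ℝ | μ' {ω' | Θ' ω' = y} ≠ 0} := by
    by_contra hcon
    push_neg at hcon
    have hsub : Set.Ioo (1:ℝ) 2 ⊆
        ⋃ m : ℤ, (fun γ : ℝ => γ * ρ ^ m) ⁻¹' {y : ℝ | μ' {ω' | Θ' ω' = y} ≠ 0} :=
      fun γ hγ => hcon γ hγ
    have hcnt : (Set.Ioo (1:ℝ) 2).Countable := by
      refine Set.Countable.mono hsub (Set.countable_iUnion (fun m => ?_))
      exact hatoms.preimage (mul_left_injective₀ (zpow_ne_zero m hρ0.ne'))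
    rw [← Cardinal.le_aleph0_iff_set_countable, Cardinal.mk_Ioo_real one_lt_two] at hcnt
    exact absurd hcnt (not_le.2 Cardinal.aleph0_lt_continuum)
  have hγ1 : (1:ℝ) < γ := hγIoo.1
  have hγatom : ∀ m : ℤ, μ' {ω' | Θ' ω' = γ * ρ ^ m} = 0 := by
    intro m
    by_contra hne
    exact hγBad (Set.mem_iUnion.2 ⟨m, hne⟩)
  -- the grid
  set a : ℤ → ℝ := fun m => γ * ρ ^ m with hadef
  have ha_pos : ∀ m, 0 < a m := fun m => mul_pos (lt_trans one_pos hγ1) (zpow_pos hρ0 m)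
  have ha_succ : ∀ m, a (m + 1) = ρ * a m := by
    intro m
    rw [hadef]
    simp only []
    rw [zpow_add_one₀ hρ0.ne']
    ring
  have ha_lt : ∀ m, a m < a (m + 1) := by
    intro m
    rw [ha_succ m]
    nlinarith [ha_pos m]
  have ha_mono : StrictMono a := strictMono_int_of_lt_succ ha_lt
  have hcover : ∀ w : ℝ, 0 < w → ∃ m : ℤ, a m < w ∧ w ≤ a (m + 1) := by
    intro w hw
    obtain ⟨m, hm⟩ := exists_mem_Ioc_zpow (div_pos hw (lt_trans one_pos hγ1)) hρ
    refine ⟨m, ?_, ?_⟩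
    · have := hm.1
      rw [lt_div_iff₀ (lt_trans one_pos hγ1)] at this
      rw [hadef]; simpa [mul_comm] using this
    · have := hm.2
      rw [div_le_iff₀ (lt_trans one_pos hγ1)] at this
      rw [hadef]; simpa [mul_comm] using this
  -- the slices of Ω'
  set E : ℤ → Set Ω' := fun m => {ω' | a m < Θ' ω' ∧ Θ' ω' ≤ a (m + 1)} with hEdef
  have hEmeas : ∀ m, MeasurableSet (E m) :=
    fun m => (measurableSet_lt measurable_const hΘ'meas).inter
      (measurableSet_le hΘ'meas measurable_const)
  have hEdisj : Pairwise (Function.onFun Disjoint E) := by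
    intro m m' hne
    wlog hlt : m < m' generalizing m m'
    · exact (this hne.symm (hne.lt_or_gt.resolve_left hlt)).symm
    rw [Function.onFun, Set.disjoint_left]
    intro ω' h1 h2
    have hle : a (m + 1) ≤ a m' := ha_mono.monotone (by omega)
    have := h1.2
    have := h2.1
    linarith
  have hEUnion : ⋃ m : ℤ, E m = {ω' | 0 < Θ' ω'} := by
    ext ω'
    simp only [Set.mem_iUnion, hEdef, Set.mem_setOf_eq]
    constructor
    · rintro ⟨m, hm1, _⟩
      exact lt_trans (ha_pos m) hm1
    · intro h
      exact hcover _ h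
  -- the pieces of the sector
  set piece : ℤ → Set (Fin d → ℝ) := fun m =>
    {x | s < x k ∧ 0 < x i ∧ a m * x i < x k ∧ x k ≤ a (m + 1) * x i} with hpdef
  have hpmeas : ∀ m, MeasurableSet (piece m) := by
    intro m
    refine (measurableSet_lt measurable_const (measurable_pi_apply k)).inter
      ((measurableSet_lt measurable_const (measurable_pi_apply i)).inter
        ((measurableSet_lt (measurable_const.mul (measurable_pi_apply i))
          (measurable_pi_apply k)).inter
          (measurableSet_le (measurable_pi_apply k)
            (measurable_const.mul (measurable_pi_apply i)))))
  have hpdisj : Pairwise (Function.onFun Disjoint piece) := by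
    intro m m' hne
    wlog hlt : m < m' generalizing m m'
    · exact (this hne.symm (hne.lt_or_gt.resolve_left hlt)).symm
    rw [Function.onFun, Set.disjoint_left]
    intro x h1 h2
    have hle : a (m + 1) ≤ a m' := ha_mono.monotone (by omega)
    have hxi : 0 < x i := h1.2.1
    have h1' := h1.2.2.2
    have h2' := h2.2.2.1
    nlinarith
  have hpUnion : {x : Fin d → ℝ | s < x k ∧ 0 < x i} = ⋃ m : ℤ, piece m := by
    ext x
    simp only [Set.mem_iUnion, hpdef, Set.mem_setOf_eq]
    constructor
    · rintro ⟨hk', hi'⟩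
      obtain ⟨m, hm1, hm2⟩ := hcover (x k / x i) (div_pos (lt_trans hs hk') hi')
      refine ⟨m, hk', hi', ?_, ?_⟩
      · rwa [lt_div_iff₀ hi'] at hm1
      · rwa [div_le_iff₀ hi'] at hm2
    · rintro ⟨m, h1, h2, _, _⟩
      exact ⟨h1, h2⟩
  have hsplit : ν {x : Fin d → ℝ | s < x k ∧ 0 < x i} = ∑' m : ℤ, ν (piece m) := by
    rw [hpUnion]
    exact measure_iUnion hpdisj hpmeas
  -- value of the slices
  have hslice : ∀ (m : ℤ) (r : ℝ), 0 < r →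
      ν {x | r < x i ∧ a m * x i < x k ∧ x k ≤ a (m + 1) * x i} =
        ENNReal.ofReal (ci * r ^ (-α)) * μ' (E m) := by
    intro m r hr
    have hN : ∀ m' : ℤ, ν {x | r < x i ∧ a m' * x i < x k} =
        ENNReal.ofReal (ci * r ^ (-α)) * μ' {ω' | a m' < Θ' ω'} := fun m' =>
      tm_N_eq hν hb hXmeas hi hci htaili hconvi hΘmeasi k (ha_pos m') hr (hγatom m')
    have hdecomp : {x : Fin d → ℝ | r < x i ∧ a m * x i < x k} =
        {x | r < x i ∧ a m * x i < x k ∧ x k ≤ a (m + 1) * x i} ∪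
          {x | r < x i ∧ a (m + 1) * x i < x k} := by
      ext x
      simp only [Set.mem_union, Set.mem_setOf_eq]
      constructor
      · rintro ⟨h1, h2⟩
        rcases le_or_gt (x k) (a (m + 1) * x i) with h3 | h3
        · exact Or.inl ⟨h1, h2, h3⟩
        · exact Or.inr ⟨h1, h3⟩
      · rintro (⟨h1, h2, _⟩ | ⟨h1, h2⟩)
        · exact ⟨h1, h2⟩
        · refine ⟨h1, lt_trans ?_ h2⟩
          have hxi : 0 < x i := lt_trans hr h1
          nlinarith [ha_lt m]
    have hdisj2 : Disjoint {x : Fin d → ℝ | r < x i ∧ a m * x i < x k ∧ x k ≤ a (m+1) * x i}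
        {x : Fin d → ℝ | r < x i ∧ a (m + 1) * x i < x k} := by
      rw [Set.disjoint_left]
      rintro x ⟨_, _, h3⟩ ⟨_, h4⟩
      linarith
    have hmeas2 : MeasurableSet {x : Fin d → ℝ | r < x i ∧ a (m + 1) * x i < x k} :=
      (measurableSet_lt measurable_const (measurable_pi_apply i)).inter
        (measurableSet_lt (measurable_const.mul (measurable_pi_apply i))
          (measurable_pi_apply k))
    have hsum : ν {x : Fin d → ℝ | r < x i ∧ a m * x i < x k} =
        ν {x | r < x i ∧ a m * x i < x k ∧ x k ≤ a (m + 1) * x i} +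
          ν {x | r < x i ∧ a (m + 1) * x i < x k} := by
      rw [hdecomp]
      exact measure_union hdisj2 hmeas2
    -- μ'-side decomposition
    have hμdecomp : μ' {ω' | a m < Θ' ω'} = μ' (E m) + μ' {ω' | a (m + 1) < Θ' ω'} := by
      have : {ω' | a m < Θ' ω'} = E m ∪ {ω' | a (m + 1) < Θ' ω'} := by
        ext ω'
        simp only [Set.mem_union, hEdef, Set.mem_setOf_eq]
        constructor
        · intro h
          rcases le_or_gt (Θ' ω') (a (m + 1)) with h2 | h2
          · exact Or.inl ⟨h, h2⟩
          · exact Or.inr h2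
        · rintro (⟨h, _⟩ | h)
          · exact h
          · exact lt_trans (ha_lt m) h
      rw [this]
      refine measure_union ?_ (measurableSet_lt measurable_const hΘ'meas)
      rw [Set.disjoint_left]
      rintro ω' ⟨_, h2⟩ h3
      exact absurd h3 (not_lt.2 h2)
    have hfin : ENNReal.ofReal (ci * r ^ (-α)) * μ' {ω' | a (m + 1) < Θ' ω'} ≠ ⊤ :=
      ENNReal.mul_ne_top ENNReal.ofReal_ne_top (measure_ne_top _ _)
    have heq : ν {x | r < x i ∧ a m * x i < x k ∧ x k ≤ a (m + 1) * x i} +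
        ENNReal.ofReal (ci * r ^ (-α)) * μ' {ω' | a (m + 1) < Θ' ω'} =
        ENNReal.ofReal (ci * r ^ (-α)) * μ' (E m) +
          ENNReal.ofReal (ci * r ^ (-α)) * μ' {ω' | a (m + 1) < Θ' ω'} := by
      rw [← hN (m + 1), ← hsum, hN m, hμdecomp, mul_add, hN (m + 1)]
    exact (ENNReal.add_left_inj hfin).1 heq
  -- notation
  set Oρp := ENNReal.ofReal (ρ ^ α) with hOρp
  set Oρm := ENNReal.ofReal (ρ ^ (-α)) with hOρm
  have hOne : Oρm * Oρp = 1 := by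
    rw [hOρm, hOρp, ← ENNReal.ofReal_mul (Real.rpow_nonneg hρ0.le _),
      ← Real.rpow_add hρ0, neg_add_cancel, Real.rpow_zero, ENNReal.ofReal_one]
  have hC : ∀ m : ℤ, ENNReal.ofReal (ci * (s / a m) ^ (-α)) =
      K * ENNReal.ofReal ((a m) ^ α) := by
    intro m
    rw [hKdef, ← ENNReal.ofReal_mul (by positivity : (0:ℝ) ≤ ci * s ^ (-α))]
    congr 1
    have hrw : (s / a m) ^ (-α) = s ^ (-α) * (a m) ^ α := by
      rw [Real.div_rpow hs.le (ha_pos m).le, Real.rpow_neg (ha_pos m).le, div_inv_eq_mul]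
    rw [hrw]; ring
  have hA_succ : ∀ m : ℤ, ENNReal.ofReal ((a (m + 1)) ^ α) =
      Oρp * ENNReal.ofReal ((a m) ^ α) := by
    intro m
    rw [hOρp, ← ENNReal.ofReal_mul (Real.rpow_nonneg hρ0.le _), ha_succ m,
      Real.mul_rpow hρ0.le (ha_pos m).le]
  have hΘrpow : Measurable fun ω' => ENNReal.ofReal (Θ' ω' ^ α) :=
    ((Real.continuous_rpow_const hα.le).measurable.comp hΘ'meas).ennreal_ofReal
  have hLm_lb : ∀ m : ℤ, ENNReal.ofReal ((a m) ^ α) * μ' (E m) ≤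
      ∫⁻ ω' in E m, ENNReal.ofReal (Θ' ω' ^ α) ∂μ' := by
    intro m
    rw [← setLIntegral_const (E m) (ENNReal.ofReal ((a m) ^ α))]
    refine setLIntegral_mono hΘrpow (fun ω' hω' => ?_)
    exact ENNReal.ofReal_le_ofReal
      (Real.rpow_le_rpow (ha_pos m).le (le_of_lt hω'.1) hα.le)
  have hLm_ub : ∀ m : ℤ, (∫⁻ ω' in E m, ENNReal.ofReal (Θ' ω' ^ α) ∂μ') ≤
      ENNReal.ofReal ((a (m + 1)) ^ α) * μ' (E m) := by
    intro m
    rw [← setLIntegral_const (E m) (ENNReal.ofReal ((a (m + 1)) ^ α))]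
    refine setLIntegral_mono measurable_const (fun ω' hω' => ?_)
    exact ENNReal.ofReal_le_ofReal
      (Real.rpow_le_rpow (hΘnn ω' k) hω'.2 hα.le)
  have hsumL : ∑' m : ℤ, (∫⁻ ω' in E m, ENNReal.ofReal (Θ' ω' ^ α) ∂μ') = M := by
    rw [← lintegral_iUnion hEmeas hEdisj, hEUnion, hMrestr]
  -- termwise bounds on the pieces
  have hupper_m : ∀ m : ℤ, ν (piece m) ≤
      K * ENNReal.ofReal ((a (m + 1)) ^ α) * μ' (E m) := by
    intro m
    have hr : 0 < s / a (m + 1) := div_pos hs (ha_pos (m + 1))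
    have hsub : piece m ⊆
        {x | s / a (m + 1) < x i ∧ a m * x i < x k ∧ x k ≤ a (m + 1) * x i} := by
      rintro x ⟨h1, h2, h3, h4⟩
      refine ⟨?_, h3, h4⟩
      rw [div_lt_iff₀ (ha_pos (m + 1))]
      calc s < x k := h1
        _ ≤ a (m + 1) * x i := h4
        _ = x i * a (m + 1) := mul_comm _ _
    calc ν (piece m) ≤
        ν {x | s / a (m + 1) < x i ∧ a m * x i < x k ∧ x k ≤ a (m + 1) * x i} :=
          measure_mono hsub
      _ = ENNReal.ofReal (ci * (s / a (m + 1)) ^ (-α)) * μ' (E m) := hslice m _ hr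
      _ = K * ENNReal.ofReal ((a (m + 1)) ^ α) * μ' (E m) := by rw [hC (m + 1)]
  have hlower_m : ∀ m : ℤ, K * ENNReal.ofReal ((a m) ^ α) * μ' (E m) ≤ ν (piece m) := by
    intro m
    have hr : 0 < s / a m := div_pos hs (ha_pos m)
    have hsub : {x | s / a m < x i ∧ a m * x i < x k ∧ x k ≤ a (m + 1) * x i} ⊆
        piece m := by
      rintro x ⟨h1, h2, h3⟩
      have hxi : 0 < x i := lt_trans hr h1
      refine ⟨?_, hxi, h2, h3⟩
      calc s = a m * (s / a m) := by field_simp [(ha_pos m).ne']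
        _ < a m * x i := by
            exact mul_lt_mul_of_pos_left h1 (ha_pos m)
        _ < x k := h2
    calc K * ENNReal.ofReal ((a m) ^ α) * μ' (E m)
        = ENNReal.ofReal (ci * (s / a m) ^ (-α)) * μ' (E m) := by rw [hC m]
      _ = ν {x | s / a m < x i ∧ a m * x i < x k ∧ x k ≤ a (m + 1) * x i} :=
          (hslice m _ hr).symm
      _ ≤ ν (piece m) := measure_mono hsub
  -- assemble
  have key_up : ∀ m : ℤ, ν (piece m) ≤
      (K * Oρp) * (∫⁻ ω' in E m, ENNReal.ofReal (Θ' ω' ^ α) ∂μ') := by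
    intro m
    calc ν (piece m) ≤ K * ENNReal.ofReal ((a (m + 1)) ^ α) * μ' (E m) := hupper_m m
      _ = (K * Oρp) * (ENNReal.ofReal ((a m) ^ α) * μ' (E m)) := by
          rw [hA_succ m]; ring
      _ ≤ (K * Oρp) * (∫⁻ ω' in E m, ENNReal.ofReal (Θ' ω' ^ α) ∂μ') :=
          mul_le_mul_right (hLm_lb m) _
  have key_lo : ∀ m : ℤ, (K * Oρm) * (∫⁻ ω' in E m, ENNReal.ofReal (Θ' ω' ^ α) ∂μ') ≤
      ν (piece m) := by
    intro m
    calc (K * Oρm) * (∫⁻ ω' in E m, ENNReal.ofReal (Θ' ω' ^ α) ∂μ')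
        ≤ (K * Oρm) * (ENNReal.ofReal ((a (m + 1)) ^ α) * μ' (E m)) :=
          mul_le_mul_right (hLm_ub m) _
      _ = K * (Oρm * Oρp) * (ENNReal.ofReal ((a m) ^ α) * μ' (E m)) := by
          rw [hA_succ m]; ring
      _ = K * ENNReal.ofReal ((a m) ^ α) * μ' (E m) := by
          rw [hOne, mul_one, mul_assoc]
      _ ≤ ν (piece m) := hlower_m m
  constructor
  · calc K * Oρm * M = ∑' m : ℤ, (K * Oρm) *
        (∫⁻ ω' in E m, ENNReal.ofReal (Θ' ω' ^ α) ∂μ') := by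
          rw [ENNReal.tsum_mul_left, hsumL]
      _ ≤ ∑' m : ℤ, ν (piece m) := ENNReal.tsum_le_tsum key_lo
      _ = ν {x | s < x k ∧ 0 < x i} := hsplit.symm
  · calc ν {x | s < x k ∧ 0 < x i} = ∑' m : ℤ, ν (piece m) := hsplit
      _ ≤ ∑' m : ℤ, (K * Oρp) * (∫⁻ ω' in E m, ENNReal.ofReal (Θ' ω' ^ α) ∂μ') :=
          ENNReal.tsum_le_tsum key_up
      _ = K * Oρp * M := by rw [ENNReal.tsum_mul_left, hsumL]



end L

/-- Corollary `cor:justk`, equation `eq:nuxi0`: the tail measure of the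
hyperplane `{x ∈ S_{0,I} : x_i = 0}` is `0` if `E[Θ_{i,j}^α] = c_j/c_i` for all `j ∈ I`,
and `∞` otherwise. -/
theorem tail_measure_hyperplane
    {d : ℕ} {Ω : Type*} [MeasurableSpace Ω] (μ : Measure Ω) [IsProbabilityMeasure μ]
    (X : Ω → Fin d → ℝ) (hXmeas : Measurable X) (hXnn : ∀ ω i, 0 ≤ X ω i)
    (I : Finset (Fin d)) (hI : I.Nonempty)
    (b : ℝ → ℝ) (α : ℝ) (hα : 0 < α) (hb : RegularlyVarying b α)
    (c : Fin d → ℝ) (hc : ∀ i ∈ I, 0 < c i)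
    (htail : ∀ i ∈ I,
      Tendsto (fun t => b t * (μ {ω | t < X ω i}).toReal) atTop (𝓝 (c i)))
    {Ω' : Type*} [MeasurableSpace Ω'] (μ' : Measure Ω') [IsProbabilityMeasure μ']
    (Θ : Fin d → Ω' → Fin d → ℝ) (hΘmeas : ∀ i, Measurable (Θ i))
    (hΘnn : ∀ i ω' j, 0 ≤ Θ i ω' j)
    (hΘii : ∀ i ∈ I, ∀ᵐ ω' ∂μ', Θ i ω' i = 1)
    (hconv : ∀ i ∈ I, ∀ f : BoundedContinuousFunction (Fin d → ℝ) ℝ,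
      Tendsto (fun t => ∫ ω, f (fun j => X ω j / X ω i) ∂(μ[|{ω | t < X ω i}])) atTop
        (𝓝 (∫ ω', f (Θ i ω') ∂μ')))
    (ν : Measure (Fin d → ℝ)) (hν : IsTailMeasure μ X I b ν) :
    ∀ i ∈ I,
      ((∀ j ∈ I, ∫⁻ ω', ENNReal.ofReal ((Θ i ω' j) ^ α) ∂μ'
          = ENNReal.ofReal (c j / c i)) →
        ν {x | (∃ k ∈ I, 0 < x k) ∧ x i = 0} = 0) ∧
      ((¬ ∀ j ∈ I, ∫⁻ ω', ENNReal.ofReal ((Θ i ω' j) ^ α) ∂μ'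
          = ENNReal.ofReal (c j / c i)) →
        ν {x | (∃ k ∈ I, 0 < x k) ∧ x i = 0} = ⊤) := by
  intro i hi
  have hci : 0 < c i := hc i hi
  -- the master identity
  have identity : ∀ k ∈ I, ∀ s : ℝ, 0 < s →
      ENNReal.ofReal (c k * s ^ (-α)) =
        ν {x | s < x k ∧ x i = 0} + ENNReal.ofReal (c i * s ^ (-α)) *
          ∫⁻ ω', ENNReal.ofReal ((Θ i ω' k) ^ α) ∂μ' := by
    intro k hk s hs
    have h1 := (tm_P1 hν hb hXmeas hk (htail k hk) hs).1
    have h2 := tm_P2 hν hXmeas hXnn hk i hs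
    have h3 := tm_E3 hν hb hα hXmeas hi hci (htail i hi) (hconv i hi) (hΘmeas i)
      (hΘnn i) k hs
    have hm1 : MeasurableSet {x : Fin d → ℝ | s < x k ∧ x i < 0} :=
      (measurableSet_lt measurable_const (measurable_pi_apply k)).inter
        (measurableSet_lt (measurable_pi_apply i) measurable_const)
    have hm2 : MeasurableSet {x : Fin d → ℝ | s < x k ∧ x i = 0} :=
      (measurableSet_lt measurable_const (measurable_pi_apply k)).inter
        ((measurable_pi_apply i) (measurableSet_singleton 0))
    have hm3 : MeasurableSet {x : Fin d → ℝ | s < x k ∧ 0 < x i} :=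
      (measurableSet_lt measurable_const (measurable_pi_apply k)).inter
        (measurableSet_lt measurable_const (measurable_pi_apply i))
    have hsplit : {x : Fin d → ℝ | s < x k} =
        {x | s < x k ∧ x i < 0} ∪ ({x | s < x k ∧ x i = 0} ∪ {x | s < x k ∧ 0 < x i}) := by
      ext x
      simp only [Set.mem_union, Set.mem_setOf_eq]
      constructor
      · intro h
        rcases lt_trichotomy (x i) 0 with h' | h' | h'
        · exact Or.inl ⟨h, h'⟩
        · exact Or.inr (Or.inl ⟨h, h'⟩)
        · exact Or.inr (Or.inr ⟨h, h'⟩)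
      · rintro (⟨h, _⟩ | ⟨h, _⟩ | ⟨h, _⟩) <;> exact h
    have hd1 : Disjoint {x : Fin d → ℝ | s < x k ∧ x i < 0}
        ({x | s < x k ∧ x i = 0} ∪ {x | s < x k ∧ 0 < x i}) := by
      rw [Set.disjoint_left]
      rintro x ⟨_, hneg⟩ (⟨_, h0⟩ | ⟨_, hpos⟩)
      · exact absurd h0 (ne_of_lt hneg)
      · exact absurd (lt_trans hneg hpos) (lt_irrefl _)
    have hd2 : Disjoint {x : Fin d → ℝ | s < x k ∧ x i = 0}
        {x | s < x k ∧ 0 < x i} := by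
      rw [Set.disjoint_left]
      rintro x ⟨_, h0⟩ ⟨_, hpos⟩
      rw [h0] at hpos
      exact absurd hpos (lt_irrefl _)
    calc ENNReal.ofReal (c k * s ^ (-α)) = ν {x : Fin d → ℝ | s < x k} := h1.symm
      _ = ν {x : Fin d → ℝ | s < x k ∧ x i < 0} +
            (ν {x | s < x k ∧ x i = 0} + ν {x | s < x k ∧ 0 < x i}) := by
          rw [hsplit, measure_union hd1 (hm2.union hm3), measure_union hd2 hm3]
      _ = ν {x | s < x k ∧ x i = 0} + ENNReal.ofReal (c i * s ^ (-α)) *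
            ∫⁻ ω', ENNReal.ofReal ((Θ i ω' k) ^ α) ∂μ' := by
          rw [h2, zero_add, h3]
  constructor
  · -- all moments match : zero mass on the hyperplane
    intro hmom
    have hzero : ∀ k ∈ I, ∀ s : ℝ, 0 < s → ν {x | s < x k ∧ x i = 0} = 0 := by
      intro k hk s hs
      have hid := identity k hk s hs
      rw [hmom k hk] at hid
      have hrw : ENNReal.ofReal (c i * s ^ (-α)) * ENNReal.ofReal (c k / c i) =
          ENNReal.ofReal (c k * s ^ (-α)) := by
        rw [← ENNReal.ofReal_mul (by positivity)]
        congr 1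
        field_simp
      rw [hrw] at hid
      have hcancel : ν {x | s < x k ∧ x i = 0} + ENNReal.ofReal (c k * s ^ (-α)) =
          0 + ENNReal.ofReal (c k * s ^ (-α)) := by
        rw [zero_add]; exact hid.symm
      exact (ENNReal.add_left_inj ENNReal.ofReal_ne_top).1 hcancel
    have hsub : {x : Fin d → ℝ | (∃ k ∈ I, 0 < x k) ∧ x i = 0} ⊆
        ⋃ k ∈ I, ⋃ n : ℕ, {x : Fin d → ℝ | 1/(n+1) < x k ∧ x i = 0} := by
      rintro x ⟨⟨k, hk, hxk⟩, hxi⟩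
      obtain ⟨n, hn⟩ := exists_nat_one_div_lt hxk
      refine Set.mem_iUnion.2 ⟨k, Set.mem_iUnion.2 ⟨hk, Set.mem_iUnion.2 ⟨n, ?_⟩⟩⟩
      exact ⟨by push_cast at hn ⊢; linarith, hxi⟩
    refine measure_mono_null hsub ?_
    refine measure_biUnion_null_iff I.countable_toSet |>.2 (fun k hk => ?_)
    refine measure_iUnion_null (fun n => ?_)
    exact hzero k hk (1/(n+1)) (by positivity)
  · -- some moment off : infinite mass
    intro hmom
    push_neg at hmom
    obtain ⟨k, hk, hne⟩ := hmom
    set Mk := ∫⁻ ω', ENNReal.ofReal ((Θ i ω' k) ^ α) ∂μ' with hMk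
    have hck : 0 < c k := hc k hk
    have hid1 := identity k hk 1 one_pos
    rw [← hMk] at hid1
    rw [Real.one_rpow, mul_one, mul_one] at hid1
    have hMktop : Mk ≠ ⊤ := by
      intro htop
      rw [htop] at hid1
      have h1 : ENNReal.ofReal (c i) * (⊤:ℝ≥0∞) = ⊤ :=
        ENNReal.mul_top (by simp only [ne_eq, ENNReal.ofReal_eq_zero, not_le]; exact hci)
      rw [h1, add_top] at hid1
      exact ENNReal.ofReal_ne_top hid1
    set m := Mk.toReal with hmdef
    have hm0 : 0 ≤ m := ENNReal.toReal_nonneg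
    have hMkval : Mk = ENNReal.ofReal m := (ENNReal.ofReal_toReal hMktop).symm
    have hle : c i * m ≤ c k := by
      have h1 : ENNReal.ofReal (c i) * Mk ≤ ENNReal.ofReal (c k) := by
        rw [hid1]; exact le_add_self
      rw [hMkval, ← ENNReal.ofReal_mul hci.le] at h1
      exact (ENNReal.ofReal_le_ofReal_iff hck.le).1 h1
    have hmne : m ≠ c k / c i := by
      intro h
      exact hne (by rw [hMkval, h])
    have hlt : c i * m < c k := by
      rcases lt_or_eq_of_le hle with h | h
      · exact h
      · exact absurd ((eq_div_iff hci.ne').2 (by linarith)) hmne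
    set d0 := c k - c i * m with hd0
    have hd0pos : 0 < d0 := by rw [hd0]; linarith
    have hval : ∀ s : ℝ, 0 < s →
        ENNReal.ofReal (s ^ (-α) * d0) ≤ ν {x | s < x k ∧ x i = 0} := by
      intro s hs
      have hid := identity k hk s hs
      rw [← hMk] at hid
      rw [hMkval, ← ENNReal.ofReal_mul (by positivity)] at hid
      have := ENNReal.sub_eq_of_eq_add (ENNReal.ofReal_ne_top) hid
      rw [← this, ← ENNReal.ofReal_sub _ (by positivity)]
      refine ENNReal.ofReal_le_ofReal ?_
      rw [hd0]; ring_nf; exact le_refl _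
    -- conclude infinity
    have hsubA : ∀ s : ℝ, 0 < s → {x : Fin d → ℝ | s < x k ∧ x i = 0} ⊆
        {x : Fin d → ℝ | (∃ k' ∈ I, 0 < x k') ∧ x i = 0} := by
      rintro s hs x ⟨h1, h2⟩
      exact ⟨⟨k, hk, lt_trans hs h1⟩, h2⟩
    by_contra hA
    have hAbound : ∀ n : ℕ, ENNReal.ofReal (((n:ℝ)+1) ^ α * d0) ≤
        ν {x | (∃ k' ∈ I, 0 < x k') ∧ x i = 0} := by
      intro n
      have hs : (0:ℝ) < 1/((n:ℝ)+1) := by positivity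
      have h1 := hval _ hs
      have h2 : ((1:ℝ)/((n:ℝ)+1)) ^ (-α) = ((n:ℝ)+1) ^ α := by
        rw [one_div, ← Real.rpow_neg_one ((n:ℝ)+1), ← Real.rpow_mul (by positivity)]
        norm_num
      rw [h2] at h1
      exact le_trans h1 (measure_mono (hsubA _ hs))
    have htendsto : Tendsto (fun n : ℕ => ((n:ℝ)+1) ^ α * d0) atTop atTop := by
      refine Tendsto.atTop_mul_const hd0pos ?_
      refine (tendsto_rpow_atTop hα).comp ?_
      exact tendsto_atTop_add_const_right _ _ tendsto_natCast_atTop_atTop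
    obtain ⟨n, hn⟩ := (htendsto.eventually_gt_atTop
      ((ν {x | (∃ k' ∈ I, 0 < x k') ∧ x i = 0}).toReal)).exists
    have := hAbound n
    rw [ENNReal.ofReal_le_iff_le_toReal hA] at this
    linarith
end

section
/- Let X=(X_1,…,X_d) be a random vector in S=[0,∞)^d, I⊆{1,…,d} nonempty, and assume the tail-balance condition: there is a function b, regularly varying at infinity with index α>0, with lim_{t→∞} b(t)·P(X_i>t)=c_i∈(0,∞) for every i∈I. Assume that for every i∈I the conditional law of X/X_i given {X_i>t} converges weakly as t→∞ to the law of a random vector Θ_i on S (with Θ_{i,i}=1 a.s.), and let ν be a tail measure of X. If i∈I is such that E[Θ_{i,j}^α]=c_j/c_i for all j∈I, then for every Borel measurable f:S_{0,I}→[0,∞] one has ∫ f dν = c_i E[∫_0^∞ f(z·Θ_i) α z^{−α−1} dz]. -/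
open MeasureTheory ProbabilityTheory Filter Topology
open scoped ENNReal

open Set
open scoped NNReal

noncomputable section TailAux

/-- clamp a real number to `[0,1]`. -/
def clamp01 (r : ℝ) : ℝ := max 0 (min 1 r)

lemma clamp01_nonneg (r : ℝ) : 0 ≤ clamp01 r := le_max_left _ _

lemma clamp01_le_one (r : ℝ) : clamp01 r ≤ 1 :=
  max_le zero_le_one (min_le_left _ _)

lemma clamp01_mono : Monotone clamp01 := fun _ _ h =>
  max_le_max le_rfl (min_le_min le_rfl h)

lemma continuous_clamp01 : Continuous clamp01 :=
  continuous_const.max (continuous_const.min continuous_id)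

lemma clamp01_of_nonpos {r : ℝ} (h : r ≤ 0) : clamp01 r = 0 := by
  unfold clamp01
  rw [min_eq_right (h.trans zero_le_one), max_eq_left h]

lemma clamp01_of_one_le {r : ℝ} (h : 1 ≤ r) : clamp01 r = 1 := by
  unfold clamp01
  rw [min_eq_left h, max_eq_right zero_le_one]

lemma clamp01_pos_arg {r : ℝ} (h : clamp01 r ≠ 0) : 0 < r := by
  by_contra hc
  exact h (clamp01_of_nonpos (not_lt.mp hc))

/-- the basic plateau function at level `a` with width `η`. -/
def gfun (a η s : ℝ) : ℝ := clamp01 ((s - a) / η)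

lemma gfun_nonneg (a η s : ℝ) : 0 ≤ gfun a η s := clamp01_nonneg _
lemma gfun_le_one (a η s : ℝ) : gfun a η s ≤ 1 := clamp01_le_one _

lemma gfun_of_le {a η s : ℝ} (hη : 0 < η) (h : s ≤ a) : gfun a η s = 0 :=
  clamp01_of_nonpos (div_nonpos_of_nonpos_of_nonneg (by linarith) hη.le)

lemma gfun_of_ge {a η s : ℝ} (hη : 0 < η) (h : a + η ≤ s) : gfun a η s = 1 :=
  clamp01_of_one_le ((le_div_iff₀ hη).mpr (by linarith))

lemma gfun_pos_arg {a η s : ℝ} (hη : 0 < η) (h : gfun a η s ≠ 0) : a < s := by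
  have := clamp01_pos_arg h
  have := (div_pos_iff.mp this)
  rcases this with ⟨h1, _⟩ | ⟨_, h2⟩
  · linarith
  · linarith

lemma continuous_gfun (a η : ℝ) : Continuous (fun s => gfun a η s) :=
  continuous_clamp01.comp ((continuous_id.sub continuous_const).div_const _)

/-- layer-cake representation of the plateau function. -/
lemma gfun_layer {a η : ℝ} (hη : 0 < η) (s : ℝ) :
    gfun a η s = η⁻¹ * (volume (Ioc a (a + η) ∩ Iio s)).toReal := by
  rcases le_or_gt s a with h | h
  · rw [gfun_of_le hη h]
    have : Ioc a (a + η) ∩ Iio s = ∅ := by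
      ext z; simp only [mem_inter_iff, mem_Ioc, mem_Iio, mem_empty_iff_false, iff_false]
      rintro ⟨⟨h1, _⟩, h2⟩; linarith
    rw [this]; simp
  · rcases le_or_gt s (a + η) with h2 | h2
    · have hset : Ioc a (a + η) ∩ Iio s = Ioo a s := by
        ext z; simp only [mem_inter_iff, mem_Ioc, mem_Iio, mem_Ioo]
        constructor
        · rintro ⟨⟨h1, _⟩, h3⟩; exact ⟨h1, h3⟩
        · rintro ⟨h1, h3⟩; exact ⟨⟨h1, by linarith⟩, h3⟩
      rw [hset, Real.volume_Ioo, ENNReal.toReal_ofReal (by linarith)]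
      unfold gfun clamp01
      rw [min_eq_right, max_eq_right]
      · ring
      · exact div_nonneg (by linarith) hη.le
      · rw [div_le_one hη]; linarith
    · have hset : Ioc a (a + η) ∩ Iio s = Ioc a (a + η) := by
        rw [inter_eq_left]
        intro z hz; rcases hz with ⟨_, hz2⟩
        exact lt_of_le_of_lt hz2 h2
      rw [hset, gfun_of_ge hη h2.le, Real.volume_Ioc, ENNReal.toReal_ofReal (by linarith)]
      field_simp
      ring

/-- the fundamental tail integral: `∫_{s}^∞ α z^{-α-1} dz = s^{-α}`. -/
lemma lintegral_tail_rpow {α : ℝ} (hα : 0 < α) {s : ℝ} (hs : 0 < s) :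
    ∫⁻ z in Ioi s, ENNReal.ofReal (α * z ^ (-α - 1)) = ENNReal.ofReal (s ^ (-α)) := by
  have hlt : (-α - 1 : ℝ) < -1 := by linarith
  have hint : IntegrableOn (fun z : ℝ => α * z ^ (-α - 1)) (Ioi s) :=
    (integrableOn_Ioi_rpow_of_lt hlt hs).const_mul α
  rw [← ofReal_integral_eq_lintegral_ofReal hint]
  · congr 1
    rw [integral_const_mul, integral_Ioi_rpow_of_lt hlt hs]
    have h1 : (-α - 1 + 1 : ℝ) = -α := by ring
    rw [h1]
    field_simp
  · filter_upwards [ae_restrict_mem measurableSet_Ioi] with z hz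
    have hz0 : (0:ℝ) < z := hs.trans hz
    positivity

end TailAux

section
variable {Ω : Type*} [MeasurableSpace Ω]

/-- Limit of scaled one-dimensional tails at arbitrary positive levels. -/
lemma tailv (μ : Measure Ω) (Y : Ω → ℝ) (b : ℝ → ℝ) {α : ℝ}
    (hb : RegularlyVarying b α) {cj : ℝ}
    (htail : Tendsto (fun t => b t * (μ {ω | t < Y ω}).toReal) atTop (𝓝 cj))
    {v : ℝ} (hv : 0 < v) :
    Tendsto (fun t => b t * (μ {ω | v * t < Y ω}).toReal) atTop (𝓝 (cj * v ^ (-α))) := by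
  have hvt : Tendsto (fun t : ℝ => v * t) atTop atTop := tendsto_id.const_mul_atTop hv
  have hA : Tendsto (fun t => b (v * t) * (μ {ω | v * t < Y ω}).toReal) atTop (𝓝 cj) :=
    htail.comp hvt
  have hB := hb.2 v hv
  have hC : Tendsto (fun t => (b (v * t) / b t)⁻¹) atTop (𝓝 ((v ^ α)⁻¹)) :=
    hB.inv₀ (Real.rpow_pos_of_pos hv α).ne'
  have hD := hC.mul hA
  have hval : (v ^ α)⁻¹ * cj = cj * v ^ (-α) := by
    rw [Real.rpow_neg hv.le]; ring
  rw [hval] at hD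
  apply hD.congr'
  filter_upwards [hb.1, hvt.eventually hb.1] with t hbt hbvt
  rw [inv_div]
  field_simp

end

section
variable {d : ℕ} {Ω : Type*} [MeasurableSpace Ω]

/-- The key one-level limit: `b t ∫_{z t < X_i} h(X/X_i) dμ → c_i z^{-α} E`. -/
lemma keylim (μ : Measure Ω) [IsProbabilityMeasure μ] (X : Ω → Fin d → ℝ)
    (b : ℝ → ℝ) {α : ℝ} (hb : RegularlyVarying b α) {i : Fin d} {ci : ℝ} (hci : 0 < ci)
    (htail : Tendsto (fun t => b t * (μ {ω | t < X ω i}).toReal) atTop (𝓝 ci))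
    (h : BoundedContinuousFunction (Fin d → ℝ) ℝ) {E : ℝ}
    (hconv : Tendsto (fun t => ∫ ω, h (fun j => X ω j / X ω i) ∂(μ[|{ω | t < X ω i}]))
      atTop (𝓝 E)) {z : ℝ} (hz : 0 < z) :
    Tendsto (fun t => b t * ∫ ω in {ω | z * t < X ω i}, h (fun j => X ω j / X ω i) ∂μ)
      atTop (𝓝 (ci * z ^ (-α) * E)) := by
  have hvt : Tendsto (fun t : ℝ => z * t) atTop atTop := tendsto_id.const_mul_atTop hz
  have h1 : Tendsto (fun t => b t * (μ {ω | z * t < X ω i}).toReal) atTop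
      (𝓝 (ci * z ^ (-α))) := tailv μ (fun ω => X ω i) b hb htail hz
  have h2 : Tendsto (fun t => ∫ ω, h (fun j => X ω j / X ω i) ∂(μ[|{ω | z * t < X ω i}]))
      atTop (𝓝 E) := hconv.comp hvt
  have h3 := h1.mul h2
  apply h3.congr'
  have hLpos : 0 < ci * z ^ (-α) := mul_pos hci (Real.rpow_pos_of_pos hz _)
  have hev : ∀ᶠ t in atTop, ci * z ^ (-α) / 2 < b t * (μ {ω | z * t < X ω i}).toReal :=
    h1.eventually (eventually_gt_nhds (by linarith))
  filter_upwards [hev, hb.1] with t hgt hbt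
  have hppos : 0 < (μ {ω | z * t < X ω i}).toReal := by nlinarith
  rw [ProbabilityTheory.cond, integral_smul_measure, ENNReal.toReal_inv]
  rw [smul_eq_mul]
  field_simp

end

section
variable {d : ℕ} {Ω : Type*} [MeasurableSpace Ω]

/-- The smoothed limit: `b t ∫ h(X/X_i) g_{a,η}(X_i/t) dμ → c_i E (η⁻¹ ∫_a^{a+η} z^{-α} dz)`. -/
lemma smoothed (μ : Measure Ω) [IsProbabilityMeasure μ] (X : Ω → Fin d → ℝ)
    (hXmeas : Measurable X)
    (b : ℝ → ℝ) {α : ℝ} (hb : RegularlyVarying b α) {i : Fin d} {ci : ℝ} (hci : 0 < ci)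
    (htail : Tendsto (fun t => b t * (μ {ω | t < X ω i}).toReal) atTop (𝓝 ci))
    (h : BoundedContinuousFunction (Fin d → ℝ) ℝ) (hpos : ∀ x, 0 ≤ h x) {E : ℝ}
    (hconv : Tendsto (fun t => ∫ ω, h (fun j => X ω j / X ω i) ∂(μ[|{ω | t < X ω i}]))
      atTop (𝓝 E)) {a η : ℝ} (ha : 0 < a) (hη : 0 < η) :
    Tendsto (fun t => b t * ∫ ω, h (fun j => X ω j / X ω i) * gfun a η (X ω i / t) ∂μ)
      atTop (𝓝 (ci * E * (η⁻¹ * ∫ z in Ioc a (a + η), z ^ (-α)))) := by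
  set H : Ω → ℝ := fun ω => h (fun j => X ω j / X ω i) with hH
  have hXimeas : Measurable fun ω => X ω i := (measurable_pi_apply i).comp hXmeas
  have hHmeas : Measurable H :=
    h.continuous.measurable.comp (measurable_pi_lambda _ fun j =>
      ((measurable_pi_apply j).comp hXmeas).div hXimeas)
  have hHbd : ∀ ω, ‖H ω‖ ≤ ‖h‖ := fun ω => h.norm_coe_le_norm _
  have hHnn : ∀ ω, 0 ≤ H ω := fun ω => hpos _
  have hHint : Integrable H μ :=
    Integrable.mono' (integrable_const ‖h‖) hHmeas.aestronglyMeasurable (ae_of_all _ hHbd)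
  haveI : IsFiniteMeasure (volume.restrict (Ioc a (a + η))) :=
    ⟨by rw [Measure.restrict_apply_univ]; exact measure_Ioc_lt_top⟩
  have hsetmeas : ∀ z t : ℝ, MeasurableSet {ω | z * t < X ω i} := fun z t =>
    measurableSet_lt measurable_const hXimeas
  -- step (i'): layer-cake identity under the integral
  have key : ∀ t : ℝ, 0 < t →
      ∫ ω, H ω * gfun a η (X ω i / t) ∂μ
        = η⁻¹ * ∫ z in Ioc a (a + η), (∫ ω in {ω | z * t < X ω i}, H ω ∂μ) := by
    intro t ht
    have hAmeas : MeasurableSet {p : Ω × ℝ | p.2 * t < X p.1 i} :=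
      measurableSet_lt (measurable_snd.mul_const t) (hXimeas.comp measurable_fst)
    set F : Ω × ℝ → ℝ := indicator {p : Ω × ℝ | p.2 * t < X p.1 i} (fun p => H p.1) with hF
    have hFmeas : Measurable F := (hHmeas.comp measurable_fst).indicator hAmeas
    have e1 : ∀ ω, H ω * gfun a η (X ω i / t)
        = η⁻¹ * ∫ z in Ioc a (a + η), F (ω, z) := by
      intro ω
      rw [gfun_layer hη]
      have e2 : (volume (Ioc a (a + η) ∩ Iio (X ω i / t))).toReal
          = ∫ z in Ioc a (a + η), indicator (Iio (X ω i / t)) (fun _ => (1:ℝ)) z := by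
        rw [setIntegral_indicator measurableSet_Iio, setIntegral_const, smul_eq_mul, mul_one]
        rfl
      rw [e2, ← mul_assoc, mul_comm (H ω) η⁻¹, mul_assoc, ← integral_const_mul]
      congr 1
      apply setIntegral_congr_fun measurableSet_Ioc
      intro z _
      simp only [hF, indicator_apply, mem_Iio, mem_setOf_eq]
      by_cases hcase : z * t < X ω i
      · rw [if_pos hcase, if_pos ((lt_div_iff₀ ht).mpr hcase), mul_one]
      · rw [if_neg hcase, if_neg (fun hcon => hcase ((lt_div_iff₀ ht).mp hcon)), mul_zero]
    rw [integral_congr_ae (ae_of_all _ e1), integral_const_mul]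
    congr 1
    have hFint : Integrable (Function.uncurry fun ω z => F (ω, z))
        (μ.prod (volume.restrict (Ioc a (a + η)))) := by
      apply Integrable.mono' (integrable_const ‖h‖) hFmeas.aestronglyMeasurable
      apply ae_of_all
      rintro ⟨ω, z⟩
      calc ‖F (ω, z)‖ ≤ ‖H ω‖ := by
            simp only [hF]
            exact norm_indicator_le_norm_self _ _
        _ ≤ ‖h‖ := hHbd ω
    rw [integral_integral_swap hFint]
    apply setIntegral_congr_fun measurableSet_Ioc
    intro z _
    have : ∀ ω, F (ω, z) = indicator {ω | z * t < X ω i} H ω := by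
      intro ω
      simp only [hF, indicator_apply, mem_setOf_eq]
    show ∫ ω, F (ω, z) ∂μ = _
    rw [integral_congr_ae (ae_of_all _ this), integral_indicator (hsetmeas z t)]
  -- step (ii): dominated convergence
  set G : ℝ → ℝ → ℝ := fun t z => b t * ∫ ω in {ω | z * t < X ω i}, H ω ∂μ with hG
  have hDCT : Tendsto (fun t => ∫ z in Ioc a (a + η), G t z) atTop
      (𝓝 (∫ z in Ioc a (a + η), ci * z ^ (-α) * E)) := by
    have hbd : ∀ᶠ t in atTop, b t * (μ {ω | a * t < X ω i}).toReal ≤ ci * a ^ (-α) + 1 :=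
      (tailv μ (fun ω => X ω i) b hb htail ha).eventually
        (eventually_le_nhds (lt_add_one _))
    apply tendsto_integral_filter_of_dominated_convergence
      (fun _ => ‖h‖ * (ci * a ^ (-α) + 1))
    · filter_upwards [hb.1, eventually_gt_atTop (0:ℝ)] with t hbt ht
      have hanti : Antitone fun z => G t z := by
        intro z z' hzz'
        apply mul_le_mul_of_nonneg_left _ hbt.le
        apply setIntegral_mono_set hHint.integrableOn (ae_of_all _ hHnn)
        apply HasSubset.Subset.eventuallyLE
        intro ω hω
        exact lt_of_le_of_lt (mul_le_mul_of_nonneg_right hzz' ht.le) hω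
      exact (hanti.measurable).aestronglyMeasurable
    · filter_upwards [hb.1, eventually_gt_atTop (0:ℝ), hbd] with t hbt ht hbdt
      rw [ae_restrict_iff' measurableSet_Ioc]
      apply ae_of_all
      intro z hz
      have hsub : {ω | z * t < X ω i} ⊆ {ω | a * t < X ω i} := by
        intro ω hω
        exact lt_of_le_of_lt (mul_le_mul_of_nonneg_right hz.1.le ht.le) hω
      have hbound : ‖∫ ω in {ω | z * t < X ω i}, H ω ∂μ‖
          ≤ ‖h‖ * (μ {ω | z * t < X ω i}).toReal :=
        norm_setIntegral_le_of_norm_le_const (measure_lt_top _ _) (fun ω _ => hHbd ω)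
      have hmono : (μ {ω | z * t < X ω i}).toReal ≤ (μ {ω | a * t < X ω i}).toReal :=
        ENNReal.toReal_mono (measure_ne_top _ _) (measure_mono hsub)
      have hnormh : (0:ℝ) ≤ ‖h‖ := norm_nonneg _
      calc ‖G t z‖ = b t * ‖∫ ω in {ω | z * t < X ω i}, H ω ∂μ‖ := by
            rw [hG]; simp only [norm_mul, Real.norm_eq_abs, abs_of_pos hbt]
        _ ≤ b t * (‖h‖ * (μ {ω | z * t < X ω i}).toReal) :=
            mul_le_mul_of_nonneg_left hbound hbt.le
        _ ≤ b t * (‖h‖ * (μ {ω | a * t < X ω i}).toReal) := by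
            apply mul_le_mul_of_nonneg_left _ hbt.le
            exact mul_le_mul_of_nonneg_left hmono hnormh
        _ = ‖h‖ * (b t * (μ {ω | a * t < X ω i}).toReal) := by ring
        _ ≤ ‖h‖ * (ci * a ^ (-α) + 1) := mul_le_mul_of_nonneg_left hbdt hnormh
    · exact integrable_const _
    · rw [ae_restrict_iff' measurableSet_Ioc]
      apply ae_of_all
      intro z hz
      exact keylim μ X b hb hci htail h hconv (ha.trans hz.1)
  -- assemble
  have hfinal := hDCT.const_mul η⁻¹
  have hval : η⁻¹ * ∫ z in Ioc a (a + η), ci * z ^ (-α) * E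
      = ci * E * (η⁻¹ * ∫ z in Ioc a (a + η), z ^ (-α)) := by
    have : (fun z : ℝ => ci * z ^ (-α) * E) = fun z : ℝ => (ci * E) * z ^ (-α) := by
      funext z; ring
    rw [this, integral_const_mul]
    ring
  rw [hval] at hfinal
  apply hfinal.congr'
  filter_upwards [eventually_gt_atTop (0:ℝ)] with t ht
  rw [key t ht]
  simp only [hG]
  rw [integral_const_mul]
  ring

end

section
variable {d : ℕ} {Ω : Type*} [MeasurableSpace Ω]

/-- Pairing of the tail measure with the product test functions. -/
lemma pairing (μ : Measure Ω) [IsProbabilityMeasure μ] (X : Ω → Fin d → ℝ)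
    (hXmeas : Measurable X) (I : Finset (Fin d)) (b : ℝ → ℝ) {α : ℝ}
    (hb : RegularlyVarying b α) (ν : Measure (Fin d → ℝ))
    (hν : IsTailMeasure μ X I b ν) {i : Fin d} (hiI : i ∈ I) {ci : ℝ} (hci : 0 < ci)
    (htail : Tendsto (fun t => b t * (μ {ω | t < X ω i}).toReal) atTop (𝓝 ci))
    (h : BoundedContinuousFunction (Fin d → ℝ) ℝ) (hpos : ∀ x, 0 ≤ h x) {E : ℝ}
    (hconv : Tendsto (fun t => ∫ ω, h (fun j => X ω j / X ω i) ∂(μ[|{ω | t < X ω i}]))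
      atTop (𝓝 E)) {a η : ℝ} (ha : 0 < a) (hη : 0 < η) :
    ∫⁻ x, ENNReal.ofReal (h (fun j => x j / max (x i) (a/2)) * gfun a η (x i)) ∂ν
      = ENNReal.ofReal (ci * E * (η⁻¹ * ∫ z in Ioc a (a + η), z ^ (-α))) := by
  set fbf : (Fin d → ℝ) → ℝ :=
    fun x => h (fun j => x j / max (x i) (a/2)) * gfun a η (x i) with hfbf
  have hcont : Continuous fbf := by
    apply Continuous.mul
    · apply h.continuous.comp
      apply continuous_pi
      intro j
      exact (continuous_apply j).div ((continuous_apply i).max continuous_const)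
        (fun x => (lt_of_lt_of_le (by positivity) (le_max_right _ _)).ne')
    · exact (continuous_gfun a η).comp (continuous_apply i)
  have hbd : ∀ x, ‖fbf x‖ ≤ ‖h‖ := by
    intro x
    rw [norm_mul]
    calc ‖h (fun j => x j / max (x i) (a/2))‖ * ‖gfun a η (x i)‖
        ≤ ‖h‖ * 1 := by
          apply mul_le_mul (h.norm_coe_le_norm _) _ (norm_nonneg _) (norm_nonneg _)
          rw [Real.norm_eq_abs, abs_of_nonneg (gfun_nonneg _ _ _)]
          exact gfun_le_one _ _ _
      _ = ‖h‖ := mul_one _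
  set fb := BoundedContinuousFunction.ofNormedAddCommGroup fbf hcont ‖h‖ hbd with hfb
  have hfbcoe : ∀ x, fb x = fbf x := fun x => rfl
  have hfb0 : ∀ x : Fin d → ℝ, (∀ k ∈ I, x k ≤ a) → fb x = 0 := by
    intro x hx
    rw [hfbcoe, hfbf]
    simp only
    rw [gfun_of_le hη (hx i hiI), mul_zero]
  have htend := hν.2.2 fb ⟨a, ha, hfb0⟩
  have heq : ∀ᶠ t in atTop,
      b t * ∫ ω, fb (fun j => X ω j / t) ∂μ
        = b t * ∫ ω, h (fun j => X ω j / X ω i) * gfun a η (X ω i / t) ∂μ := by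
    filter_upwards [eventually_gt_atTop (0:ℝ)] with t ht
    congr 1
    apply integral_congr_ae
    apply ae_of_all
    intro ω
    show fbf (fun j => X ω j / t) = (h fun j => X ω j / X ω i) * gfun a η (X ω i / t)
    rw [hfbf]
    simp only
    by_cases hcase : gfun a η (X ω i / t) = 0
    · rw [hcase, mul_zero, mul_zero]
    · have hXia : a < X ω i / t := gfun_pos_arg hη hcase
      have hmax : max (X ω i / t) (a/2) = X ω i / t := max_eq_left (by linarith)
      rw [hmax]
      congr 2
      funext j
      exact div_div_div_cancel_right₀ ht.ne' _ _
  have hreal : ∫ x, fb x ∂ν = ci * E * (η⁻¹ * ∫ z in Ioc a (a + η), z ^ (-α)) :=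
    tendsto_nhds_unique (htend.congr' heq)
      (smoothed μ X hXmeas b hb hci htail h hpos hconv ha hη)
  have hfbnn : ∀ x, 0 ≤ fb x := fun x =>
    mul_nonneg (hpos _) (gfun_nonneg _ _ _)
  have hsetfin : ν {x | a < x i} < ⊤ := by
    refine lt_of_le_of_lt (measure_mono ?_) (hν.1 a ha)
    intro x hx
    exact ⟨i, hiI, le_of_lt hx⟩
  have hsetmeas : MeasurableSet {x : Fin d → ℝ | a < x i} :=
    measurableSet_lt measurable_const (measurable_pi_apply i)
  have hfbind : (fb : (Fin d → ℝ) → ℝ) = indicator {x | a < x i} fb := by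
    funext x
    simp only [indicator_apply, mem_setOf_eq]
    by_cases hx : a < x i
    · rw [if_pos hx]
    · rw [if_neg hx]
      show fbf x = 0
      rw [hfbf]
      simp only
      rw [gfun_of_le hη (not_lt.mp hx), mul_zero]
  have hfbint : Integrable fb ν := by
    rw [show (fb : (Fin d → ℝ) → ℝ) = indicator {x | a < x i} fb from hfbind,
      integrable_indicator_iff hsetmeas]
    apply Integrable.mono' (integrableOn_const (C := ‖h‖) hsetfin.ne)
      hcont.aestronglyMeasurable.restrict
    exact ae_of_all _ hbd
  show ∫⁻ x, ENNReal.ofReal (fb x) ∂ν = _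
  rw [← ofReal_integral_eq_lintegral_ofReal hfbint (ae_of_all _ hfbnn), hreal]

end

lemma gfun_eta_mono {a s η₁ η₂ : ℝ} (h2 : 0 < η₂) (hle : η₂ ≤ η₁) :
    gfun a η₁ s ≤ gfun a η₂ s := by
  rcases le_or_gt s a with hs | hs
  · rw [gfun_of_le (lt_of_lt_of_le h2 hle) hs, gfun_of_le h2 hs]
  · exact clamp01_mono (div_le_div_of_nonneg_left (by linarith) h2 hle)

section
variable {d : ℕ} {Ω : Type*} [MeasurableSpace Ω]

/-- Identification of the tail-measure integrals above level `a` in coordinate `i`. -/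
lemma keyNu (μ : Measure Ω) [IsProbabilityMeasure μ] (X : Ω → Fin d → ℝ)
    (hXmeas : Measurable X) (I : Finset (Fin d)) (b : ℝ → ℝ) {α : ℝ} (hα : 0 < α)
    (hb : RegularlyVarying b α) (ν : Measure (Fin d → ℝ))
    (hν : IsTailMeasure μ X I b ν) {i : Fin d} (hiI : i ∈ I) {ci : ℝ} (hci : 0 < ci)
    (htail : Tendsto (fun t => b t * (μ {ω | t < X ω i}).toReal) atTop (𝓝 ci))
    (h : BoundedContinuousFunction (Fin d → ℝ) ℝ) (hpos : ∀ x, 0 ≤ h x) {E : ℝ}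
    (hconv : Tendsto (fun t => ∫ ω, h (fun j => X ω j / X ω i) ∂(μ[|{ω | t < X ω i}]))
      atTop (𝓝 E)) {a : ℝ} (ha : 0 < a) :
    ∫⁻ x in {x | a < x i}, ENNReal.ofReal (h (fun j => x j / x i)) ∂ν
      = ENNReal.ofReal (ci * E * a ^ (-α)) := by
  set η : ℕ → ℝ := fun n => 1 / (n + 1) with hη
  have hηpos : ∀ n, 0 < η n := fun n => by positivity
  set u : ℕ → (Fin d → ℝ) → ℝ≥0∞ := fun n x =>
    ENNReal.ofReal (h (fun j => x j / max (x i) (a/2)) * gfun a (η n) (x i)) with hu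
  have humeas : ∀ n, Measurable (u n) := by
    intro n
    apply Measurable.ennreal_ofReal
    apply Continuous.measurable
    apply Continuous.mul
    · apply h.continuous.comp
      apply continuous_pi
      intro j
      exact (continuous_apply j).div ((continuous_apply i).max continuous_const)
        (fun x => (lt_of_lt_of_le (by positivity) (le_max_right _ _)).ne')
    · exact (continuous_gfun a (η n)).comp (continuous_apply i)
  have humono : Monotone u := by
    intro n m hnm x
    apply ENNReal.ofReal_le_ofReal
    apply mul_le_mul_of_nonneg_left _ (hpos _)
    apply gfun_eta_mono (hηpos m)
    apply div_le_div_of_nonneg_left zero_le_one (by positivity)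
    have : ((n:ℝ) + 1) ≤ ((m:ℝ) + 1) := by exact_mod_cast Nat.succ_le_succ hnm
    linarith
  have hsetmeas : MeasurableSet {x : Fin d → ℝ | a < x i} :=
    measurableSet_lt measurable_const (measurable_pi_apply i)
  have hsup : ∀ x, (⨆ n, u n x)
      = indicator {x : Fin d → ℝ | a < x i}
        (fun x => ENNReal.ofReal (h (fun j => x j / x i))) x := by
    intro x
    by_cases hx : a < x i
    · rw [indicator_of_mem (show x ∈ {x : Fin d → ℝ | a < x i} from hx)]
      have hmax : max (x i) (a/2) = x i := max_eq_left (by linarith)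
      have e1 : ∀ n, u n x = ENNReal.ofReal (h (fun j => x j / x i))
          * ENNReal.ofReal (gfun a (η n) (x i)) := by
        intro n
        rw [hu]
        simp only
        rw [hmax, ENNReal.ofReal_mul (hpos _)]
      rw [iSup_congr e1, ← ENNReal.mul_iSup]
      have e2 : (⨆ n, ENNReal.ofReal (gfun a (η n) (x i))) = 1 := by
        apply le_antisymm
        · exact iSup_le fun n => ENNReal.ofReal_le_one.mpr (gfun_le_one _ _ _)
        · obtain ⟨n, hn⟩ := exists_nat_one_div_lt (show (0:ℝ) < x i - a by linarith)
          apply le_iSup_of_le n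
          rw [gfun_of_ge (hηpos n) (by rw [hη]; simp only; linarith)]
          simp
      rw [e2, mul_one]
    · rw [indicator_of_notMem (show x ∉ {x : Fin d → ℝ | a < x i} from hx)]
      apply ENNReal.iSup_eq_zero.mpr
      intro n
      rw [hu]
      simp only
      rw [gfun_of_le (hηpos n) (not_lt.mp hx), mul_zero]
      simp
  have hlhs : ∫⁻ x in {x | a < x i}, ENNReal.ofReal (h (fun j => x j / x i)) ∂ν
      = ⨆ n, ∫⁻ x, u n x ∂ν := by
    rw [← lintegral_indicator hsetmeas, ← lintegral_iSup humeas humono]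
    apply lintegral_congr
    intro x
    rw [hsup x]
  set sn : ℕ → ℝ := fun n => (η n)⁻¹ * ∫ z in Ioc a (a + η n), z ^ (-α) with hsn
  have hpair : ∀ n, ∫⁻ x, u n x ∂ν = ENNReal.ofReal (ci * E * sn n) := fun n =>
    pairing μ X hXmeas I b hb ν hν hiI hci htail h hpos hconv ha (hηpos n)
  have hrpow_anti : ∀ {p q : ℝ}, 0 < p → p ≤ q → q ^ (-α) ≤ p ^ (-α) := by
    intro p q hp hpq
    rw [Real.rpow_neg hp.le, Real.rpow_neg (hp.trans_le hpq).le]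
    exact inv_anti₀ (Real.rpow_pos_of_pos hp α)
      (Real.rpow_le_rpow hp.le hpq hα.le)
  have hsnb : ∀ n, (a + η n) ^ (-α) ≤ sn n ∧ sn n ≤ a ^ (-α) := by
    intro n
    have hint : IntegrableOn (fun z : ℝ => z ^ (-α)) (Ioc a (a + η n)) := by
      apply IntegrableOn.mono_set _ Ioc_subset_Icc_self
      apply ContinuousOn.integrableOn_compact isCompact_Icc
      intro z hz
      have hz0 : (0:ℝ) < z := lt_of_lt_of_le ha hz.1
      exact (Real.continuousAt_rpow_const z (-α) (Or.inl hz0.ne')).continuousWithinAt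
    have hvol : (volume (Ioc a (a + η n))).toReal = η n := by
      rw [Real.volume_Ioc, ENNReal.toReal_ofReal (by linarith [hηpos n])]
      ring
    constructor
    · have hlow : ∫ z in Ioc a (a + η n), ((a + η n) ^ (-α) : ℝ)
          ≤ ∫ z in Ioc a (a + η n), z ^ (-α) := by
        apply setIntegral_mono_on (integrableOn_const measure_Ioc_lt_top.ne)
          hint measurableSet_Ioc
        intro z hz
        exact hrpow_anti (ha.trans hz.1) hz.2
      rw [setIntegral_const, smul_eq_mul, measureReal_def, hvol] at hlow
      have := mul_le_mul_of_nonneg_left hlow (inv_nonneg.mpr (hηpos n).le)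
      rwa [inv_mul_cancel_left₀ (hηpos n).ne'] at this
    · have hup : ∫ z in Ioc a (a + η n), z ^ (-α)
          ≤ ∫ z in Ioc a (a + η n), (a ^ (-α) : ℝ) := by
        apply setIntegral_mono_on hint (integrableOn_const measure_Ioc_lt_top.ne)
          measurableSet_Ioc
        intro z hz
        exact hrpow_anti ha hz.1.le
      rw [setIntegral_const, smul_eq_mul, measureReal_def, hvol] at hup
      have := mul_le_mul_of_nonneg_left hup (inv_nonneg.mpr (hηpos n).le)
      rwa [inv_mul_cancel_left₀ (hηpos n).ne'] at this
  have hmonoE : Monotone fun n => ENNReal.ofReal (ci * E * sn n) := by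
    intro n m hnm
    simp only
    rw [← hpair n, ← hpair m]
    exact lintegral_mono fun x => humono hnm x
  have htendR : Tendsto (fun n => ci * E * sn n) atTop (𝓝 (ci * E * a ^ (-α))) := by
    apply Tendsto.const_mul
    have h1 : Tendsto (fun n : ℕ => a + η n) atTop (𝓝 a) := by
      have h0 := tendsto_one_div_add_atTop_nhds_zero_nat (𝕜 := ℝ)
      have := tendsto_const_nhds.add h0 (f := fun _ : ℕ => a) (x := atTop)
      simpa [hη, one_div] using this
    have hlow : Tendsto (fun n => (a + η n) ^ (-α)) atTop (𝓝 (a ^ (-α))) :=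
      ((Real.continuousAt_rpow_const a (-α) (Or.inl ha.ne')).tendsto.comp h1)
    exact tendsto_of_tendsto_of_tendsto_of_le_of_le hlow tendsto_const_nhds
      (fun n => (hsnb n).1) (fun n => (hsnb n).2)
  have htendE : Tendsto (fun n => ENNReal.ofReal (ci * E * sn n)) atTop
      (𝓝 (ENNReal.ofReal (ci * E * a ^ (-α)))) :=
    ENNReal.tendsto_ofReal htendR
  rw [hlhs, iSup_congr hpair]
  exact tendsto_nhds_unique (tendsto_atTop_iSup hmonoE) htendE

end

section
variable {d : ℕ} {Ω' : Type*} [MeasurableSpace Ω']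

/-- the measure `α z^{-α-1} dz` on `(0,∞)`. -/
noncomputable def rhoM (α : ℝ) : Measure ℝ :=
  (volume.restrict (Ioi (0:ℝ))).withDensity (fun z => ENNReal.ofReal (α * z ^ (-α - 1)))

/-- candidate tail measure built from a single spectral limit `Θi`. -/
noncomputable def nuP (α ci : ℝ) (μ' : Measure Ω') (Θi : Ω' → Fin d → ℝ) :
    Measure (Fin d → ℝ) :=
  ENNReal.ofReal ci •
    Measure.map (fun p : Ω' × ℝ => fun j => p.2 * Θi p.1 j) (μ'.prod (rhoM α))

lemma Tmeas {Θi : Ω' → Fin d → ℝ} (hΘ : Measurable Θi) :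
    Measurable (fun p : Ω' × ℝ => fun j => p.2 * Θi p.1 j) :=
  measurable_pi_lambda _ fun j =>
    measurable_snd.mul ((measurable_pi_apply j).comp (hΘ.comp measurable_fst))

instance rhoM_sigmaFinite (α : ℝ) : SigmaFinite (rhoM α) := by
  unfold rhoM
  infer_instance

/-- the fundamental representation of integrals against `nuP`. -/
lemma nuP_lintegral (α ci : ℝ) (μ' : Measure Ω') [SFinite μ'] {Θi : Ω' → Fin d → ℝ}
    (hΘ : Measurable Θi) {f : (Fin d → ℝ) → ℝ≥0∞} (hf : Measurable f) :
    ∫⁻ x, f x ∂(nuP α ci μ' Θi)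
      = ENNReal.ofReal ci * ∫⁻ ω', (∫⁻ z in Ioi (0:ℝ),
          f (fun j => z * Θi ω' j) * ENNReal.ofReal (α * z ^ (-α - 1))) ∂μ' := by
  unfold nuP
  rw [lintegral_smul_measure, lintegral_map hf (Tmeas hΘ)]
  congr 1
  have hm : Measurable (fun p : Ω' × ℝ => f (fun j => p.2 * Θi p.1 j)) :=
    hf.comp (Tmeas hΘ)
  rw [MeasureTheory.lintegral_prod _ hm.aemeasurable]
  apply lintegral_congr
  intro ω'
  have hg : Measurable (fun z : ℝ => f (fun j => z * Θi ω' j)) :=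
    hf.comp (measurable_pi_lambda _ fun j => measurable_id.mul_const _)
  show ∫⁻ z, f (fun j => z * Θi ω' j) ∂(rhoM α) = _
  unfold rhoM
  rw [lintegral_withDensity_eq_lintegral_mul _ (by fun_prop) hg]
  apply lintegral_congr
  intro z
  exact mul_comm _ _

/-- `nuP` gives no mass to `{x | x i ≤ 0}`. -/
lemma nuP_null {α : ℝ} (ci : ℝ) (μ' : Measure Ω') [SFinite μ'] {Θi : Ω' → Fin d → ℝ}
    (hΘ : Measurable Θi) {i : Fin d} (hΘii : ∀ᵐ ω' ∂μ', Θi ω' i = 1) :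
    nuP α ci μ' Θi {x | ¬ 0 < x i} = 0 := by
  have hsmeas : MeasurableSet {x : Fin d → ℝ | ¬ 0 < x i} :=
    (measurableSet_lt measurable_const (measurable_pi_apply i)).compl
  have h1 : nuP α ci μ' Θi {x | ¬ 0 < x i}
      = ∫⁻ x, indicator {x : Fin d → ℝ | ¬ 0 < x i} (fun _ => 1) x ∂(nuP α ci μ' Θi) := by
    rw [lintegral_indicator hsmeas, setLIntegral_one]
  rw [h1, nuP_lintegral α ci μ' hΘ (measurable_const.indicator hsmeas)]
  have h2 : ∫⁻ ω', (∫⁻ z in Ioi (0:ℝ),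
      indicator {x : Fin d → ℝ | ¬ 0 < x i} (fun _ => 1) (fun j => z * Θi ω' j)
        * ENNReal.ofReal (α * z ^ (-α - 1))) ∂μ' = 0 := by
    rw [lintegral_eq_zero_iff ?hm]
    case hm =>
      apply Measurable.lintegral_prod_right
      exact ((measurable_const.indicator hsmeas).comp
        (Tmeas hΘ)).mul
        ((measurable_const.mul ((measurable_id.pow_const _))).ennreal_ofReal.comp
          measurable_snd)
    filter_upwards [hΘii] with ω' hω'
    have hz0 : ∀ z ∈ Ioi (0:ℝ),
        indicator {x : Fin d → ℝ | ¬ 0 < x i} (fun _ => (1:ℝ≥0∞)) (fun j => z * Θi ω' j)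
          * ENNReal.ofReal (α * z ^ (-α - 1)) = 0 := by
      intro z hz
      rw [indicator_of_notMem
        (by simp only [mem_setOf_eq, not_not, hω', mul_one]; exact hz), zero_mul]
    rw [setLIntegral_congr_fun measurableSet_Ioi hz0]
    simp
  rw [h2, mul_zero]

end

section
variable {d : ℕ} {Ω' : Type*} [MeasurableSpace Ω']

/-- `keyNu` analogue for the candidate measure `nuP`. -/
lemma keyNuP {α : ℝ} (hα : 0 < α) {ci : ℝ} (hci : 0 ≤ ci) (μ' : Measure Ω')
    [IsProbabilityMeasure μ'] {Θi : Ω' → Fin d → ℝ} (hΘ : Measurable Θi) {i : Fin d}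
    (hΘii : ∀ᵐ ω' ∂μ', Θi ω' i = 1)
    (h : BoundedContinuousFunction (Fin d → ℝ) ℝ) (hpos : ∀ x, 0 ≤ h x)
    {a : ℝ} (ha : 0 < a) :
    ∫⁻ x in {x | a < x i}, ENNReal.ofReal (h (fun j => x j / x i)) ∂(nuP α ci μ' Θi)
      = ENNReal.ofReal (ci * (∫ ω', h (Θi ω') ∂μ') * a ^ (-α)) := by
  have hsmeas : MeasurableSet {x : Fin d → ℝ | a < x i} :=
    measurableSet_lt measurable_const (measurable_pi_apply i)
  set F : (Fin d → ℝ) → ℝ≥0∞ := fun x => ENNReal.ofReal (h (fun j => x j / x i)) with hF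
  have hFmeas : Measurable F :=
    (h.continuous.measurable.comp (measurable_pi_lambda _ fun j =>
      (measurable_pi_apply j).div (measurable_pi_apply i))).ennreal_ofReal
  have hwmeas : Measurable fun z : ℝ => ENNReal.ofReal (α * z ^ (-α - 1)) := by fun_prop
  have hEnn : 0 ≤ ∫ ω', h (Θi ω') ∂μ' := integral_nonneg fun ω' => hpos _
  have hint : Integrable (fun ω' => h (Θi ω')) μ' :=
    Integrable.mono' (integrable_const ‖h‖)
      ((h.continuous.measurable.comp hΘ).aestronglyMeasurable)
      (ae_of_all _ fun ω' => h.norm_coe_le_norm _)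
  rw [← lintegral_indicator hsmeas,
    nuP_lintegral α ci μ' hΘ (hFmeas.indicator hsmeas)]
  have hae : ∀ᵐ ω' ∂μ', (∫⁻ z in Ioi (0:ℝ),
      indicator {x : Fin d → ℝ | a < x i} F (fun j => z * Θi ω' j)
        * ENNReal.ofReal (α * z ^ (-α - 1)))
      = ENNReal.ofReal (h (Θi ω')) * ENNReal.ofReal (a ^ (-α)) := by
    filter_upwards [hΘii] with ω' hω'
    have hzeq : ∀ z ∈ Ioi (0:ℝ),
        indicator {x : Fin d → ℝ | a < x i} F (fun j => z * Θi ω' j)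
          * ENNReal.ofReal (α * z ^ (-α - 1))
        = indicator (Ioi a)
            (fun z => ENNReal.ofReal (h (Θi ω')) * ENNReal.ofReal (α * z ^ (-α - 1))) z := by
      intro z hz
      have hz0 : (0:ℝ) < z := hz
      by_cases hza : a < z
      · have harg : (fun j => (z * Θi ω' j) / (z * Θi ω' i)) = Θi ω' := by
          funext j
          rw [hω', mul_one, mul_comm z (Θi ω' j), mul_div_assoc, div_self hz0.ne', mul_one]
        rw [indicator_of_mem
          (show (fun j => z * Θi ω' j) ∈ {x : Fin d → ℝ | a < x i} from by
            simp only [mem_setOf_eq, hω', mul_one]; exact hza),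
          indicator_of_mem (show z ∈ Ioi a from hza), hF]
        simp only
        rw [harg]
      · rw [indicator_of_notMem
          (show (fun j => z * Θi ω' j) ∉ {x : Fin d → ℝ | a < x i} from by
            simp only [mem_setOf_eq, hω', mul_one]; exact hza),
          indicator_of_notMem (show z ∉ Ioi a from hza), zero_mul]
    rw [setLIntegral_congr_fun measurableSet_Ioi hzeq,
      lintegral_indicator measurableSet_Ioi,
      Measure.restrict_restrict measurableSet_Ioi,
      inter_eq_left.mpr (Ioi_subset_Ioi ha.le),
      lintegral_const_mul _ hwmeas, lintegral_tail_rpow hα ha]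
  rw [lintegral_congr_ae hae,
    lintegral_mul_const _ (show Measurable fun ω' => ENNReal.ofReal (h (Θi ω')) from (h.continuous.measurable.comp hΘ).ennreal_ofReal),
    ← ofReal_integral_eq_lintegral_ofReal hint (ae_of_all _ fun ω' => hpos _),
    ← ENNReal.ofReal_mul hEnn, ← ENNReal.ofReal_mul hci, ← mul_assoc]

/-- the one-dimensional masses of `nuP`, via the moment hypothesis. -/
lemma nuP_mass {α : ℝ} (hα : 0 < α) {ci cj : ℝ} (hci : 0 < ci) (hcj : 0 ≤ cj) (μ' : Measure Ω')
    [IsProbabilityMeasure μ'] {Θi : Ω' → Fin d → ℝ} (hΘ : Measurable Θi) {j : Fin d}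
    (hΘnn : ∀ ω', 0 ≤ Θi ω' j)
    (hmomj : ∫⁻ ω', ENNReal.ofReal ((Θi ω' j) ^ α) ∂μ' = ENNReal.ofReal (cj / ci))
    {u : ℝ} (hu : 0 < u) :
    nuP α ci μ' Θi {x | u < x j} = ENNReal.ofReal (cj * u ^ (-α)) := by
  have hsmeas : MeasurableSet {x : Fin d → ℝ | u < x j} :=
    measurableSet_lt measurable_const (measurable_pi_apply j)
  have hwmeas : Measurable fun z : ℝ => ENNReal.ofReal (α * z ^ (-α - 1)) := by fun_prop
  rw [← lintegral_indicator_one hsmeas,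
    nuP_lintegral α ci μ' hΘ (measurable_one.indicator hsmeas)]
  have hinner : ∀ ω', (∫⁻ z in Ioi (0:ℝ),
      indicator {x : Fin d → ℝ | u < x j} (1 : (Fin d → ℝ) → ℝ≥0∞) (fun j' => z * Θi ω' j')
        * ENNReal.ofReal (α * z ^ (-α - 1)))
      = ENNReal.ofReal ((Θi ω' j) ^ α) * ENNReal.ofReal (u ^ (-α)) := by
    intro ω'
    rcases eq_or_lt_of_le (hΘnn ω') with hθ0 | hθpos
    · have hzeq : ∀ z ∈ Ioi (0:ℝ),
          indicator {x : Fin d → ℝ | u < x j} (1 : (Fin d → ℝ) → ℝ≥0∞) (fun j' => z * Θi ω' j')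
            * ENNReal.ofReal (α * z ^ (-α - 1)) = 0 := by
        intro z hz
        rw [indicator_of_notMem
          (show (fun j' => z * Θi ω' j') ∉ {x : Fin d → ℝ | u < x j} from by
            simp only [mem_setOf_eq, ← hθ0, mul_zero]; exact not_lt.mpr hu.le), zero_mul]
      rw [setLIntegral_congr_fun measurableSet_Ioi hzeq]
      simp [← hθ0, Real.zero_rpow hα.ne']
    · have hzeq : ∀ z ∈ Ioi (0:ℝ),
          indicator {x : Fin d → ℝ | u < x j} (1 : (Fin d → ℝ) → ℝ≥0∞) (fun j' => z * Θi ω' j')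
            * ENNReal.ofReal (α * z ^ (-α - 1))
          = indicator (Ioi (u / Θi ω' j))
              (fun z => ENNReal.ofReal (α * z ^ (-α - 1))) z := by
        intro z hz
        by_cases hcase : u / Θi ω' j < z
        · rw [indicator_of_mem
            (show (fun j' => z * Θi ω' j') ∈ {x : Fin d → ℝ | u < x j} from by
              simp only [mem_setOf_eq]
              exact (div_lt_iff₀ hθpos).mp hcase),
            indicator_of_mem (show z ∈ Ioi (u / Θi ω' j) from hcase)]
          simp
        · rw [indicator_of_notMem
            (show (fun j' => z * Θi ω' j') ∉ {x : Fin d → ℝ | u < x j} from by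
              simp only [mem_setOf_eq]
              intro hc
              exact hcase ((div_lt_iff₀ hθpos).mpr hc)),
            indicator_of_notMem (show z ∉ Ioi (u / Θi ω' j) from hcase), zero_mul]
      have hdiv : 0 < u / Θi ω' j := div_pos hu hθpos
      rw [setLIntegral_congr_fun measurableSet_Ioi hzeq,
        lintegral_indicator measurableSet_Ioi,
        Measure.restrict_restrict measurableSet_Ioi,
        inter_eq_left.mpr (Ioi_subset_Ioi hdiv.le),
        lintegral_tail_rpow hα hdiv,
        ← ENNReal.ofReal_mul (Real.rpow_nonneg hθpos.le _)]
      congr 1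
      rw [Real.div_rpow hu.le hθpos.le, Real.rpow_neg hθpos.le, div_eq_mul_inv, inv_inv, mul_comm]
  rw [lintegral_congr hinner,
    lintegral_mul_const _ (by fun_prop : Measurable fun ω' => ENNReal.ofReal ((Θi ω' j) ^ α)),
    hmomj, ← ENNReal.ofReal_mul (div_nonneg hcj hci.le),
    ← ENNReal.ofReal_mul hci.le]
  congr 1
  field_simp

end

section
variable {d : ℕ}

/-- Two measures concentrated on `{x | 0 < x i}`, finite above positive levels of the `i`-th
coordinate, agreeing on all "polar rectangles", are equal. -/
lemma restrict_ext (ν₁ ν₂ : Measure (Fin d → ℝ)) (i : Fin d)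
    (h1null : ν₁ {x | ¬ 0 < x i} = 0) (h2null : ν₂ {x | ¬ 0 < x i} = 0)
    (h1fin : ∀ a : ℝ, 0 < a → ν₁ {x | a < x i} ≠ ⊤)
    (h2fin : ∀ a : ℝ, 0 < a → ν₂ {x | a < x i} ≠ ⊤)
    (hK : ∀ (h : BoundedContinuousFunction (Fin d → ℝ) ℝ≥0) (a : ℝ), 0 < a →
      ∫⁻ x in {x | a < x i}, (h (fun j => x j / x i) : ℝ≥0∞) ∂ν₁
        = ∫⁻ x in {x | a < x i}, (h (fun j => x j / x i) : ℝ≥0∞) ∂ν₂) :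
    ν₁ = ν₂ := by
  set ang : (Fin d → ℝ) → (Fin d → ℝ) := fun x => fun j => x j / x i with hang
  have hangmeas : Measurable ang :=
    measurable_pi_lambda _ fun j => (measurable_pi_apply j).div (measurable_pi_apply i)
  set Φ : (Fin d → ℝ) → ℝ × (Fin d → ℝ) := fun x => ((x i)⁻¹, ang x) with hΦdef
  have hΦ : Measurable Φ := (measurable_pi_apply i).inv.prodMk hangmeas
  set Ψ : ℝ × (Fin d → ℝ) → (Fin d → ℝ) := fun p => fun j => p.1⁻¹ * p.2 j with hΨdef
  have hΨ : Measurable Ψ :=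
    measurable_pi_lambda _ fun j =>
      measurable_fst.inv.mul ((measurable_pi_apply j).comp measurable_snd)
  -- step 0: recovery of a concentrated measure from its polar image
  have recov : ∀ m : Measure (Fin d → ℝ), m {x | ¬ 0 < x i} = 0 →
      Measure.map Ψ (Measure.map Φ m) = m := by
    intro m hnull
    rw [Measure.map_map hΨ hΦ]
    have hae : Ψ ∘ Φ =ᵐ[m] id := by
      have hsub : {x : Fin d → ℝ | ¬ (Ψ ∘ Φ) x = x} ⊆ {x | ¬ 0 < x i} := by
        intro x hx
        simp only [mem_setOf_eq] at hx ⊢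
        intro hpos
        apply hx
        funext j
        show ((x i)⁻¹)⁻¹ * (x j / x i) = x j
        rw [inv_inv, mul_comm, div_mul_cancel₀ _ hpos.ne']
      exact measure_mono_null hsub hnull
    rw [Measure.map_congr hae, Measure.map_id]
  -- step 1: equality of the angular measures above each level
  have step1 : ∀ a : ℝ, 0 < a →
      Measure.map ang (ν₁.restrict {x | a < x i})
        = Measure.map ang (ν₂.restrict {x | a < x i}) := by
    intro a ha
    have hsmeas : MeasurableSet {x : Fin d → ℝ | a < x i} :=
      measurableSet_lt measurable_const (measurable_pi_apply i)
    haveI : IsFiniteMeasure (ν₁.restrict {x | a < x i}) :=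
      ⟨by rw [Measure.restrict_apply_univ]; exact (h1fin a ha).lt_top⟩
    haveI : IsFiniteMeasure (Measure.map ang (ν₁.restrict {x | a < x i})) :=
      Measure.isFiniteMeasure_map _ _
    apply ext_of_forall_lintegral_eq_of_IsFiniteMeasure
    intro f
    have hfm : Measurable fun y : Fin d → ℝ => (f y : ℝ≥0∞) :=
      measurable_coe_nnreal_ennreal.comp f.continuous.measurable
    rw [lintegral_map hfm hangmeas, lintegral_map hfm hangmeas]
    exact hK f a ha
  -- step 2: equality of the polar images
  have step2 : Measure.map Φ ν₁ = Measure.map Φ ν₂ := by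
    have hgen1 : (inferInstance : MeasurableSpace ℝ) = .generateFrom (range Iio) :=
      (BorelSpace.measurable_eq).trans (borel_eq_generateFrom_Iio ℝ)
    have hgen2 : (inferInstance : MeasurableSpace (Fin d → ℝ))
        = .generateFrom {s : Set (Fin d → ℝ) | MeasurableSet s} :=
      MeasurableSpace.generateFrom_measurableSet.symm
    have hspan1 : IsCountablySpanning (range (Iio : ℝ → Set ℝ)) :=
      ⟨fun n => Iio n, fun n => ⟨n, rfl⟩, by
        apply eq_univ_of_forall
        intro x
        obtain ⟨n, hn⟩ := exists_nat_gt x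
        exact mem_iUnion.mpr ⟨n, hn⟩⟩
    have hspan2 : IsCountablySpanning {s : Set (Fin d → ℝ) | MeasurableSet s} :=
      ⟨fun _ => univ, fun _ => by simp only [Set.mem_setOf_eq]; exact MeasurableSet.univ,
        iUnion_const _⟩
    have hgen : (inferInstance : MeasurableSpace (ℝ × (Fin d → ℝ)))
        = .generateFrom (image2 (· ×ˢ ·) (range (Iio : ℝ → Set ℝ))
            {s : Set (Fin d → ℝ) | MeasurableSet s}) := by
      conv_lhs => rw [show (inferInstance : MeasurableSpace (ℝ × (Fin d → ℝ)))
        = Prod.instMeasurableSpace from rfl]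
      rw [show (Prod.instMeasurableSpace : MeasurableSpace (ℝ × (Fin d → ℝ)))
        = @Prod.instMeasurableSpace _ _
            (MeasurableSpace.generateFrom (range Iio))
            (MeasurableSpace.generateFrom {s | MeasurableSet s}) by rw [← hgen1, ← hgen2]]
      exact generateFrom_prod_eq hspan1 hspan2
    apply Measure.ext_of_generateFrom_of_iUnion _ (fun n => Iio (n:ℝ) ×ˢ univ) hgen
    · -- π-system
      rintro _ ⟨_, ⟨r₁, rfl⟩, B₁, hB₁, rfl⟩ _ ⟨_, ⟨r₂, rfl⟩, B₂, hB₂, rfl⟩ _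
      rw [prod_inter_prod, Iio_inter_Iio]
      have hB₁' : MeasurableSet B₁ := hB₁
      have hB₂' : MeasurableSet B₂ := hB₂
      exact mem_image2_of_mem ⟨min r₁ r₂, rfl⟩ (hB₁'.inter hB₂')
    · -- covers
      apply eq_univ_of_forall
      intro p
      obtain ⟨n, hn⟩ := exists_nat_gt p.1
      exact mem_iUnion.mpr ⟨n, ⟨hn, trivial⟩⟩
    · -- in the π-system
      intro n
      exact mem_image2_of_mem ⟨(n:ℝ), rfl⟩ (by simp only [Set.mem_setOf_eq]; exact MeasurableSet.univ)
    · -- finite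
      intro n
      rw [Measure.map_apply hΦ ((measurableSet_Iio).prod MeasurableSet.univ)]
      have hpre : Φ ⁻¹' (Iio (n:ℝ) ×ˢ univ)
          ⊆ {x | ¬ 0 < x i} ∪ {x | ((n:ℝ)+1)⁻¹ < x i} := by
        intro x hx
        simp only [hΦdef, mem_preimage, mem_prod, mem_Iio] at hx
        by_cases hpos : 0 < x i
        · right
          have h1 : (x i)⁻¹ < (n:ℝ) + 1 := lt_of_lt_of_le hx.1 (by linarith)
          exact (inv_lt_comm₀ hpos (by positivity)).mp h1
        · left; exact hpos
      apply ne_top_of_le_ne_top _ (measure_mono hpre)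
      rw [← lt_top_iff_ne_top]
      apply lt_of_le_of_lt (measure_union_le _ _)
      rw [h1null]
      simpa using (h1fin ((n:ℝ)+1)⁻¹ (by positivity)).lt_top
    · -- equality on the π-system
      rintro _ ⟨_, ⟨r, rfl⟩, B, hBmem, rfl⟩
      have hB : MeasurableSet B := hBmem
      rw [Measure.map_apply hΦ (measurableSet_Iio.prod hB),
        Measure.map_apply hΦ (measurableSet_Iio.prod hB)]
      have hpre : Φ ⁻¹' (Iio r ×ˢ B) = {x | (x i)⁻¹ < r} ∩ ang ⁻¹' B := by
        ext x
        simp only [hΦdef, mem_preimage, mem_prod, mem_Iio, mem_inter_iff, mem_setOf_eq]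
      rw [hpre]
      rcases le_or_gt r 0 with hr | hr
      · -- empty modulo the null sets
        have hsub : ∀ m : Measure (Fin d → ℝ), m {x | ¬ 0 < x i} = 0 →
            m ({x | (x i)⁻¹ < r} ∩ ang ⁻¹' B) = 0 := by
          intro m hnull
          apply measure_mono_null _ hnull
          intro x hx
          simp only [mem_setOf_eq]
          intro hpos
          have hxr : (x i)⁻¹ < r := hx.1
          exact absurd (inv_pos.mpr hpos) (not_lt.mpr (hxr.le.trans hr))
        rw [hsub ν₁ h1null, hsub ν₂ h2null]
      · -- reduce to the angular measures at level r⁻¹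
        have hmod : ∀ m : Measure (Fin d → ℝ), m {x | ¬ 0 < x i} = 0 →
            m ({x | (x i)⁻¹ < r} ∩ ang ⁻¹' B)
              = Measure.map ang (m.restrict {x | r⁻¹ < x i}) B := by
          intro m hnull
          have hA2sub : ({x : Fin d → ℝ | r⁻¹ < x i} ∩ ang ⁻¹' B)
              ⊆ ({x | (x i)⁻¹ < r} ∩ ang ⁻¹' B) := by
            rintro x ⟨hx1, hx2⟩
            simp only [mem_setOf_eq] at hx1
            have hxpos : 0 < x i := lt_trans (inv_pos.mpr hr) hx1
            exact ⟨(inv_lt_comm₀ hr hxpos).mp hx1, hx2⟩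
          have hdiffsub : (({x | (x i)⁻¹ < r} ∩ ang ⁻¹' B) \
              ({x : Fin d → ℝ | r⁻¹ < x i} ∩ ang ⁻¹' B)) ⊆ {x | ¬ 0 < x i} := by
            rintro x ⟨⟨hx1, hx2⟩, hx3⟩
            simp only [mem_setOf_eq] at hx1 ⊢
            intro hxpos
            exact hx3 ⟨(inv_lt_comm₀ hxpos hr).mp hx1, hx2⟩
          have heq : m ({x | (x i)⁻¹ < r} ∩ ang ⁻¹' B)
              = m ({x : Fin d → ℝ | r⁻¹ < x i} ∩ ang ⁻¹' B) := by
            apply le_antisymm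
            · calc m ({x | (x i)⁻¹ < r} ∩ ang ⁻¹' B)
                  ≤ m (({x : Fin d → ℝ | r⁻¹ < x i} ∩ ang ⁻¹' B) ∪
                      (({x | (x i)⁻¹ < r} ∩ ang ⁻¹' B) \
                        ({x : Fin d → ℝ | r⁻¹ < x i} ∩ ang ⁻¹' B))) := by
                    apply measure_mono
                    intro x hx
                    by_cases hmem : x ∈ {x : Fin d → ℝ | r⁻¹ < x i} ∩ ang ⁻¹' B
                    · exact Or.inl hmem
                    · exact Or.inr ⟨hx, hmem⟩
                _ ≤ m ({x : Fin d → ℝ | r⁻¹ < x i} ∩ ang ⁻¹' B) + 0 := by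
                    apply le_trans (measure_union_le _ _)
                    apply add_le_add le_rfl
                    exact le_of_eq (measure_mono_null hdiffsub hnull)
                _ = m ({x : Fin d → ℝ | r⁻¹ < x i} ∩ ang ⁻¹' B) := add_zero _
            · exact measure_mono hA2sub
          rw [heq, Measure.map_apply hangmeas hB, Measure.restrict_apply (hangmeas hB),
            inter_comm]
        rw [hmod ν₁ h1null, hmod ν₂ h2null, step1 r⁻¹ (inv_pos.mpr hr)]
  calc ν₁ = Measure.map Ψ (Measure.map Φ ν₁) := (recov ν₁ h1null).symm
    _ = Measure.map Ψ (Measure.map Φ ν₂) := by rw [step2]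
    _ = ν₂ := recov ν₂ h2null

end

section
variable {d : ℕ} {Ω : Type*} [MeasurableSpace Ω]

/-- One-dimensional masses of the tail measure. -/
lemma nu_mass (μ : Measure Ω) [IsProbabilityMeasure μ] (X : Ω → Fin d → ℝ)
    (hXmeas : Measurable X) (I : Finset (Fin d)) (b : ℝ → ℝ) {α : ℝ}
    (hb : RegularlyVarying b α) (ν : Measure (Fin d → ℝ))
    (hν : IsTailMeasure μ X I b ν) {j : Fin d} (hjI : j ∈ I) {cj : ℝ} (hcj : 0 < cj)
    (htailj : Tendsto (fun t => b t * (μ {ω | t < X ω j}).toReal) atTop (𝓝 cj))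
    {u : ℝ} (hu : 0 < u) :
    ν {x | u < x j} = ENNReal.ofReal (cj * u ^ (-α)) := by
  have hXjmeas : Measurable fun ω => X ω j := (measurable_pi_apply j).comp hXmeas
  have hsetm : ∀ v : ℝ, MeasurableSet {x : Fin d → ℝ | v < x j} :=
    fun v => measurableSet_lt measurable_const (measurable_pi_apply j)
  have hfin : ∀ v : ℝ, 0 < v → ν {x | v < x j} ≠ ⊤ := by
    intro v hv
    refine (lt_of_le_of_lt (measure_mono ?_) (hν.1 v hv)).ne
    intro x hx
    exact ⟨j, hjI, le_of_lt hx⟩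
  -- Integrability of the test functions with respect to ν
  have hφint : ∀ v η : ℝ, 0 < v → 0 < η →
      Integrable (fun x : Fin d → ℝ => gfun v η (x j)) ν := by
    intro v η hv hη
    have hind : (fun x : Fin d → ℝ => gfun v η (x j))
        = indicator {x : Fin d → ℝ | v < x j} (fun x => gfun v η (x j)) := by
      funext x
      by_cases hx : v < x j
      · rw [indicator_of_mem (show x ∈ {x : Fin d → ℝ | v < x j} from hx)]
      · rw [indicator_of_notMem (show x ∉ {x : Fin d → ℝ | v < x j} from hx),
          gfun_of_le hη (not_lt.mp hx)]
    rw [hind, integrable_indicator_iff (hsetm v)]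
    apply Integrable.mono'
      (show IntegrableOn (fun _ => (1:ℝ)) {x : Fin d → ℝ | v < x j} ν from
        integrableOn_const (hfin v hv))
      ((continuous_gfun v η).comp (continuous_apply j)).aestronglyMeasurable.restrict
    apply ae_of_all
    intro x
    show ‖gfun v η (x j)‖ ≤ 1
    rw [Real.norm_eq_abs, abs_of_nonneg (gfun_nonneg _ _ _)]
    exact gfun_le_one _ _ _
  -- main sandwich for the ν-integrals of the test functions
  have main : ∀ v η : ℝ, 0 < v → 0 < η →
      cj * (v + η) ^ (-α) ≤ (∫ x, gfun v η (x j) ∂ν) ∧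
        (∫ x, gfun v η (x j) ∂ν) ≤ cj * v ^ (-α) := by
    intro v η hv hη
    set φf : (Fin d → ℝ) → ℝ := fun x => gfun v η (x j) with hφf
    have hφcont : Continuous φf := (continuous_gfun v η).comp (continuous_apply j)
    have hφbd : ∀ x, ‖φf x‖ ≤ 1 := by
      intro x
      rw [Real.norm_eq_abs, abs_of_nonneg (gfun_nonneg _ _ _)]
      exact gfun_le_one _ _ _
    set φ := BoundedContinuousFunction.ofNormedAddCommGroup φf hφcont 1 hφbd with hφ
    have hφcoe : ∀ x, φ x = gfun v η (x j) := fun x => rfl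
    have htend := hν.2.2 φ ⟨v, hv, fun x hx => by
      rw [hφcoe, gfun_of_le hη (hx j hjI)]⟩
    have htendν : Tendsto (fun t => b t * ∫ ω, gfun v η (X ω j / t) ∂μ) atTop
        (𝓝 (∫ x, gfun v η (x j) ∂ν)) := by
      have : (∫ x, φ x ∂ν) = ∫ x, gfun v η (x j) ∂ν := rfl
      rw [← this]
      exact htend
    have hgint : ∀ t : ℝ, Integrable (fun ω => gfun v η (X ω j / t)) μ := by
      intro t
      apply Integrable.mono' (integrable_const 1)
        ((continuous_gfun v η).measurable.comp (hXjmeas.div_const t)).aestronglyMeasurable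
      apply ae_of_all
      intro ω
      show ‖gfun v η (X ω j / t)‖ ≤ 1
      rw [Real.norm_eq_abs, abs_of_nonneg (gfun_nonneg _ _ _)]
      exact gfun_le_one _ _ _
    constructor
    · -- lower bound
      apply le_of_tendsto_of_tendsto
        (tailv μ (fun ω => X ω j) b hb htailj (by linarith : (0:ℝ) < v + η)) htendν
      filter_upwards [hb.1, eventually_gt_atTop (0:ℝ)] with t hbt ht
      apply mul_le_mul_of_nonneg_left _ hbt.le
      have hsm : MeasurableSet {ω | (v + η) * t < X ω j} :=
        measurableSet_lt measurable_const hXjmeas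
      rw [← measureReal_def, ← integral_indicator_one hsm]
      apply integral_mono ((integrable_const (1:ℝ)).indicator hsm) (hgint t)
      intro ω
      show indicator {ω | (v + η) * t < X ω j} (fun _ => (1:ℝ)) ω ≤ gfun v η (X ω j / t)
      by_cases hω : (v + η) * t < X ω j
      · rw [indicator_of_mem (show ω ∈ {ω | (v + η) * t < X ω j} from hω)]
        rw [gfun_of_ge hη (le_of_lt ((lt_div_iff₀ ht).mpr hω))]
      · rw [indicator_of_notMem (show ω ∉ {ω | (v + η) * t < X ω j} from hω)]
        exact gfun_nonneg _ _ _
    · -- upper bound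
      apply le_of_tendsto_of_tendsto htendν
        (tailv μ (fun ω => X ω j) b hb htailj hv)
      filter_upwards [hb.1, eventually_gt_atTop (0:ℝ)] with t hbt ht
      apply mul_le_mul_of_nonneg_left _ hbt.le
      have hsm : MeasurableSet {ω | v * t < X ω j} :=
        measurableSet_lt measurable_const hXjmeas
      rw [← measureReal_def, ← integral_indicator_one hsm]
      apply integral_mono (hgint t) ((integrable_const (1:ℝ)).indicator hsm)
      intro ω
      show gfun v η (X ω j / t) ≤ indicator {ω | v * t < X ω j} (fun _ => (1:ℝ)) ω
      by_cases hω : gfun v η (X ω j / t) = 0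
      · rw [hω]
        exact indicator_nonneg (fun _ _ => zero_le_one) ω
      · have hgt : v < X ω j / t := gfun_pos_arg hη hω
        rw [indicator_of_mem (show ω ∈ {ω | v * t < X ω j} from (lt_div_iff₀ ht).mp hgt)]
        exact gfun_le_one _ _ _
  -- comparison of the ν-integrals with the measure of the level set
  have hind_int : Integrable (indicator {x : Fin d → ℝ | u < x j} fun _ => (1:ℝ)) ν :=
    (integrable_indicator_iff (hsetm u)).mpr
      (integrableOn_const (hfin u hu))
  have hcmp : ∀ η : ℝ, 0 < η → η < u →
      cj * (u + η) ^ (-α) ≤ (ν {x | u < x j}).toReal ∧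
        (ν {x | u < x j}).toReal ≤ cj * (u - η) ^ (-α) := by
    intro η hη hηu
    obtain ⟨hlow, hup⟩ := main u η hu hη
    obtain ⟨hlow', hup'⟩ := main (u - η) η (by linarith) hη
    constructor
    · apply le_trans hlow
      rw [← measureReal_def, ← integral_indicator_one (hsetm u)]
      apply integral_mono (hφint u η hu hη) hind_int
      intro x
      show gfun u η (x j) ≤ indicator {x : Fin d → ℝ | u < x j} (fun _ => (1:ℝ)) x
      by_cases hx : u < x j
      · rw [indicator_of_mem (show x ∈ {x : Fin d → ℝ | u < x j} from hx)]
        exact gfun_le_one _ _ _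
      · rw [gfun_of_le hη (not_lt.mp hx)]
        exact indicator_nonneg (fun _ _ => zero_le_one) x
    · refine le_trans ?_ hup'
      rw [← measureReal_def, ← integral_indicator_one (hsetm u)]
      apply integral_mono hind_int (hφint (u - η) η (by linarith) hη)
      intro x
      show indicator {x : Fin d → ℝ | u < x j} (fun _ => (1:ℝ)) x ≤ gfun (u - η) η (x j)
      by_cases hx : u < x j
      · rw [indicator_of_mem (show x ∈ {x : Fin d → ℝ | u < x j} from hx),
          gfun_of_ge hη (by linarith : u - η + η ≤ x j)]
      · rw [indicator_of_notMem (show x ∉ {x : Fin d → ℝ | u < x j} from hx)]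
        exact gfun_nonneg _ _ _
  -- pass to the limit η → 0
  set ηn : ℕ → ℝ := fun n => u / (2 * (n + 1)) with hηn
  have hηnpos : ∀ n, 0 < ηn n := fun n => by positivity
  have hηnlt : ∀ n, ηn n < u := by
    intro n
    rw [hηn]
    simp only
    rw [div_lt_iff₀ (by positivity)]
    nlinarith [Nat.cast_nonneg (α := ℝ) n]
  have hηn0 : Tendsto ηn atTop (𝓝 0) := by
    have h0 := tendsto_one_div_add_atTop_nhds_zero_nat (𝕜 := ℝ)
    have h1 := h0.const_mul (u / 2)
    rw [mul_zero] at h1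
    apply h1.congr
    intro n
    rw [hηn]
    simp only
    field_simp
  have hcont : ∀ s : ℕ → ℝ, Tendsto s atTop (𝓝 u) →
      Tendsto (fun n => cj * (s n) ^ (-α)) atTop (𝓝 (cj * u ^ (-α))) := by
    intro s hs
    exact (((Real.continuousAt_rpow_const u (-α) (Or.inl hu.ne')).tendsto.comp
      hs).const_mul cj)
  have hplus : Tendsto (fun n : ℕ => cj * (u + ηn n) ^ (-α)) atTop (𝓝 (cj * u ^ (-α))) := by
    apply hcont
    have := tendsto_const_nhds.add hηn0 (f := fun _ : ℕ => u) (x := atTop)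
    simpa using this
  have hminus : Tendsto (fun n : ℕ => cj * (u - ηn n) ^ (-α)) atTop (𝓝 (cj * u ^ (-α))) := by
    apply hcont
    have : Tendsto (fun n : ℕ => u - ηn n) atTop (𝓝 (u - 0)) :=
      Tendsto.sub (show Tendsto (fun _ : ℕ => u) atTop (𝓝 u) from tendsto_const_nhds) hηn0
    simpa using this
  have h1 : cj * u ^ (-α) ≤ (ν {x | u < x j}).toReal :=
    le_of_tendsto_of_tendsto hplus tendsto_const_nhds
      (Eventually.of_forall fun n => (hcmp (ηn n) (hηnpos n) (hηnlt n)).1)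
  have h2 : (ν {x | u < x j}).toReal ≤ cj * u ^ (-α) :=
    le_of_tendsto_of_tendsto tendsto_const_nhds hminus
      (Eventually.of_forall fun n => (hcmp (ηn n) (hηnpos n) (hηnlt n)).2)
  rw [← ENNReal.ofReal_toReal (hfin u hu), le_antisymm h2 h1]

end

/-- Corollary `cor:justk`, equation `eq:Thk2nu`: if
`E[Θ_{i,j}^α] = c_j/c_i` for all `j ∈ I`, then the tail measure is reconstructed from the
single limit `Θ_i` via `ν(f) = c_i E[∫_0^∞ f(z Θ_i) α z^{-α-1} dz]`. -/
theorem tail_measure_from_single_root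
    {d : ℕ} {Ω : Type*} [MeasurableSpace Ω] (μ : Measure Ω) [IsProbabilityMeasure μ]
    (X : Ω → Fin d → ℝ) (hXmeas : Measurable X) (hXnn : ∀ ω i, 0 ≤ X ω i)
    (I : Finset (Fin d)) (hI : I.Nonempty)
    (b : ℝ → ℝ) (α : ℝ) (hα : 0 < α) (hb : RegularlyVarying b α)
    (c : Fin d → ℝ) (hc : ∀ i ∈ I, 0 < c i)
    (htail : ∀ i ∈ I,
      Tendsto (fun t => b t * (μ {ω | t < X ω i}).toReal) atTop (𝓝 (c i)))
    {Ω' : Type*} [MeasurableSpace Ω'] (μ' : Measure Ω') [IsProbabilityMeasure μ']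
    (Θ : Fin d → Ω' → Fin d → ℝ) (hΘmeas : ∀ i, Measurable (Θ i))
    (hΘnn : ∀ i ω' j, 0 ≤ Θ i ω' j)
    (hΘii : ∀ i ∈ I, ∀ᵐ ω' ∂μ', Θ i ω' i = 1)
    (hconv : ∀ i ∈ I, ∀ f : BoundedContinuousFunction (Fin d → ℝ) ℝ,
      Tendsto (fun t => ∫ ω, f (fun j => X ω j / X ω i) ∂(μ[|{ω | t < X ω i}])) atTop
        (𝓝 (∫ ω', f (Θ i ω') ∂μ')))
    (ν : Measure (Fin d → ℝ)) (hν : IsTailMeasure μ X I b ν)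
    (i : Fin d) (hiI : i ∈ I)
    (hmom : ∀ j ∈ I, ∫⁻ ω', ENNReal.ofReal ((Θ i ω' j) ^ α) ∂μ'
      = ENNReal.ofReal (c j / c i)) :
    ∀ f : (Fin d → ℝ) → ℝ≥0∞, Measurable f →
      ∫⁻ x in {x | ∃ k ∈ I, 0 < x k}, f x ∂ν
        = ENNReal.ofReal (c i) *
          ∫⁻ ω', (∫⁻ z in Set.Ioi (0:ℝ),
            f (fun j => z * Θ i ω' j) * ENNReal.ofReal (α * z ^ (-α - 1))) ∂μ' := by
  intro f hf
  have hci : 0 < c i := hc i hiI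
  set ν' : Measure (Fin d → ℝ) := nuP α (c i) μ' (Θ i) with hν'def
  have hposmeas : MeasurableSet {x : Fin d → ℝ | 0 < x i} :=
    measurableSet_lt measurable_const (measurable_pi_apply i)
  have hlevelmeas : ∀ (j : Fin d) (a : ℝ), MeasurableSet {x : Fin d → ℝ | a < x j} :=
    fun j a => measurableSet_lt measurable_const (measurable_pi_apply j)
  have hνfin : ∀ (j : Fin d), j ∈ I → ∀ a : ℝ, 0 < a → ν {x | a < x j} ≠ ⊤ := by
    intro j hjI a ha
    refine (lt_of_le_of_lt (measure_mono ?_) (hν.1 a ha)).ne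
    intro x hx
    exact ⟨j, hjI, le_of_lt hx⟩
  -- the Lipschitz coercion from ℝ≥0-valued test functions
  have lip : LipschitzWith 1 (NNReal.toReal) := by
    apply LipschitzWith.of_dist_le_mul
    intro a b
    rw [NNReal.coe_one, one_mul, Real.dist_eq, NNReal.dist_eq]
  -- the restricted tail measure coincides with the candidate measure
  have hrestrEq : ν.restrict {x | 0 < x i} = ν' := by
    apply restrict_ext _ _ i
    · rw [Measure.restrict_apply (show MeasurableSet {x : Fin d → ℝ | ¬ 0 < x i} from hposmeas.compl)]
      have : {x : Fin d → ℝ | ¬ 0 < x i} ∩ {x | 0 < x i} = ∅ := by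
        ext x
        simp only [mem_inter_iff, mem_setOf_eq, mem_empty_iff_false, iff_false, not_and]
        exact fun h1 h2 => h1 h2
      rw [show {x : Fin d → ℝ | ¬ 0 < x i} = {x : Fin d → ℝ | ¬ 0 < x i} from rfl, this,
        measure_empty]
    · exact nuP_null (c i) μ' (hΘmeas i) (hΘii i hiI)
    · intro a ha
      rw [Measure.restrict_apply (hlevelmeas i a)]
      exact ne_top_of_le_ne_top (hνfin i hiI a ha) (measure_mono inter_subset_left)
    · intro a ha
      rw [hν'def,
        nuP_mass hα hci hci.le μ' (hΘmeas i) (fun ω' => hΘnn i ω' i) (hmom i hiI) ha]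
      exact ENNReal.ofReal_ne_top
    · intro h a ha
      set hR : BoundedContinuousFunction (Fin d → ℝ) ℝ :=
        BoundedContinuousFunction.comp NNReal.toReal lip h with hRdef
      have hRcoe : ∀ x, hR x = (h x : ℝ) := fun x => rfl
      have hRpos : ∀ x, 0 ≤ hR x := fun x => (h x).coe_nonneg
      have hsub : {x : Fin d → ℝ | a < x i} ⊆ {x | 0 < x i} :=
        fun x hx => lt_trans ha hx
      have hcoeint : ∀ (m : Measure (Fin d → ℝ)),
          ∫⁻ x in {x | a < x i}, (h (fun j => x j / x i) : ℝ≥0∞) ∂m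
            = ∫⁻ x in {x | a < x i}, ENNReal.ofReal (hR (fun j => x j / x i)) ∂m := by
        intro m
        apply lintegral_congr
        intro x
        rw [hRcoe, ENNReal.ofReal_coe_nnreal]
      rw [hcoeint, hcoeint]
      have hrw : ∫⁻ x in {x | a < x i}, ENNReal.ofReal (hR (fun j => x j / x i))
            ∂(ν.restrict {x | 0 < x i})
          = ∫⁻ x in {x | a < x i}, ENNReal.ofReal (hR (fun j => x j / x i)) ∂ν := by
        rw [Measure.restrict_restrict (hlevelmeas i a), inter_eq_left.mpr hsub]
      rw [hrw,
        keyNu μ X hXmeas I b hα hb ν hν hiI hci (htail i hiI) hR hRpos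
          (hconv i hiI hR) ha,
        keyNuP hα hci.le μ' (hΘmeas i) (hΘii i hiI) hR hRpos ha]
  -- the exceptional set is null
  have hstepB : ν ({x | ∃ k ∈ I, 0 < x k} \ {x | 0 < x i}) = 0 := by
    have hDnull : ∀ j ∈ I, ∀ n : ℕ,
        ν ({x | (1/(n+1) : ℝ) < x j} \ {x | 0 < x i}) = 0 := by
      intro j hjI n
      set u : ℝ := 1/(n+1) with hu
      have hupos : 0 < u := by positivity
      have hm1 : ν {x | u < x j} = ENNReal.ofReal (c j * u ^ (-α)) :=
        nu_mass μ X hXmeas I b hb ν hν hjI (hc j hjI) (htail j hjI) hupos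
      have hm2 : ν' {x | u < x j} = ENNReal.ofReal (c j * u ^ (-α)) :=
        nuP_mass hα hci (hc j hjI).le μ' (hΘmeas i)
          (fun ω' => hΘnn i ω' j) (hmom j hjI) hupos
      have hinter : ν ({x | u < x j} ∩ {x | 0 < x i}) = ENNReal.ofReal (c j * u ^ (-α)) := by
        rw [← Measure.restrict_apply (hlevelmeas j u), hrestrEq]
        exact hm2
      have hsum := measure_inter_add_diff {x : Fin d → ℝ | u < x j} hposmeas (μ := ν)
      rw [hinter, hm1] at hsum
      have hne : ENNReal.ofReal (c j * u ^ (-α)) ≠ ⊤ := ENNReal.ofReal_ne_top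
      nth_rewrite 2 [← add_zero (ENNReal.ofReal (c j * u ^ (-α)))] at hsum
      exact (ENNReal.add_right_inj hne).mp hsum
    apply measure_mono_null
      (show ({x : Fin d → ℝ | ∃ k ∈ I, 0 < x k} \ {x | 0 < x i})
        ⊆ ⋃ j ∈ (I : Set (Fin d)), ⋃ n : ℕ, ({x | (1/(n+1) : ℝ) < x j} \ {x | 0 < x i})
        from ?_) ?_
    · rintro x ⟨⟨j, hjI, hxj⟩, hni⟩
      obtain ⟨n, hn⟩ := exists_nat_one_div_lt hxj
      have hmem : x ∈ ({y : Fin d → ℝ | (1/(n+1) : ℝ) < y j} \ {y | 0 < y i}) :=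
        ⟨hn, hni⟩
      exact mem_iUnion₂.mpr ⟨j, hjI, mem_iUnion.mpr ⟨n, hmem⟩⟩
    · rw [measure_biUnion_null_iff I.countable_toSet]
      intro j hjI
      exact measure_iUnion_null (hDnull j hjI)
  -- final assembly
  have hSeq : {x : Fin d → ℝ | ∃ k ∈ I, 0 < x k} =ᵐ[ν] {x : Fin d → ℝ | 0 < x i} := by
    rw [ae_eq_set]
    constructor
    · exact hstepB
    · have hempty : ({x : Fin d → ℝ | 0 < x i} \ {x | ∃ k ∈ I, 0 < x k}) = ∅ :=
        diff_eq_empty.mpr (fun x hx => ⟨i, hiI, hx⟩)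
      rw [hempty]
      exact measure_empty
  rw [setLIntegral_congr hSeq,
    show ∫⁻ x in {x : Fin d → ℝ | 0 < x i}, f x ∂ν
      = ∫⁻ x, f x ∂(ν.restrict {x | 0 < x i}) from rfl,
    hrestrEq]
  exact nuP_lintegral α (c i) μ' (hΘmeas i) hf
end

section
/- Let Z_1,…,Z_s be independent, identically distributed nonnegative random variables whose common tail function F̄(t)=P(Z_1>t) is regularly varying at infinity with index −α<0, and let a_{i,r}∈[0,∞) for i∈{1,…,d}, r∈{1,…,s} satisfy max_r a_{i,r}>0 for every i. Define the max-linear random vector X=(X_1,…,X_d) by X_i = max_{r=1,…,s} a_{i,r} Z_r. Then: (1) for every i, lim_{t→∞} P(X_i>t)/F̄(t) = c_i := Σ_{r=1}^s a_{i,r}^α; and (2) for every i, the conditional law of X/X_i given {X_i>t} converges weakly as t→∞ to the discrete law Θ_i = (1/c_i) Σ_{r=1}^s a_{i,r}^α δ_{θ^{(r)}}, where δ denotes a unit point mass and θ^{(r)} is the vector with coordinates θ^{(r)}_j = a_{j,r}/a_{i,r} for j=1,…,d (the sum running over r with a_{i,r}>0). -/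
open MeasureTheory ProbabilityTheory Filter Topology
open scoped ENNReal

section Aux

variable {s : ℕ} [NeZero s] {Ω : Type*} [MeasurableSpace Ω] (μ : Measure Ω)
  [IsProbabilityMeasure μ]

lemma mlt_tail_eq (Z : Fin s → Ω → ℝ) (hZmeas : ∀ r, Measurable (Z r))
    (hZid : ∀ r : Fin s, μ.map (Z r) = μ.map (Z 0)) (r : Fin s) (u : ℝ) :
    μ {ω | u < Z r ω} = μ {ω | u < Z 0 ω} := by
  have h1 : {ω | u < Z r ω} = Z r ⁻¹' (Set.Ioi u) := rfl
  have h2 : {ω | u < Z 0 ω} = Z 0 ⁻¹' (Set.Ioi u) := rfl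
  rw [h1, h2, ← Measure.map_apply (hZmeas r) measurableSet_Ioi,
    ← Measure.map_apply (hZmeas 0) measurableSet_Ioi, hZid r]

lemma mlt_Fbar_tendsto_zero (Z0 : Ω → ℝ) (hm : Measurable Z0) :
    Tendsto (fun t => (μ {ω | t < Z0 ω}).toReal) atTop (𝓝 0) := by
  have h : Tendsto (fun t : ℝ => μ {ω | t < Z0 ω}) atTop (𝓝 (μ (⋂ t : ℝ, {ω | t < Z0 ω}))) :=
    tendsto_measure_iInter_atTop
      (fun t => (hm measurableSet_Ioi).nullMeasurableSet)
      (fun t u htu ω hω => lt_of_le_of_lt htu hω)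
      ⟨0, measure_ne_top μ _⟩
  have he : (⋂ t : ℝ, {ω | t < Z0 ω}) = ∅ := by
    ext ω
    simp only [Set.mem_iInter, Set.mem_setOf_eq, Set.mem_empty_iff_false, iff_false, not_forall,
      not_lt]
    exact ⟨Z0 ω, le_rfl⟩
  rw [he, measure_empty] at h
  have := (ENNReal.tendsto_toReal (by simp : (0:ℝ≥0∞) ≠ ∞)).comp h
  simpa [Function.comp_def] using this

lemma mlt_scaled_tail (Z : Fin s → Ω → ℝ) (hZmeas : ∀ r, Measurable (Z r))
    (hZid : ∀ r : Fin s, μ.map (Z r) = μ.map (Z 0)) (α : ℝ)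
    (hFbar : RegularlyVarying (fun t => (μ {ω | t < Z 0 ω}).toReal) (-α))
    (r : Fin s) {b : ℝ} (hb : 0 < b) :
    Tendsto (fun t => (μ {ω | t < b * Z r ω}).toReal / (μ {ω | t < Z 0 ω}).toReal)
      atTop (𝓝 (b ^ α)) := by
  have key : ∀ t : ℝ, {ω | t < b * Z r ω} = {ω | b⁻¹ * t < Z r ω} := by
    intro t; ext ω
    simp only [Set.mem_setOf_eq]
    rw [inv_mul_lt_iff₀ hb]
  have h := hFbar.2 b⁻¹ (inv_pos.2 hb)
  have hval : (b⁻¹) ^ (-α) = b ^ α := by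
    rw [Real.rpow_neg (inv_nonneg.2 hb.le), Real.inv_rpow hb.le, inv_inv]
  rw [hval] at h
  refine h.congr fun t => ?_
  rw [key t, mlt_tail_eq μ Z hZmeas hZid r]

set_option maxHeartbeats 1000000 in
lemma mlt_core
    (Z : Fin s → Ω → ℝ) (hZmeas : ∀ r, Measurable (Z r)) (hZnn : ∀ r ω, 0 ≤ Z r ω)
    (hZindep : iIndepFun Z μ)
    (hZid : ∀ r : Fin s, μ.map (Z r) = μ.map (Z 0))
    (α : ℝ) (hα : 0 < α)
    (hFbar : RegularlyVarying (fun t => (μ {ω | t < Z 0 ω}).toReal) (-α))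
    (a : Fin d → Fin s → ℝ) (hann : ∀ i r, 0 ≤ a i r)
    (X : Ω → Fin d → ℝ)
    (hX : ∀ ω i, X ω i = Finset.univ.sup' Finset.univ_nonempty (fun r => a i r * Z r ω))
    (i : Fin d) (f : (Fin d → ℝ) → ℝ) (hf : Continuous f) (Cf : ℝ)
    (hCf : ∀ x, |f x| ≤ Cf) :
    Tendsto (fun t => (∫ ω in {ω | t < X ω i}, f (fun j => X ω j / X ω i) ∂μ) /
        (μ {ω | t < Z 0 ω}).toReal) atTop
      (𝓝 (∑ r : Fin s, (a i r) ^ α * f (fun j => a j r / a i r))) := by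
  classical
  set Fb : ℝ → ℝ := fun t => (μ {ω | t < Z 0 ω}).toReal with hFb_def
  set g : Ω → ℝ := fun ω => f (fun j => X ω j / X ω i) with hg_def
  set θ : Fin s → (Fin d → ℝ) := fun r j => a j r / a i r with hθ_def
  set M : ℝ := 1 + ∑ r, (a i r + ∑ j, a j r) with hM_def
  set B : Fin s → ℝ → ℝ → Set Ω := fun r t K =>
    ⋂ r', Z r' ⁻¹' (if r' = r then {x | t < a i r * x} else Set.Iic K) with hB_def
  set q : ℝ → ℝ := fun K => (1 - Fb K) ^ (s - 1) with hq_def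
  -- basic facts
  have hXm : ∀ j, Measurable (fun ω => X ω j) := by
    intro j
    have hXe : (fun ω => X ω j) =
        Finset.univ.sup' Finset.univ_nonempty (fun r => fun ω => a j r * Z r ω) := by
      funext ω
      rw [hX ω j, Finset.sup'_apply]
    rw [hXe]
    exact Finset.measurable_sup' _ fun r _ => (measurable_const.mul (hZmeas r))
  have hgm : Measurable g :=
    hf.measurable.comp (measurable_pi_lambda _ fun j => (hXm j).div (hXm i))
  have hgi : Integrable g μ :=
    ⟨hgm.aestronglyMeasurable,
      HasFiniteIntegral.of_bounded (C := Cf)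
        (Eventually.of_forall fun ω => by simpa [Real.norm_eq_abs] using hCf _)⟩
  have hCf0 : 0 ≤ Cf := le_trans (abs_nonneg _) (hCf fun _ => 0)
  have hFbnn : ∀ t, 0 ≤ Fb t := fun t => ENNReal.toReal_nonneg
  have hFble1 : ∀ t, Fb t ≤ 1 := by
    intro t
    have h1 : μ {ω | t < Z 0 ω} ≤ 1 := prob_le_one
    simpa using ENNReal.toReal_mono ENNReal.one_ne_top h1
  have hFb0 : Tendsto Fb atTop (𝓝 0) := mlt_Fbar_tendsto_zero μ (Z 0) (hZmeas 0)
  have hFbpos : ∀ᶠ t in atTop, 0 < Fb t := hFbar.1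
  have haM : ∀ j r, a j r ≤ M := by
    intro j r
    have h1 : a j r ≤ ∑ j', a j' r :=
      Finset.single_le_sum (fun j' _ => hann j' r) (Finset.mem_univ j)
    have h2 : a i r + ∑ j', a j' r ≤ ∑ r', (a i r' + ∑ j', a j' r') :=
      Finset.single_le_sum
        (fun r' _ => add_nonneg (hann i r') (Finset.sum_nonneg fun j' _ => hann j' r'))
        (Finset.mem_univ r)
    have h3 : 0 ≤ a i r := hann i r
    simp only [hM_def]
    linarith
  have hM1 : 1 ≤ M := by
    have : 0 ≤ ∑ r', (a i r' + ∑ j', a j' r') :=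
      Finset.sum_nonneg fun r' _ =>
        add_nonneg (hann i r') (Finset.sum_nonneg fun j' _ => hann j' r')
    simp only [hM_def]; linarith
  have hM0 : 0 < M := lt_of_lt_of_le one_pos hM1
  -- measurability of the pieces
  have hAmeas : ∀ t : ℝ, MeasurableSet {ω | t < X ω i} := fun t =>
    measurableSet_lt measurable_const (hXm i)
  have hSSmeas : ∀ (r r' : Fin s) (t K : ℝ),
      MeasurableSet (if r' = r then {x : ℝ | t < a i r * x} else Set.Iic K) := by
    intro r r' t K
    by_cases h : r' = r
    · simp only [h, if_pos rfl]
      exact measurableSet_lt measurable_const (measurable_const_mul _)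
    · simp only [if_neg h]
      exact measurableSet_Iic
  have hBmeas : ∀ r t K, MeasurableSet (B r t K) := fun r t K =>
    MeasurableSet.iInter fun r' => (hZmeas r') (hSSmeas r r' t K)
  -- membership facts
  have hBtail : ∀ r t K, B r t K ⊆ {ω | t < a i r * Z r ω} := by
    intro r t K ω hω
    have := Set.mem_iInter.1 hω r
    simpa using this
  have hBZK : ∀ r t K ω, ω ∈ B r t K → ∀ r', r' ≠ r → Z r' ω ≤ K := by
    intro r t K ω hω r' hr'
    have := Set.mem_iInter.1 hω r'
    simpa [if_neg hr'] using this
  have hBsub : ∀ r t K, B r t K ⊆ {ω | t < X ω i} := by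
    intro r t K ω hω
    have h1 : t < a i r * Z r ω := hBtail r t K hω
    have h2 : a i r * Z r ω ≤ X ω i := by
      rw [hX ω i]
      exact Finset.le_sup' (fun r' => a i r' * Z r' ω) (Finset.mem_univ r)
    exact lt_of_lt_of_le h1 h2
  -- disjointness for large t
  have hdisj : ∀ K t : ℝ, 0 < K → M * K ≤ t →
      Set.Pairwise (Finset.univ : Finset (Fin s)) (Function.onFun Disjoint fun r => B r t K) := by
    intro K t hK hMK r _ r' _ hrr'
    simp only [Function.onFun, Set.disjoint_left]
    intro ω hω hω'
    have h1 : t < a i r * Z r ω := hBtail r t K hω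
    have h2 : Z r ω ≤ K := hBZK r' t K ω hω' r (by exact hrr')
    have h3 : a i r * Z r ω ≤ M * K :=
      mul_le_mul (haM i r) h2 (hZnn r ω) hM0.le
    linarith
  -- geometry: on B r t K the ratio vector is close to θ r
  have hgeo : ∀ K r t, 0 < K → 0 < a i r → 0 < t → M * K ≤ t →
      ∀ ω ∈ B r t K, dist (fun j => X ω j / X ω i) (θ r) ≤ M * K / t := by
    intro K r t hK har ht hMK ω hω
    have htr : t < a i r * Z r ω := hBtail r t K hω
    have hZr : 0 < Z r ω := by nlinarith [hZnn r ω]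
    have hothers : ∀ r', r' ≠ r → ∀ j, a j r' * Z r' ω ≤ M * K := fun r' hr' j =>
      mul_le_mul (haM j r') (hBZK r t K ω hω r' hr') (hZnn r' ω) hM0.le
    have hXi : X ω i = a i r * Z r ω := by
      rw [hX ω i]
      apply le_antisymm
      · apply Finset.sup'_le
        intro r'' _
        by_cases h : r'' = r
        · subst h; exact le_rfl
        · exact le_trans (hothers r'' h i) (le_trans hMK htr.le)
      · exact Finset.le_sup' (fun r' => a i r' * Z r' ω) (Finset.mem_univ r)
    have hXipos : 0 < X ω i := by rw [hXi]; linarith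
    have hMKt : 0 ≤ M * K / t := div_nonneg (by positivity) ht.le
    rw [show (fun j => X ω j / X ω i) = fun j => X ω j / X ω i from rfl]
    refine (dist_pi_le_iff hMKt).2 fun j => ?_
    have hXjlow : a j r * Z r ω ≤ X ω j := by
      rw [hX ω j]
      exact Finset.le_sup' (fun r' => a j r' * Z r' ω) (Finset.mem_univ r)
    have hXjup : X ω j ≤ a j r * Z r ω + M * K := by
      rw [hX ω j]
      apply Finset.sup'_le
      intro r'' _
      by_cases h : r'' = r
      · subst h; nlinarith
      · have := hothers r'' h j
        nlinarith [mul_nonneg (hann j r) (hZnn r ω)]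
    have hiZpos : 0 < a i r * Z r ω := mul_pos har hZr
    have hlow : θ r j ≤ X ω j / X ω i := by
      rw [hXi]
      have h0 : θ r j = (a j r * Z r ω) / (a i r * Z r ω) := by
        simp only [hθ_def]; rw [mul_div_mul_right _ _ hZr.ne']
      rw [h0]
      exact (div_le_div_iff_of_pos_right hiZpos).2 hXjlow
    have hup : X ω j / X ω i ≤ θ r j + M * K / t := by
      have h1 : X ω j / X ω i ≤ (a j r * Z r ω + M * K) / X ω i :=
        (div_le_div_iff_of_pos_right hXipos).2 hXjup
      have h2 : (a j r * Z r ω + M * K) / X ω i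
          = a j r / a i r + M * K / X ω i := by
        rw [add_div, hXi, mul_div_mul_right _ _ hZr.ne']
      have h3 : M * K / X ω i ≤ M * K / t := by
        apply div_le_div_of_nonneg_left (by positivity) ht
        rw [hXi]; linarith
      rw [h2] at h1
      simp only [hθ_def]
      linarith
    rw [Real.dist_eq, abs_le]
    constructor <;> simp only [hθ_def] at hlow hup ⊢ <;> linarith
  -- measure of B
  have hIic : ∀ (r' : Fin s) (K : ℝ), (μ (Z r' ⁻¹' Set.Iic K)).toReal = 1 - Fb K := by
    intro r' K
    have hset : Z r' ⁻¹' Set.Iic K = {ω | K < Z r' ω}ᶜ := by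
      ext ω; simp [not_lt]
    rw [hset, measure_compl (measurableSet_lt measurable_const (hZmeas r')) (measure_ne_top μ _), measure_univ,
      mlt_tail_eq μ Z hZmeas hZid r' K,
      ENNReal.toReal_sub_of_le prob_le_one ENNReal.one_ne_top]
    simp [hFb_def]
  have hBval : ∀ (r : Fin s) (t K : ℝ),
      (μ (B r t K)).toReal = (μ {ω | t < a i r * Z r ω}).toReal * q K := by
    intro r t K
    have hprod : μ (B r t K) = ∏ r', μ (Z r' ⁻¹'
        (if r' = r then {x : ℝ | t < a i r * x} else Set.Iic K)) := by
      exact hZindep.meas_iInter fun r' => ⟨_, hSSmeas r r' t K, rfl⟩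
    have hsplit : ∏ r', μ (Z r' ⁻¹'
        (if r' = r then {x : ℝ | t < a i r * x} else Set.Iic K)) =
        μ (Z r ⁻¹' {x : ℝ | t < a i r * x}) *
          ∏ r' ∈ Finset.univ.erase r, μ (Z r' ⁻¹' Set.Iic K) := by
      rw [← Finset.mul_prod_erase Finset.univ _ (Finset.mem_univ r)]
      congr 1
      · rw [if_pos rfl]
      · apply Finset.prod_congr rfl
        intro r' hr'
        rw [if_neg (Finset.ne_of_mem_erase hr')]
    rw [hprod, hsplit, ENNReal.toReal_mul]
    congr 1
    rw [ENNReal.toReal_prod]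
    have : ∀ r' ∈ Finset.univ.erase r, (μ (Z r' ⁻¹' Set.Iic K)).toReal = 1 - Fb K :=
      fun r' _ => hIic r' K
    rw [Finset.prod_congr rfl this, Finset.prod_const, hq_def]
    congr 1
    rw [Finset.card_erase_of_mem (Finset.mem_univ r), Finset.card_univ, Fintype.card_fin]
  -- tail ratio limits
  have htail_lim : ∀ r : Fin s, 0 < a i r →
      Tendsto (fun t => (μ {ω | t < a i r * Z r ω}).toReal / Fb t) atTop
        (𝓝 ((a i r) ^ α)) := fun r har =>
    mlt_scaled_tail μ Z hZmeas hZid α hFbar r har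
  have htail0 : ∀ r : Fin s, a i r = 0 → ∀ t : ℝ, 0 < t →
      {ω | t < a i r * Z r ω} = ∅ := by
    intro r har t ht
    ext ω
    simp [har, not_lt, ht.le]
  have hBlim : ∀ (K : ℝ) (r : Fin s), 0 < a i r →
      Tendsto (fun t => (μ (B r t K)).toReal / Fb t) atTop (𝓝 ((a i r) ^ α * q K)) := by
    intro K r har
    have h1 : ∀ t, (μ (B r t K)).toReal / Fb t =
        (μ {ω | t < a i r * Z r ω}).toReal / Fb t * q K := by
      intro t; rw [hBval r t K, mul_div_right_comm]
    simp only [h1]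
    exact (htail_lim r har).mul_const _
  -- q limits
  have hq01 : ∀ K, 0 ≤ q K ∧ q K ≤ 1 := by
    intro K
    constructor
    · apply pow_nonneg; linarith [hFble1 K]
    · apply pow_le_one₀ (by linarith [hFble1 K]) (by linarith [hFbnn K])
  have hqlim : Tendsto q atTop (𝓝 1) := by
    have h1 : Tendsto (fun K => 1 - Fb K) atTop (𝓝 1) := by
      simpa using (tendsto_const_nhds.sub hFb0 :
        Tendsto (fun K => (1:ℝ) - Fb K) atTop (𝓝 (1 - 0)))
    have := h1.pow (s - 1)
    simpa [hq_def] using this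
  -- integral over B limit
  have hIB : ∀ K : ℝ, 0 < K → ∀ r : Fin s,
      Tendsto (fun t => (∫ ω in B r t K, g ω ∂μ) / Fb t) atTop
        (𝓝 ((a i r) ^ α * q K * f (θ r))) := by
    intro K hK r
    by_cases har : 0 < a i r
    swap
    · -- zero coefficient: B is eventually empty
      have har0 : a i r = 0 := le_antisymm (not_lt.1 har) (hann i r)
      have hlim0 : (a i r : ℝ) ^ α * q K * f (θ r) = 0 := by
        rw [har0, Real.zero_rpow hα.ne', zero_mul, zero_mul]
      rw [hlim0]
      apply Tendsto.congr' _ tendsto_const_nhds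
      filter_upwards [eventually_gt_atTop (0:ℝ)] with t ht
      have hBempty : B r t K = ∅ := by
        apply Set.eq_empty_of_subset_empty
        rw [← htail0 r har0 t ht]
        exact hBtail r t K
      rw [hBempty]
      simp
    -- main case
    have hD : Tendsto (fun t => (∫ ω in B r t K, g ω ∂μ
        - f (θ r) * (μ (B r t K)).toReal) / Fb t) atTop (𝓝 0) := by
      rw [NormedAddCommGroup.tendsto_nhds_zero]
      intro ε hε
      set R : ℝ := (a i r) ^ α * q K + 1 with hR_def
      have hR0 : 0 < R := by
        have h1 : 0 ≤ (a i r) ^ α := Real.rpow_nonneg (hann i r) α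
        nlinarith [(hq01 K).1]
      set ε' : ℝ := ε / (2 * R) with hε'_def
      have hε'0 : 0 < ε' := by positivity
      obtain ⟨δ, hδ0, hδ⟩ := Metric.continuousAt_iff.1 (hf.continuousAt (x := θ r)) ε' hε'0
      have hBR : ∀ᶠ t in atTop, (μ (B r t K)).toReal / Fb t < R := by
        have := hBlim K r har
        refine (this.eventually (eventually_lt_nhds ?_)).mono fun t ht => ht
        rw [hR_def]; linarith
      filter_upwards [hFbpos, eventually_gt_atTop (0:ℝ),
        eventually_ge_atTop (M * K), eventually_gt_atTop (M * K / δ), hBR] with t hFbt ht hMK hMKδ hRt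
      have hMKt : M * K / t < δ := by
        rw [div_lt_iff₀ ht]
        rw [div_lt_iff₀ hδ0] at hMKδ
        linarith [mul_comm δ t]
      have hker : ∀ ω ∈ B r t K, ‖g ω - f (θ r)‖ ≤ ε' := by
        intro ω hω
        have hdist := hgeo K r t hK har ht hMK ω hω
        have : dist (g ω) (f (θ r)) < ε' := hδ (lt_of_le_of_lt hdist hMKt)
        rw [Real.dist_eq] at this
        exact le_of_lt (by simpa [Real.norm_eq_abs, hg_def] using this)
      have hint : ∫ ω in B r t K, g ω ∂μ - f (θ r) * (μ (B r t K)).toReal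
          = ∫ ω in B r t K, (g ω - f (θ r)) ∂μ := by
        rw [integral_sub hgi.integrableOn
          (integrableOn_const (measure_ne_top μ _)), setIntegral_const,
          smul_eq_mul, mul_comm, Measure.real_def]
      have hbnd : ‖∫ ω in B r t K, (g ω - f (θ r)) ∂μ‖ ≤ ε' * (μ (B r t K)).toReal :=
        norm_setIntegral_le_of_norm_le_const (measure_lt_top μ _) hker
      rw [hint]
      have h1 : ‖(∫ ω in B r t K, (g ω - f (θ r)) ∂μ) / Fb t‖
          ≤ ε' * ((μ (B r t K)).toReal / Fb t) := by
        rw [norm_div, Real.norm_eq_abs (Fb t), abs_of_pos hFbt, div_le_iff₀ hFbt]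
        calc ‖∫ ω in B r t K, (g ω - f (θ r)) ∂μ‖ ≤ ε' * (μ (B r t K)).toReal := hbnd
          _ = ε' * ((μ (B r t K)).toReal / Fb t) * Fb t := by
              field_simp
      calc ‖(∫ ω in B r t K, (g ω - f (θ r)) ∂μ) / Fb t‖
          ≤ ε' * ((μ (B r t K)).toReal / Fb t) := h1
        _ < ε' * R := by
            apply mul_lt_mul_of_pos_left hRt hε'0
        _ = ε / 2 := by
            rw [hε'_def]; field_simp
        _ < ε := by linarith
    have h2 : Tendsto (fun t => f (θ r) * ((μ (B r t K)).toReal / Fb t)) atTop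
        (𝓝 (f (θ r) * ((a i r) ^ α * q K))) := (hBlim K r har).const_mul _
    have h3 := hD.add h2
    rw [zero_add] at h3
    have heq : ∀ t, (∫ ω in B r t K, g ω ∂μ
        - f (θ r) * (μ (B r t K)).toReal) / Fb t
        + f (θ r) * ((μ (B r t K)).toReal / Fb t) = (∫ ω in B r t K, g ω ∂μ) / Fb t := by
      intro t; ring
    rw [show (a i r) ^ α * q K * f (θ r) = f (θ r) * ((a i r) ^ α * q K) by ring]
    exact h3.congr heq
  -- final assembly
  set c : ℝ := ∑ r : Fin s, (a i r) ^ α with hc_def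
  have hcnn : 0 ≤ c := Finset.sum_nonneg fun r _ => Real.rpow_nonneg (hann i r) α
  set S : ℝ := ∑ r : Fin s, (a i r) ^ α * f (θ r) with hS_def
  rw [Metric.tendsto_nhds]
  intro ε hε
  -- choose K
  have hev2 : ∀ᶠ K in atTop, c * (1 - q K) < ε / (6 * (Cf + 1)) := by
    have h1 : Tendsto (fun K => c * (1 - q K)) atTop (𝓝 0) := by
      have := (tendsto_const_nhds (x := (1:ℝ)).sub hqlim).const_mul c
      simpa using this
    exact h1.eventually (eventually_lt_nhds (by positivity))
  have hev3 : ∀ᶠ K in atTop, dist (q K * S) S < ε / 3 := by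
    have h1 : Tendsto (fun K => q K * S) atTop (𝓝 S) := by
      have := hqlim.mul_const S
      simpa using this
    exact h1.eventually (Metric.ball_mem_nhds _ (by positivity))
  obtain ⟨K, ⟨hK0, hK2⟩, hK3⟩ := (((eventually_gt_atTop (0:ℝ)).and hev2).and hev3).exists
  -- bound function and its limit
  set bound : ℝ → ℝ := fun t => ∑ r : Fin s,
    ((μ {ω | t < a i r * Z r ω}).toReal / Fb t - (μ (B r t K)).toReal / Fb t) with hbound_def
  have hEK : Tendsto bound atTop (𝓝 (∑ r : Fin s, ((a i r) ^ α - (a i r) ^ α * q K))) := by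
    apply tendsto_finset_sum
    intro r _
    by_cases har : 0 < a i r
    · exact (htail_lim r har).sub (hBlim K r har)
    · have har0 : a i r = 0 := le_antisymm (not_lt.1 har) (hann i r)
      have : (a i r : ℝ) ^ α - (a i r) ^ α * q K = 0 := by
        rw [har0, Real.zero_rpow hα.ne']; ring
      rw [this]
      apply Tendsto.congr' _ tendsto_const_nhds
      filter_upwards [eventually_gt_atTop (0:ℝ)] with t ht
      have h1 : {ω | t < a i r * Z r ω} = ∅ := htail0 r har0 t ht
      have h2 : B r t K = ∅ := by
        apply Set.eq_empty_of_subset_empty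
        rw [← h1]; exact hBtail r t K
      rw [h1, h2]
      simp
  have hEKval : (∑ r : Fin s, ((a i r) ^ α - (a i r) ^ α * q K)) = c * (1 - q K) := by
    rw [hc_def, Finset.sum_sub_distrib, ← Finset.sum_mul]
    ring
  -- split estimate
  have hsplit : ∀ᶠ t in atTop,
      |(∫ ω in {ω | t < X ω i}, g ω ∂μ) / Fb t
        - ∑ r : Fin s, (∫ ω in B r t K, g ω ∂μ) / Fb t| ≤ Cf * bound t ∧ 0 ≤ bound t := by
    filter_upwards [hFbpos, eventually_gt_atTop (0:ℝ), eventually_ge_atTop (M * K)]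
      with t hFbt ht hMK
    have hsub : (⋃ r, B r t K) ⊆ {ω | t < X ω i} := Set.iUnion_subset fun r => hBsub r t K
    have hUmeas : MeasurableSet (⋃ r, B r t K) := MeasurableSet.iUnion fun r => hBmeas r t K
    have hIU : ∫ ω in ⋃ r, B r t K, g ω ∂μ = ∑ r : Fin s, ∫ ω in B r t K, g ω ∂μ := by
      have huniv : (⋃ r ∈ (Finset.univ : Finset (Fin s)), B r t K) = ⋃ r, B r t K := by
        simp
      rw [← huniv, integral_biUnion_finset Finset.univ (fun r _ => hBmeas r t K)
        (hdisj K t hK0 hMK) (fun r _ => hgi.integrableOn)]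
    have hIdiff : ∫ ω in {ω | t < X ω i} \ ⋃ r, B r t K, g ω ∂μ
        = ∫ ω in {ω | t < X ω i}, g ω ∂μ - ∫ ω in ⋃ r, B r t K, g ω ∂μ :=
      integral_diff hUmeas hgi.integrableOn hsub
    -- measure of the difference set
    have hdiffsub : {ω | t < X ω i} \ (⋃ r, B r t K)
        ⊆ ⋃ r, ({ω | t < a i r * Z r ω} \ B r t K) := by
      rintro ω ⟨hωA, hωB⟩
      have : ∃ r, t < a i r * Z r ω := by
        have := hωA
        rw [Set.mem_setOf_eq, hX ω i, Finset.lt_sup'_iff] at this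
        obtain ⟨r, _, hr⟩ := this
        exact ⟨r, hr⟩
      obtain ⟨r, hr⟩ := this
      refine Set.mem_iUnion.2 ⟨r, hr, fun hB => hωB (Set.mem_iUnion.2 ⟨r, hB⟩)⟩
    have hmeasdiff : (μ ({ω | t < X ω i} \ ⋃ r, B r t K)).toReal
        ≤ ∑ r : Fin s, ((μ {ω | t < a i r * Z r ω}).toReal - (μ (B r t K)).toReal) := by
      have h1 : μ ({ω | t < X ω i} \ ⋃ r, B r t K)
          ≤ ∑ r : Fin s, μ ({ω | t < a i r * Z r ω} \ B r t K) :=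
        le_trans (measure_mono hdiffsub) (measure_iUnion_fintype_le _ _)
      have h2 : (μ ({ω | t < X ω i} \ ⋃ r, B r t K)).toReal
          ≤ (∑ r : Fin s, μ ({ω | t < a i r * Z r ω} \ B r t K)).toReal :=
        ENNReal.toReal_mono (by
          exact (ENNReal.sum_lt_top.2 fun r _ => measure_lt_top μ _).ne) h1
      refine h2.trans ?_
      rw [ENNReal.toReal_sum (fun r _ => measure_ne_top μ _)]
      apply Finset.sum_le_sum
      intro r _
      rw [measure_diff (hBtail r t K) (hBmeas r t K).nullMeasurableSet (measure_ne_top μ _),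
        ENNReal.toReal_sub_of_le (measure_mono (hBtail r t K)) (measure_ne_top μ _)]
    have hbnn : 0 ≤ bound t := by
      apply Finset.sum_nonneg
      intro r _
      have h1 : (μ (B r t K)).toReal ≤ (μ {ω | t < a i r * Z r ω}).toReal :=
        ENNReal.toReal_mono (measure_ne_top μ _) (measure_mono (μ := μ) (hBtail r t K))
      have h2 : (μ (B r t K)).toReal / Fb t ≤ (μ {ω | t < a i r * Z r ω}).toReal / Fb t := by
        gcongr
      linarith
    refine ⟨?_, hbnn⟩
    have heq : (∫ ω in {ω | t < X ω i}, g ω ∂μ) / Fb t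
        - ∑ r : Fin s, (∫ ω in B r t K, g ω ∂μ) / Fb t
        = (∫ ω in {ω | t < X ω i} \ ⋃ r, B r t K, g ω ∂μ) / Fb t := by
      rw [hIdiff, hIU, sub_div, Finset.sum_div]
    rw [heq]
    have hnorm : |∫ ω in {ω | t < X ω i} \ ⋃ r, B r t K, g ω ∂μ|
        ≤ Cf * (μ ({ω | t < X ω i} \ ⋃ r, B r t K)).toReal := by
      have := norm_setIntegral_le_of_norm_le_const (μ := μ) (f := g) (C := Cf)
        (s := {ω | t < X ω i} \ ⋃ r, B r t K) (measure_lt_top μ _)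
        (fun ω _ => by
          rw [Real.norm_eq_abs]; exact hCf _)
      simpa [Real.norm_eq_abs, Measure.real_def] using this
    have hboundt : bound t = (∑ r : Fin s,
        ((μ {ω | t < a i r * Z r ω}).toReal - (μ (B r t K)).toReal)) / Fb t := by
      rw [hbound_def, Finset.sum_div]
      apply Finset.sum_congr rfl
      intro r _
      rw [sub_div]
    rw [abs_div, abs_of_pos hFbt, div_le_iff₀ hFbt, hboundt]
    calc |∫ ω in {ω | t < X ω i} \ ⋃ r, B r t K, g ω ∂μ|
        ≤ Cf * (μ ({ω | t < X ω i} \ ⋃ r, B r t K)).toReal := hnorm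
      _ ≤ Cf * (∑ r : Fin s, ((μ {ω | t < a i r * Z r ω}).toReal - (μ (B r t K)).toReal)) :=
          mul_le_mul_of_nonneg_left hmeasdiff hCf0
      _ = Cf * ((∑ r : Fin s,
          ((μ {ω | t < a i r * Z r ω}).toReal - (μ (B r t K)).toReal)) / Fb t) * Fb t := by
          field_simp
  -- limits of the main part
  have hmainlim : Tendsto (fun t => ∑ r : Fin s, (∫ ω in B r t K, g ω ∂μ) / Fb t) atTop
      (𝓝 (∑ r : Fin s, (a i r) ^ α * q K * f (θ r))) :=
    tendsto_finset_sum _ fun r _ => hIB K hK0 r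
  have hSK : (∑ r : Fin s, (a i r) ^ α * q K * f (θ r)) = q K * S := by
    rw [hS_def, Finset.mul_sum]
    apply Finset.sum_congr rfl
    intro r _
    ring
  rw [hSK] at hmainlim
  have hmain_ev : ∀ᶠ t in atTop,
      dist (∑ r : Fin s, (∫ ω in B r t K, g ω ∂μ) / Fb t) (q K * S) < ε / 3 :=
    hmainlim.eventually (Metric.ball_mem_nhds _ (by positivity))
  have hbound_ev : ∀ᶠ t in atTop, bound t < ε / (3 * (Cf + 1)) := by
    apply hEK.eventually (eventually_lt_nhds _)
    rw [hEKval]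
    have h6 : ε / (6 * (Cf + 1)) < ε / (3 * (Cf + 1)) := by
      apply div_lt_div_of_pos_left hε (by positivity) (by nlinarith)
    linarith
  filter_upwards [hsplit, hmain_ev, hbound_ev] with t ⟨h1, h1'⟩ h2 h3
  have hA : |(∫ ω in {ω | t < X ω i}, g ω ∂μ) / Fb t
      - ∑ r : Fin s, (∫ ω in B r t K, g ω ∂μ) / Fb t| < ε / 3 := by
    have : Cf * bound t < ε / 3 := by
      have hCf1 : (0:ℝ) < Cf + 1 := by linarith
      calc Cf * bound t ≤ (Cf + 1) * bound t := mul_le_mul_of_nonneg_right (by linarith) h1'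
        _ < (Cf + 1) * (ε / (3 * (Cf + 1))) := mul_lt_mul_of_pos_left h3 hCf1
        _ = ε / 3 := by field_simp
    linarith
  calc dist ((∫ ω in {ω | t < X ω i}, g ω ∂μ) / Fb t) S
      ≤ dist ((∫ ω in {ω | t < X ω i}, g ω ∂μ) / Fb t)
          (∑ r : Fin s, (∫ ω in B r t K, g ω ∂μ) / Fb t)
        + dist (∑ r : Fin s, (∫ ω in B r t K, g ω ∂μ) / Fb t) (q K * S)
        + dist (q K * S) S := dist_triangle4 _ _ _ _
    _ < ε / 3 + ε / 3 + ε / 3 := by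
        apply add_lt_add (add_lt_add _ h2) hK3
        rw [Real.dist_eq]
        exact hA
    _ = ε := by ring

end Aux

/-- Example `ex:maxlinear`: for the max-linear model
`X_i = max_r a_{i,r} Z_r` built from i.i.d. nonnegative factors with regularly varying
tail of index `-α`, the marginal tails satisfy `P(X_i > t)/F̄(t) → c_i = Σ_r a_{i,r}^α`,
and the conditional law of `X/X_i` given `X_i > t` converges weakly to the discrete law
`(1/c_i) Σ_r a_{i,r}^α δ_{(a_{j,r}/a_{i,r})_j}`. -/
theorem max_linear_tail_limits
    {d s : ℕ} [NeZero s]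
    {Ω : Type*} [MeasurableSpace Ω] (μ : Measure Ω) [IsProbabilityMeasure μ]
    (Z : Fin s → Ω → ℝ) (hZmeas : ∀ r, Measurable (Z r)) (hZnn : ∀ r ω, 0 ≤ Z r ω)
    (hZindep : iIndepFun Z μ)
    (hZid : ∀ r : Fin s, μ.map (Z r) = μ.map (Z 0))
    (α : ℝ) (hα : 0 < α)
    (hFbar : RegularlyVarying (fun t => (μ {ω | t < Z 0 ω}).toReal) (-α))
    (a : Fin d → Fin s → ℝ) (hann : ∀ i r, 0 ≤ a i r)
    (hamax : ∀ i, ∃ r, 0 < a i r)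
    (X : Ω → Fin d → ℝ)
    (hX : ∀ ω i, X ω i = Finset.univ.sup' Finset.univ_nonempty (fun r => a i r * Z r ω)) :
    (∀ i : Fin d,
      Tendsto (fun t => (μ {ω | t < X ω i}).toReal / (μ {ω | t < Z 0 ω}).toReal)
        atTop (𝓝 (∑ r : Fin s, (a i r) ^ α))) ∧
    (∀ i : Fin d,
      ∀ f : BoundedContinuousFunction (Fin d → ℝ) ℝ,
        Tendsto (fun t => ∫ ω, f (fun j => X ω j / X ω i) ∂(μ[|{ω | t < X ω i}])) atTop
          (𝓝 (∫ x, f x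
            ∂((ENNReal.ofReal (∑ r : Fin s, (a i r) ^ α))⁻¹ •
              (Measure.sum (fun r : Fin s =>
                ENNReal.ofReal ((a i r) ^ α) •
                  Measure.dirac (fun j => a j r / a i r))))))) := by
  have hpart1 : ∀ i : Fin d,
      Tendsto (fun t => (μ {ω | t < X ω i}).toReal / (μ {ω | t < Z 0 ω}).toReal)
        atTop (𝓝 (∑ r : Fin s, (a i r) ^ α)) := by
    intro i
    have hcore := mlt_core μ Z hZmeas hZnn hZindep hZid α hα hFbar a hann X hX i
      (fun _ => (1:ℝ)) continuous_const 1 (fun x => by simp)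
    have hco : ∀ t : ℝ, ∫ ω in {ω | t < X ω i}, (1:ℝ) ∂μ = (μ {ω | t < X ω i}).toReal := by
      intro t; rw [setIntegral_const]; simp [Measure.real]
    have h2 := hcore.congr fun t => by rw [hco t]
    simpa using h2
  refine ⟨hpart1, ?_⟩
  intro i f
  have hcpos : 0 < ∑ r : Fin s, (a i r) ^ α := by
    obtain ⟨r, hr⟩ := hamax i
    exact Finset.sum_pos' (fun r' _ => Real.rpow_nonneg (hann i r') α)
      ⟨r, Finset.mem_univ r, Real.rpow_pos_of_pos hr α⟩
  have hcoreF := mlt_core μ Z hZmeas hZnn hZindep hZid α hα hFbar a hann X hX i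
    (⇑f) f.continuous ‖f‖ (fun x => by
      rw [← Real.norm_eq_abs]; exact f.norm_coe_le_norm x)
  have hTend := hcoreF.div (hpart1 i) hcpos.ne'
  -- identify the limit value with the integral against the discrete measure
  have hval : (∫ x, f x
      ∂((ENNReal.ofReal (∑ r : Fin s, (a i r) ^ α))⁻¹ •
        (Measure.sum (fun r : Fin s =>
          ENNReal.ofReal ((a i r) ^ α) • Measure.dirac (fun j => a j r / a i r)))))
      = (∑ r : Fin s, (a i r) ^ α * f (fun j => a j r / a i r)) /
          (∑ r : Fin s, (a i r) ^ α) := by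
    rw [integral_smul_measure, Measure.sum_fintype,
      integral_finset_sum_measure (fun r _ => by
        by_cases h : ENNReal.ofReal ((a i r) ^ α) = 0
        · rw [h, zero_smul]
          exact integrable_zero_measure
        · rw [integrable_smul_measure h ENNReal.ofReal_ne_top]
          exact f.integrable _)]
    have hterm : ∀ r : Fin s,
        ∫ x, f x ∂(ENNReal.ofReal ((a i r) ^ α) • Measure.dirac (fun j => a j r / a i r))
          = (a i r) ^ α * f (fun j => a j r / a i r) := by
      intro r
      rw [integral_smul_measure, integral_dirac, ENNReal.toReal_ofReal
        (Real.rpow_nonneg (hann i r) α), smul_eq_mul]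
    rw [Finset.sum_congr rfl fun r _ => hterm r, ENNReal.toReal_inv,
      ENNReal.toReal_ofReal hcpos.le, smul_eq_mul, inv_mul_eq_div]
  rw [hval]
  -- eventual identification of the conditional integral
  have hμApos : ∀ᶠ t in atTop, 0 < (μ {ω | t < X ω i}).toReal := by
    have h1 : ∀ᶠ t in atTop,
        (∑ r : Fin s, (a i r) ^ α) / 2 <
          (μ {ω | t < X ω i}).toReal / (μ {ω | t < Z 0 ω}).toReal :=
      (hpart1 i).eventually (eventually_gt_nhds (by linarith))
    filter_upwards [h1, hFbar.1] with t ht hFbt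
    by_contra h
    push_neg at h
    have h0 : (μ {ω | t < X ω i}).toReal = 0 :=
      le_antisymm h ENNReal.toReal_nonneg
    rw [h0, zero_div] at ht
    linarith
  apply hTend.congr'
  filter_upwards [hμApos, hFbar.1] with t hA hFbt
  have hAne : μ {ω | t < X ω i} ≠ 0 := by
    intro h0
    rw [h0] at hA
    simp at hA
  have hcond : ∫ ω, f (fun j => X ω j / X ω i) ∂(μ[|{ω | t < X ω i}])
      = (μ {ω | t < X ω i}).toReal⁻¹ *
          ∫ ω in {ω | t < X ω i}, f (fun j => X ω j / X ω i) ∂μ := by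
    rw [ProbabilityTheory.cond, integral_smul_measure, ENNReal.toReal_inv, smul_eq_mul]
  have hr : (∫ ω in {ω | t < X ω i}, f (fun j => X ω j / X ω i) ∂μ) /
        (μ {ω | t < Z 0 ω}).toReal /
        ((μ {ω | t < X ω i}).toReal / (μ {ω | t < Z 0 ω}).toReal)
      = (μ {ω | t < X ω i}).toReal⁻¹ *
          ∫ ω in {ω | t < X ω i}, f (fun j => X ω j / X ω i) ∂μ := by
    field_simp
  rw [hcond]
  simp only [Pi.div_apply]
  rw [hr]
end
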